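/- arXiv:1809.03079 — 11 statements merged into one kernel-verified Lean document; each statement's English description precedes it below -/
import Mathlib

section
/- For p > 1 and a sequence of nonnegative reals (a_n), if not all a_n are zero and Σ a_n^p converges, then Σ_{n=1}^∞ ((1/n) Σ_{k=1}^n a_k)^p < (p/(p-1))^p Σ_{n=1}^∞ a_n^p (the discrete Hardy inequality). -/
open Filter Topology

private lemma young_strict {p x y : ℝ} (hp : 1 < p) (hx : 0 ≤ x) (hy : 0 ≤ y) (hxy : x ≠ y) :
    p * x * y ^ (p - 1) < x ^ p + (p - 1) * y ^ p := by
  have hp0 : (0:ℝ) < p := lt_trans one_pos hp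
  rcases hy.eq_or_lt with rfl | hy'
  · rw [Real.zero_rpow (by linarith), Real.zero_rpow hp0.ne']
    have hx' : 0 < x := hx.lt_of_ne (Ne.symm (by simpa using hxy))
    have := Real.rpow_pos_of_pos hx' p
    nlinarith
  · have hs : -1 ≤ x / y - 1 := by
      have : 0 ≤ x / y := div_nonneg hx hy'.le
      linarith
    have hs' : x / y - 1 ≠ 0 := by
      intro h
      apply hxy
      field_simp at h
      linarith
    have hb := one_add_mul_self_lt_rpow_one_add hs hs' hp
    have hxy' : (1 + (x / y - 1)) = x / y := by ring
    rw [hxy', Real.div_rpow hx hy'.le] at hb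
    have hyp : 0 < y ^ p := Real.rpow_pos_of_pos hy' p
    have h2 : (1 + p * (x / y - 1)) * y ^ p < x ^ p := by
      rw [← lt_div_iff₀ hyp]; exact hb
    have hyy : y * y ^ (p - 1) = y ^ p := by
      have := Real.rpow_add' hy'.le (show (1:ℝ) + (p-1) ≠ 0 by ring_nf; positivity)
      rw [Real.rpow_one] at this
      rw [← this]; ring_nf
    have h3 : (1 + p * (x / y - 1)) * y ^ p = y ^ p + p * x * y ^ (p-1) - p * y ^ p := by
      field_simp
      ring_nf
      rw [← hyy]
      ring
    nlinarith

private lemma young_le {p x y : ℝ} (hp : 1 < p) (hx : 0 ≤ x) (hy : 0 ≤ y) :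
    p * x * y ^ (p - 1) ≤ x ^ p + (p - 1) * y ^ p := by
  rcases eq_or_ne x y with rfl | h
  · have hxx : x * x ^ (p - 1) = x ^ p := by
      rcases hx.eq_or_lt with rfl | hx'
      · rw [Real.zero_rpow (by linarith), Real.zero_rpow (by positivity : p ≠ 0)]; ring
      · have := Real.rpow_add' hx'.le (show (1:ℝ) + (p-1) ≠ 0 by ring_nf; positivity)
        rw [Real.rpow_one] at this
        rw [← this]; ring_nf
    nlinarith
  · exact (young_strict hp hx hy h).le

private lemma key_le {p : ℝ} (hp : 1 < p) (n : ℕ) {x y c : ℝ} (hx : 0 ≤ x) (hy : 0 ≤ y)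
    (hrel : ((n:ℝ)+1) * y = n * x + c) :
    (p-1) * y^p - p * c * y^(p-1) ≤ n * x^p - ((n:ℝ)+1) * y^p := by
  have hyy : y * y ^ (p - 1) = y ^ p := by
    rcases hy.eq_or_lt with rfl | hy'
    · rw [Real.zero_rpow (by linarith), Real.zero_rpow (by positivity : p ≠ 0)]; ring
    · have := Real.rpow_add' hy'.le (show (1:ℝ) + (p-1) ≠ 0 by ring_nf; positivity)
      rw [Real.rpow_one] at this
      rw [← this]; ring_nf
  have hc : c = ((n:ℝ)+1) * y - n * x := by linarith
  have hyoung := young_le hp hx hy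
  have hn : (0:ℝ) ≤ n := n.cast_nonneg
  have h2 := mul_le_mul_of_nonneg_left hyoung hn
  subst hc
  have e : p*(((n:ℝ)+1)*y - (n:ℝ)*x)*y^(p-1) = p*((n:ℝ)+1)*(y*y^(p-1)) - (n:ℝ)*(p*x*y^(p-1)) := by
    ring
  rw [hyy] at e
  linarith [h2, e]

private lemma key_lt {p : ℝ} (hp : 1 < p) (n : ℕ) (hn : 1 ≤ n) {x y c : ℝ} (hx : 0 ≤ x)
    (hy : 0 ≤ y) (hxy : x ≠ y) (hrel : ((n:ℝ)+1) * y = n * x + c) :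
    (p-1) * y^p - p * c * y^(p-1) < n * x^p - ((n:ℝ)+1) * y^p := by
  have hyy : y * y ^ (p - 1) = y ^ p := by
    rcases hy.eq_or_lt with rfl | hy'
    · rw [Real.zero_rpow (by linarith), Real.zero_rpow (by positivity : p ≠ 0)]; ring
    · have := Real.rpow_add' hy'.le (show (1:ℝ) + (p-1) ≠ 0 by ring_nf; positivity)
      rw [Real.rpow_one] at this
      rw [← this]; ring_nf
  have hc : c = ((n:ℝ)+1) * y - n * x := by linarith
  have hyoung := young_strict hp hx hy hxy
  have hn' : (1:ℝ) ≤ n := by exact_mod_cast hn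
  have h2 := (mul_lt_mul_iff_right₀ (by linarith : (0:ℝ) < n)).mpr hyoung
  subst hc
  have e : p*(((n:ℝ)+1)*y - (n:ℝ)*x)*y^(p-1) = p*((n:ℝ)+1)*(y*y^(p-1)) - (n:ℝ)*(p*x*y^(p-1)) := by
    ring
  rw [hyy] at e
  linarith [h2, e]

/-- Discrete Hardy inequality: for `p > 1` and a nonnegative, not identically zero
sequence `(a_n)_{n ≥ 1}` (here `a n` stands for `a_{n+1}`) with `Σ a_n^p < ∞`,
`Σ ((1/n) Σ_{k ≤ n} a_k)^p < (p/(p-1))^p Σ a_n^p`. -/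
theorem stmt0 (p : ℝ) (hp : 1 < p) (a : ℕ → ℝ) (ha : ∀ n, 0 ≤ a n)
    (hne : ∃ n, a n ≠ 0) (hsum : Summable fun n => a n ^ p) :
    ∑' n : ℕ, ((1 / (n + 1 : ℝ)) * ∑ k ∈ Finset.range (n + 1), a k) ^ p
      < (p / (p - 1)) ^ p * ∑' n : ℕ, a n ^ p := by
  have hp0 : (0:ℝ) < p := lt_trans one_pos hp
  have hp1 : (0:ℝ) < p - 1 := by linarith
  set q : ℝ := p / (p - 1) with hq
  have hq1 : 1 < q := by rw [hq, lt_div_iff₀ hp1]; linarith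
  have hq0 : (0:ℝ) < q := lt_trans one_pos hq1
  have hpq : p.HolderConjugate q := (Real.holderConjugate_iff_eq_conjExponent hp).2 rfl
  have hpqsum : 1/p + 1/q = 1 := by
    have := hpq.inv_add_inv_eq_one; rw [one_div, one_div]; exact this
  set B : ℕ → ℝ := fun n => (∑ k ∈ Finset.range n, a k) / n with hB
  have hBnn : ∀ n, 0 ≤ B n := fun n =>
    div_nonneg (Finset.sum_nonneg fun k _ => ha k) (Nat.cast_nonneg n)
  have hmul : ∀ n : ℕ, (n:ℝ) * B n = ∑ k ∈ Finset.range n, a k := by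
    intro n
    cases n with
    | zero => simp [hB]
    | succ m =>
      rw [hB]
      field_simp
  have hrel : ∀ n : ℕ, ((n:ℝ)+1) * B (n+1) = n * B n + a n := by
    intro n
    have h1 := hmul (n+1)
    push_cast at h1
    rw [h1, hmul, Finset.sum_range_succ]
  -- partial sums
  set S : ℕ → ℝ := fun N => ∑ n ∈ Finset.range N, B (n+1) ^ p with hS
  set G : ℕ → ℝ := fun N => ∑ n ∈ Finset.range N, a n * B (n+1) ^ (p-1) with hG
  set T : ℝ := ∑' n, a n ^ p with hT
  have hTnn : 0 ≤ T := tsum_nonneg fun n => Real.rpow_nonneg (ha n) p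
  have hSnn : ∀ N, 0 ≤ S N := fun N =>
    Finset.sum_nonneg fun n _ => Real.rpow_nonneg (hBnn _) p
  set L : ℕ → ℝ := fun n => (p-1) * B (n+1) ^ p - p * a n * B (n+1) ^ (p-1) with hL
  set R : ℕ → ℝ := fun n => (n:ℝ) * B n ^ p - ((n:ℝ)+1) * B (n+1) ^ p with hR
  have hkey : ∀ n, L n ≤ R n := fun n => key_le hp n (hBnn n) (hBnn (n+1)) (hrel n)
  have hsumL : ∀ N, ∑ n ∈ Finset.range N, L n = (p-1) * S N - p * G N := by
    intro N
    rw [hS, hG, Finset.mul_sum, Finset.mul_sum, ← Finset.sum_sub_distrib]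
    exact Finset.sum_congr rfl fun n _ => by rw [hL]; ring
  have hsumR : ∀ N, ∑ n ∈ Finset.range N, R n = -((N:ℝ) * B N ^ p) := by
    intro N
    have := Finset.sum_range_sub' (fun n => (n:ℝ) * B n ^ p) N
    simp only [Nat.cast_zero, zero_mul] at this
    rw [show -((N:ℝ) * B N ^ p) = 0 - (N:ℝ) * B N ^ p by ring, ← this]
    exact Finset.sum_congr rfl fun n _ => by rw [hR]; push_cast; ring
  have hRle : ∀ N, ∑ n ∈ Finset.range N, R n ≤ 0 := by
    intro N
    rw [hsumR]
    have : 0 ≤ (N:ℝ) * B N ^ p :=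
      mul_nonneg (Nat.cast_nonneg N) (Real.rpow_nonneg (hBnn N) p)
    linarith
  -- Hölder
  have hTN : ∀ N, ∑ n ∈ Finset.range N, a n ^ p ≤ T :=
    fun N => Summable.sum_le_tsum _ (fun n _ => Real.rpow_nonneg (ha n) p) hsum
  have hholder : ∀ N, G N ≤ T ^ (1/p) * S N ^ (1/q) := by
    intro N
    have h := Real.inner_le_Lp_mul_Lq (Finset.range N) a (fun n => B (n+1) ^ (p-1)) hpq
    have e1 : ∀ n, |a n| ^ p = a n ^ p := fun n => by rw [abs_of_nonneg (ha n)]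
    have e2 : ∀ n, |B (n+1) ^ (p-1)| ^ q = B (n+1) ^ p := by
      intro n
      rw [abs_of_nonneg (Real.rpow_nonneg (hBnn _) _), ← Real.rpow_mul (hBnn _)]
      congr 1
      rw [hq]
      field_simp
    rw [Finset.sum_congr rfl (fun n _ => e1 n), Finset.sum_congr rfl (fun n _ => e2 n)] at h
    refine le_trans h ?_
    have h1 : (∑ n ∈ Finset.range N, a n ^ p) ^ (1/p) ≤ T ^ (1/p) :=
      Real.rpow_le_rpow (Finset.sum_nonneg fun n _ => Real.rpow_nonneg (ha n) p)
        (hTN N) (by positivity)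
    exact mul_le_mul_of_nonneg_right h1 (Real.rpow_nonneg (hSnn N) _)
  have hmain : ∀ N, (p-1) * S N ≤ p * G N := by
    intro N
    have h1 : ∑ n ∈ Finset.range N, L n ≤ ∑ n ∈ Finset.range N, R n :=
      Finset.sum_le_sum fun n _ => hkey n
    have := hRle N
    rw [hsumL] at h1
    linarith
  -- nonstrict bound on S N, to get summability
  have hSbound : ∀ N, S N ≤ q ^ p * T := by
    intro N
    rcases (hSnn N).eq_or_lt with h0 | hpos
    · rw [← h0]; positivity
    · have h2 : (p-1) * S N ≤ p * (T ^ (1/p) * S N ^ (1/q)) :=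
        le_trans (hmain N)
          (mul_le_mul_of_nonneg_left (hholder N) hp0.le)
      have hSid : S N ^ (1/p) * S N ^ (1/q) = S N := by
        rw [← Real.rpow_add hpos, hpqsum, Real.rpow_one]
      have hq2 : 0 < S N ^ (1/q) := Real.rpow_pos_of_pos hpos _
      have h3 : (p-1) * S N ^ (1/p) ≤ p * T ^ (1/p) := by
        have h4 : ((p-1) * S N ^ (1/p)) * S N ^ (1/q) ≤ (p * T ^ (1/p)) * S N ^ (1/q) := by
          calc ((p-1) * S N ^ (1/p)) * S N ^ (1/q) = (p-1) * S N := by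
                rw [mul_assoc, hSid]
            _ ≤ p * (T ^ (1/p) * S N ^ (1/q)) := h2
            _ = (p * T ^ (1/p)) * S N ^ (1/q) := by ring
        exact le_of_mul_le_mul_right h4 hq2
      have h5 : S N ^ (1/p) ≤ q * T ^ (1/p) := by
        rw [hq, div_mul_eq_mul_div, le_div_iff₀ hp1]
        calc S N ^ (1/p) * (p - 1) = (p-1) * S N ^ (1/p) := by ring
          _ ≤ p * T ^ (1/p) := h3
      calc S N = (S N ^ (1/p)) ^ p := by
            rw [← Real.rpow_mul hpos.le, one_div, inv_mul_cancel₀ hp0.ne', Real.rpow_one]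
        _ ≤ (q * T ^ (1/p)) ^ p := Real.rpow_le_rpow (Real.rpow_nonneg hpos.le _) h5 hp0.le
        _ = q ^ p * T := by
            rw [Real.mul_rpow hq0.le (Real.rpow_nonneg hTnn _), ← Real.rpow_mul hTnn,
              one_div, inv_mul_cancel₀ hp0.ne', Real.rpow_one]
  have hsumB : Summable fun n => B (n+1) ^ p := by
    apply summable_of_sum_range_le (c := q ^ p * T)
      (fun n => Real.rpow_nonneg (hBnn _) p) hSbound
  set Sl : ℝ := ∑' n, B (n+1) ^ p with hSl
  have hSlnn : 0 ≤ Sl := tsum_nonneg fun n => Real.rpow_nonneg (hBnn _) p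
  -- find the strictness witness
  have hex : ∃ n, 1 ≤ n ∧ B n ≠ B (n+1) := by
    by_contra h
    push_neg at h
    have hBc : ∀ n, 1 ≤ n → B n = B 1 := by
      intro n hn
      induction n with
      | zero => omega
      | succ m ih =>
        rcases Nat.eq_or_lt_of_le hn with h1 | h1
        · have hm0 : m = 0 := by omega
          subst hm0; rfl
        · have hm : 1 ≤ m := by omega
          rw [← h m hm]; exact ih hm
    have hac : ∀ n, a n = B 1 := by
      intro n
      cases n with
      | zero => have := hrel 0; simp at this; linarith [this]
      | succ m =>
        have h1 := hrel (m+1)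
        have h2 := hBc (m+1) (by omega)
        have h3 := hBc (m+2) (by omega)
        push_cast at h1
        rw [h2] at h1
        rw [show (m:ℕ)+1+1 = m+2 from rfl, h3] at h1
        linarith
    have hzero : a 0 = 0 := by
      have htend : Tendsto (fun n : ℕ => a n ^ p) atTop (𝓝 0) := hsum.tendsto_atTop_zero
      have hconst : (fun n : ℕ => a n ^ p) = fun _ => a 0 ^ p := by
        funext n; rw [hac n, ← hac 0]
      rw [hconst] at htend
      have : a 0 ^ p = 0 := tendsto_nhds_unique tendsto_const_nhds htend
      exact ((Real.rpow_eq_zero (ha 0) hp0.ne').1 this)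
    obtain ⟨n, hn⟩ := hne
    exact hn (by rw [hac n, ← hac 0, hzero])
  obtain ⟨n₀, hn₀1, hn₀⟩ := hex
  set δ : ℝ := R n₀ - L n₀ with hδ
  have hδpos : 0 < δ :=
    sub_pos.2 (key_lt hp n₀ hn₀1 (hBnn n₀) (hBnn (n₀+1)) hn₀ (hrel n₀))
  have hstrict : ∀ N, n₀ < N → (p-1) * S N + δ ≤ p * (T ^ (1/p) * S N ^ (1/q)) := by
    intro N hN
    have h1 : δ ≤ ∑ n ∈ Finset.range N, (R n - L n) :=
      Finset.single_le_sum (f := fun n => R n - L n)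
        (fun i _ => sub_nonneg.2 (hkey i)) (Finset.mem_range.2 hN)
    rw [Finset.sum_sub_distrib, hsumL] at h1
    have h2 := hRle N
    have h3 := mul_le_mul_of_nonneg_left (hholder N) hp0.le
    linarith
  -- take limits
  have htendS : Tendsto S atTop (𝓝 Sl) := hsumB.hasSum.tendsto_sum_nat
  have htendL : Tendsto (fun N => (p-1) * S N + δ) atTop (𝓝 ((p-1) * Sl + δ)) :=
    ((htendS.const_mul _).add tendsto_const_nhds)
  have htendR : Tendsto (fun N => p * (T ^ (1/p) * S N ^ (1/q))) atTop
      (𝓝 (p * (T ^ (1/p) * Sl ^ (1/q)))) := by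
    apply Tendsto.const_mul
    apply Tendsto.const_mul
    exact htendS.rpow_const (Or.inr (by positivity))
  have hlim : (p-1) * Sl + δ ≤ p * (T ^ (1/p) * Sl ^ (1/q)) := by
    apply le_of_tendsto_of_tendsto htendL htendR
    filter_upwards [eventually_gt_atTop n₀] with N hN
    exact hstrict N hN
  -- conclude
  have hSlpos : 0 < Sl := by
    rcases hSlnn.eq_or_lt with h0 | h; swap
    · exact h
    · exfalso
      rw [← h0, Real.zero_rpow (by positivity : 1/q ≠ 0)] at hlim
      simp at hlim
      linarith
  have hSid : Sl ^ (1/p) * Sl ^ (1/q) = Sl := by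
    rw [← Real.rpow_add hSlpos, hpqsum, Real.rpow_one]
  have hq2 : 0 < Sl ^ (1/q) := Real.rpow_pos_of_pos hSlpos _
  have h3 : (p-1) * Sl ^ (1/p) < p * T ^ (1/p) := by
    have h4 : ((p-1) * Sl ^ (1/p)) * Sl ^ (1/q) < (p * T ^ (1/p)) * Sl ^ (1/q) := by
      calc ((p-1) * Sl ^ (1/p)) * Sl ^ (1/q) = (p-1) * Sl := by rw [mul_assoc, hSid]
        _ < p * (T ^ (1/p) * Sl ^ (1/q)) := by linarith
        _ = (p * T ^ (1/p)) * Sl ^ (1/q) := by ring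
    exact lt_of_mul_lt_mul_right h4 hq2.le
  have h5 : Sl ^ (1/p) < q * T ^ (1/p) := by
    rw [hq, div_mul_eq_mul_div, lt_div_iff₀ hp1]
    calc Sl ^ (1/p) * (p - 1) = (p-1) * Sl ^ (1/p) := by ring
      _ < p * T ^ (1/p) := h3
  have hfin : Sl < q ^ p * T := by
    calc Sl = (Sl ^ (1/p)) ^ p := by
          rw [← Real.rpow_mul hSlpos.le, one_div, inv_mul_cancel₀ hp0.ne', Real.rpow_one]
      _ < (q * T ^ (1/p)) ^ p :=
          Real.rpow_lt_rpow (Real.rpow_nonneg hSlpos.le _) h5 hp0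
      _ = q ^ p * T := by
          rw [Real.mul_rpow hq0.le (Real.rpow_nonneg hTnn _), ← Real.rpow_mul hTnn,
            one_div, inv_mul_cancel₀ hp0.ne', Real.rpow_one]
  have heq : (∑' n : ℕ, ((1 / (n + 1 : ℝ)) * ∑ k ∈ Finset.range (n + 1), a k) ^ p) = Sl := by
    rw [hSl]
    apply tsum_congr
    intro n
    congr 1
    simp only [hB]
    push_cast
    ring
  rw [heq]
  exact hfin
end

section
/- For a nonnegative real sequence (a_n) with Σ a_n^2 < ∞, one has Σ_{n=1}^∞ ((1/n) Σ_{k=1}^n a_k)^2 ≤ 4 Σ_{n=1}^∞ a_n^2 (discrete Hardy inequality for p = 2). -/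
open Filter Topology

/-- Discrete Hardy inequality for `p = 2`: for a nonnegative sequence `(a_n)_{n ≥ 1}`
(here `a n` stands for `a_{n+1}`) with `Σ a_n² < ∞`,
`Σ ((1/n) Σ_{k ≤ n} a_k)² ≤ 4 Σ a_n²`. -/
theorem stmt1 (a : ℕ → ℝ) (ha : ∀ n, 0 ≤ a n) (hsum : Summable fun n => a n ^ 2) :
    ∑' n : ℕ, ((1 / (n + 1 : ℝ)) * ∑ k ∈ Finset.range (n + 1), a k) ^ 2
      ≤ 4 * ∑' n : ℕ, a n ^ 2 := by
  set b : ℕ → ℝ := fun n => (1 / (n + 1 : ℝ)) * ∑ k ∈ Finset.range (n + 1), a k with hb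
  have hbnn : ∀ n, 0 ≤ b n := fun n =>
    mul_nonneg (by positivity) (Finset.sum_nonneg fun k _ => ha k)
  have hS : ∀ n : ℕ, ((n : ℝ) + 1) * b n = ∑ k ∈ Finset.range (n + 1), a k := by
    intro n
    have : ((n : ℝ) + 1) ≠ 0 := by positivity
    rw [hb]
    field_simp
  -- key pointwise estimate with c n = n * b(n-1)^2
  set c : ℕ → ℝ := fun n => (n : ℝ) * (b (n - 1)) ^ 2 with hc
  have key : ∀ n : ℕ, b n ^ 2 - 2 * (a n * b n) ≤ c n - c (n + 1) := by
    intro n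
    cases n with
    | zero =>
      have h0 : b 0 = a 0 := by simp [hb]
      simp [hc, h0]
      nlinarith [sq_nonneg (a 0)]
    | succ m =>
      have ha1 : a (m + 1) = ((m : ℝ) + 2) * b (m + 1) - ((m : ℝ) + 1) * b m := by
        have h1 := hS m
        have h2 := hS (m + 1)
        rw [Finset.sum_range_succ] at h2
        push_cast at h2 ⊢
        linarith
      have hcv : c (m + 1) = ((m : ℝ) + 1) * (b m) ^ 2 := by
        simp [hc]
      have hcv2 : c (m + 2) = ((m : ℝ) + 2) * (b (m + 1)) ^ 2 := by
        simp only [hc]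
        push_cast
        ring_nf
      rw [hcv]
      show b (m+1) ^ 2 - 2 * (a (m+1) * b (m+1)) ≤ _ - c (m + 1 + 1)
      rw [show m + 1 + 1 = m + 2 from rfl, hcv2, ha1]
      nlinarith [sq_nonneg (b m - b (m + 1)), Nat.cast_nonneg (α := ℝ) m]
  -- finite version: ∑ b^2 ≤ 2 ∑ a*b
  have fin1 : ∀ N, ∑ n ∈ Finset.range N, b n ^ 2
      ≤ 2 * ∑ n ∈ Finset.range N, a n * b n := by
    intro N
    have h1 : ∑ n ∈ Finset.range N, (b n ^ 2 - 2 * (a n * b n))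
        ≤ ∑ n ∈ Finset.range N, (c n - c (n + 1)) :=
      Finset.sum_le_sum fun n _ => key n
    rw [Finset.sum_range_sub' c N] at h1
    have hc0 : c 0 = 0 := by simp [hc]
    have hcN : 0 ≤ c N := mul_nonneg (Nat.cast_nonneg N) (sq_nonneg _)
    rw [Finset.sum_sub_distrib, ← Finset.mul_sum] at h1
    linarith
  -- Cauchy–Schwarz: ∑ b^2 ≤ 4 ∑ a^2 (finite)
  have fin2 : ∀ N, ∑ n ∈ Finset.range N, b n ^ 2 ≤ 4 * ∑ n ∈ Finset.range N, a n ^ 2 := by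
    intro N
    have hcs := Finset.sum_mul_sq_le_sq_mul_sq (Finset.range N) a b
    have h1 := fin1 N
    set S := ∑ n ∈ Finset.range N, b n ^ 2 with hSdef
    set A := ∑ n ∈ Finset.range N, a n ^ 2 with hAdef
    set T := ∑ n ∈ Finset.range N, a n * b n with hTdef
    have hSnn : 0 ≤ S := Finset.sum_nonneg fun n _ => sq_nonneg _
    have hAnn : 0 ≤ A := Finset.sum_nonneg fun n _ => sq_nonneg _
    have hTnn : 0 ≤ T := Finset.sum_nonneg fun n _ => mul_nonneg (ha n) (hbnn n)
    rcases hSnn.eq_or_lt with h | h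
    · linarith
    · have : S * S ≤ 4 * A * S := by nlinarith
      exact le_of_mul_le_mul_right this h
  have htsum : ∀ N, ∑ n ∈ Finset.range N, a n ^ 2 ≤ ∑' n, a n ^ 2 :=
    fun N => Summable.sum_le_tsum _ (fun n _ => sq_nonneg _) hsum
  apply Real.tsum_le_of_sum_range_le (fun n => sq_nonneg _)
  intro N
  calc ∑ n ∈ Finset.range N, b n ^ 2 ≤ 4 * ∑ n ∈ Finset.range N, a n ^ 2 := fin2 N
    _ ≤ 4 * ∑' n, a n ^ 2 := by linarith [htsum N]
end

section
/- If f ∈ S_1 (f(n) → +∞ and sup_n n|Δf(n)| = C < ∞), then the set {i f(n) : n ∈ ℕ} of eigenvalues cannot be decomposed into finitely many subsets Λ_1, …, Λ_K each satisfying inf over distinct pairs in Λ_k of |λ - μ| > 0; equivalently, the sequence (f(n)) does not split into finitely many uniformly separated subsequences. -/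
open Filter Topology

/-- If `f` is strictly increasing, `f(n) → +∞` and `n·(f(n+1) - f(n))` is bounded,
then the set `{f(n) : n ≥ 1}` (equivalently, the set of eigenvalues `{i f(n)}`)
cannot be decomposed into finitely many separated subsets. -/
theorem stmt4 (f : ℕ → ℝ) (hmono : StrictMono f) (hf : Tendsto f atTop atTop)
    (C : ℝ) (hC : ∀ n : ℕ, 1 ≤ n → (n : ℝ) * (f (n + 1) - f n) ≤ C) :
    ¬ ∃ (K : ℕ) (Λ : Fin K → Set ℝ),
      ({x : ℝ | ∃ n : ℕ, 1 ≤ n ∧ x = f n} = ⋃ k, Λ k) ∧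
      ∀ k, ∃ ε > 0, ∀ x ∈ Λ k, ∀ y ∈ Λ k, x ≠ y → ε ≤ |x - y| := by
  rintro ⟨K, Λ, hcover, hsep⟩
  choose εk hεpos hεsep using hsep
  -- C > 0
  have hC0 : 0 < C := by
    have h12 : f 1 < f 2 := hmono (by norm_num)
    have := hC 1 le_rfl
    push_cast at this
    linarith
  -- K ≠ 0
  rcases Nat.eq_zero_or_pos K with hK | hK
  · subst hK
    have h1 : f 1 ∈ {x : ℝ | ∃ n, 1 ≤ n ∧ x = f n} := ⟨1, le_rfl, rfl⟩
    rw [hcover] at h1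
    simpa using h1
  have hne : Nonempty (Fin K) := ⟨⟨0, hK⟩⟩
  set ε : ℝ := Finset.univ.inf' Finset.univ_nonempty εk with hεdef
  have hεpos' : 0 < ε := by
    rw [hεdef, Finset.lt_inf'_iff]
    exact fun k _ => hεpos k
  have hεle : ∀ k, ε ≤ εk k := fun k => Finset.inf'_le _ (Finset.mem_univ k)
  set M : ℕ := (⌊C / ε⌋).toNat + 1 with hMdef
  set N : ℕ := K * M + 1 with hNdef
  have hN1 : 1 ≤ N := Nat.le_add_left 1 _
  have hNpos : (0:ℝ) < N := by positivity
  have hCN : 0 ≤ C / N := le_of_lt (div_pos hC0 hNpos)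
  -- gap bound
  have hgap : ∀ n, N ≤ n → f (n+1) - f n ≤ C / N := by
    intro n hn
    have hn1 : 1 ≤ n := le_trans hN1 hn
    have h1 := hC n hn1
    have hnp : (0:ℝ) < n := by exact_mod_cast Nat.lt_of_lt_of_le Nat.zero_lt_one hn1
    have h2 : f (n+1) - f n ≤ C / n := by
      rw [le_div_iff₀ hnp]; linarith [h1]
    have h3 : C / (n:ℝ) ≤ C / N :=
      div_le_div_of_nonneg_left (le_of_lt hC0) hNpos (by exact_mod_cast hn)
    linarith
  -- telescoping
  have hsum : ∀ n, N ≤ n → f n - f N ≤ ((n : ℝ) - N) * (C / N) := by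
    intro n hn
    induction n, hn using Nat.le_induction with
    | base => simp
    | succ m hm ih =>
      have h1 := hgap m hm
      have h2 : (((m+1 : ℕ) : ℝ) - N) * (C / N) = ((m:ℝ) - N) * (C / N) + C / N := by
        push_cast; ring
      linarith
  -- values in window lie within C of f N
  have hwin : ∀ n, n ∈ Finset.Icc N (2*N) → 0 ≤ f n - f N ∧ f n - f N ≤ C := by
    intro n hn
    rw [Finset.mem_Icc] at hn
    constructor
    · have := hmono.monotone hn.1; linarith
    · have h1 := hsum n hn.1
      have h2 : ((n:ℝ) - N) ≤ N := by
        have : (n:ℝ) ≤ 2*N := by exact_mod_cast hn.2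
        push_cast at this ⊢; linarith
      have h3 : ((n:ℝ) - N) * (C / N) ≤ (N:ℝ) * (C / N) :=
        mul_le_mul_of_nonneg_right h2 hCN
      have h4 : (N:ℝ) * (C / N) = C := by field_simp
      linarith
  -- choose a piece for each n
  have hmem : ∀ n : ℕ, ∃ k, 1 ≤ n → f n ∈ Λ k := by
    intro n
    by_cases hn : 1 ≤ n
    · have h1 : f n ∈ ⋃ k, Λ k := hcover ▸ ⟨n, hn, rfl⟩
      obtain ⟨k, hk⟩ := Set.mem_iUnion.mp h1
      exact ⟨k, fun _ => hk⟩
    · exact ⟨⟨0, hK⟩, fun h => absurd h hn⟩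
  choose κ hκ using hmem
  set φ : ℕ → Fin K × ℕ := fun n => (κ n, (⌊(f n - f N)/ε⌋).toNat) with hφdef
  -- injectivity
  have key : ∀ a b, a ∈ Finset.Icc N (2*N) → b ∈ Finset.Icc N (2*N) → a < b → φ a ≠ φ b := by
    intro a b ha hb hab heq
    have ha1 : 1 ≤ a := le_trans hN1 (Finset.mem_Icc.mp ha).1
    have hb1 : 1 ≤ b := le_trans hN1 (Finset.mem_Icc.mp hb).1
    have hκab : κ a = κ b := congrArg Prod.fst heq
    have hfa : f a ∈ Λ (κ b) := hκab ▸ hκ a ha1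
    have hfb : f b ∈ Λ (κ b) := hκ b hb1
    have hlt : f a < f b := hmono hab
    have hsep' := hεsep (κ b) (f a) hfa (f b) hfb (ne_of_lt hlt)
    rw [abs_sub_comm, abs_of_pos (by linarith)] at hsep'
    have hεab : f a + ε ≤ f b := by linarith [hεle (κ b)]
    set x := f a - f N with hx
    set y := f b - f N with hy
    have hx0 : 0 ≤ x := (hwin a ha).1
    have hxy : x + ε ≤ y := by simp only [hx, hy]; linarith
    have hfl : ⌊x/ε⌋ + 1 ≤ ⌊y/ε⌋ := by
      rw [Int.add_one_le_iff, Int.lt_iff_add_one_le, ← Int.floor_add_one]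
      apply Int.floor_le_floor
      have h1 : x/ε + 1 ≤ y/ε := by
        rw [div_add' _ _ _ (ne_of_gt hεpos'), div_le_div_iff₀ hεpos' hεpos']
        nlinarith
      exact h1
    have hfx0 : 0 ≤ ⌊x/ε⌋ := Int.floor_nonneg.mpr (div_nonneg hx0 (le_of_lt hεpos'))
    have htn : (⌊x/ε⌋).toNat = (⌊y/ε⌋).toNat := congrArg Prod.snd heq
    have : ⌊x/ε⌋ = ⌊y/ε⌋ := by
      have hfy0 : 0 ≤ ⌊y/ε⌋ := le_trans hfx0 (by linarith)
      omega
    omega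
  have hinj : Set.InjOn φ (Finset.Icc N (2*N)) := by
    intro a ha b hb hab
    by_contra hne'
    rcases lt_or_gt_of_ne hne' with h | h
    · exact key a b ha hb h hab
    · exact key b a hb ha h hab.symm
  -- image lies in univ ×ˢ range M
  have hmaps : ∀ n ∈ Finset.Icc N (2*N), φ n ∈ Finset.univ ×ˢ Finset.range M := by
    intro n hn
    rw [Finset.mem_product, Finset.mem_range]
    refine ⟨Finset.mem_univ _, ?_⟩
    have h1 : (f n - f N)/ε ≤ C/ε := by gcongr; exact (hwin n hn).2
    have h2 : ⌊(f n - f N)/ε⌋ ≤ ⌊C/ε⌋ := Int.floor_le_floor h1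
    have h3 : (⌊(f n - f N)/ε⌋).toNat ≤ (⌊C/ε⌋).toNat := Int.toNat_le_toNat h2
    show (⌊(f n - f N)/ε⌋).toNat < M
    omega
  have hcard := Finset.card_le_card_of_injOn φ hmaps hinj
  rw [Nat.card_Icc, Finset.card_product, Finset.card_univ, Fintype.card_fin,
    Finset.card_range] at hcard
  omega
end

section
/- In ℓ₂(Δ), the standard unit vectors (e_n) are minimal but not uniformly minimal: for each n the distance from e_n to the closed span of {e_j : j ≠ n} is positive, but the infimum over n of these distances is zero. -/
open Filter Topology

/-- The `ℓ₂(Δ)` norm of a sequence: `‖c‖ = (Σ_{n≥1} |c_n - c_{n-1}|²)^{1/2}` with the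
convention `c 0 = 0`. -/
noncomputable def dN (c : ℕ → ℂ) : ℝ := Real.sqrt (∑' n : ℕ, ‖c (n + 1) - c n‖ ^ 2)

/-- The `n`-th standard unit sequence. -/
def eVec (j : ℕ) : ℕ → ℂ := fun n => if n = j then 1 else 0

/-- The distance in `ℓ₂(Δ)` from `e_n` to the (closed) linear span of the other
unit vectors `{e_j : j ≠ n, j ≥ 1}`. -/
noncomputable def distToOthers (n : ℕ) : ℝ :=
  sInf {r : ℝ | ∃ y ∈ Submodule.span ℂ {c : ℕ → ℂ | ∃ j : ℕ, 1 ≤ j ∧ j ≠ n ∧ c = eVec j},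
    r = dN (eVec n - y)}

namespace Stmt7Aux

/-- Every element of the span of the other unit vectors vanishes at `0`, at `n`, and
eventually. -/
lemma span_prop {n : ℕ} {y : ℕ → ℂ}
    (hy : y ∈ Submodule.span ℂ {c : ℕ → ℂ | ∃ j : ℕ, 1 ≤ j ∧ j ≠ n ∧ c = eVec j}) :
    y 0 = 0 ∧ y n = 0 ∧ ∃ N, ∀ k, N ≤ k → y k = 0 := by
  induction hy using Submodule.span_induction with
  | mem x hx =>
    obtain ⟨j, hj1, hjn, rfl⟩ := hx
    refine ⟨?_, ?_, j + 1, fun k hk => ?_⟩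
    · simp only [eVec]; rw [if_neg]; omega
    · simp only [eVec]; rw [if_neg]; omega
    · simp only [eVec]; rw [if_neg]; omega
  | zero => exact ⟨rfl, rfl, 0, fun _ _ => rfl⟩
  | add x z hx hz ihx ihz =>
    obtain ⟨hx0, hxn, N1, hN1⟩ := ihx
    obtain ⟨hz0, hzn, N2, hN2⟩ := ihz
    refine ⟨by simp [hx0, hz0], by simp [hxn, hzn], max N1 N2, fun k hk => ?_⟩
    have h1 := hN1 k (le_trans (le_max_left _ _) hk)
    have h2 := hN2 k (le_trans (le_max_right _ _) hk)
    simp [h1, h2]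
  | smul a x hx ih =>
    obtain ⟨hx0, hxn, N, hN⟩ := ih
    exact ⟨by simp [hx0], by simp [hxn], N, fun k hk => by simp [hN k hk]⟩

/-- Any finitely supported sequence vanishing at `0` and `n` lies in the span of the other
unit vectors. -/
lemma mem_span (n N : ℕ) (f : ℕ → ℂ) (h0 : f 0 = 0) (hn : f n = 0)
    (hN : ∀ k, N ≤ k → f k = 0) :
    f ∈ Submodule.span ℂ {c : ℕ → ℂ | ∃ j : ℕ, 1 ≤ j ∧ j ≠ n ∧ c = eVec j} := by
  have hfun : f = ∑ j ∈ Finset.range N, f j • eVec j := by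
    funext k
    rw [Finset.sum_apply]
    simp only [Pi.smul_apply, eVec, smul_eq_mul, mul_ite, mul_one, mul_zero]
    rw [Finset.sum_ite_eq]
    by_cases hk : k ∈ Finset.range N
    · rw [if_pos hk]
    · rw [if_neg hk, hN k (by simpa using hk)]
  rw [hfun]
  apply Submodule.sum_mem
  intro j _
  by_cases hj0 : j = 0
  · rw [hj0, h0, zero_smul]; exact Submodule.zero_mem _
  by_cases hjn : j = n
  · rw [hjn, hn, zero_smul]; exact Submodule.zero_mem _
  · exact Submodule.smul_mem _ _ (Submodule.subset_span ⟨j, by omega, hjn, rfl⟩)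

/-- Lower bound: the distance from `eVec n` to the span of the others is at least `√(1/n)`. -/
lemma lower {n : ℕ} (hn : 1 ≤ n) : Real.sqrt (1 / n) ≤ distToOthers n := by
  apply le_csInf
  · exact ⟨dN (eVec n - 0), 0, Submodule.zero_mem _, rfl⟩
  rintro r ⟨y, hy, rfl⟩
  obtain ⟨h0, hn0, N, hN⟩ := span_prop hy
  set c : ℕ → ℂ := eVec n - y with hc
  have hcn : c n = 1 := by
    simp [hc, eVec, hn0]
  have hc0 : c 0 = 0 := by
    simp only [hc, Pi.sub_apply, h0, eVec, sub_zero]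
    rw [if_neg]; omega
  have hczero : ∀ k, max N (n + 1) ≤ k → c k = 0 := by
    intro k hk
    simp only [hc, Pi.sub_apply, hN k (le_trans (le_max_left _ _) hk), eVec, sub_zero]
    rw [if_neg]; omega
  set M := max N (n + 1) with hM
  have hsum : (∑' k : ℕ, ‖c (k + 1) - c k‖ ^ 2)
      = ∑ k ∈ Finset.range M, ‖c (k + 1) - c k‖ ^ 2 := by
    apply tsum_eq_sum
    intro k hk
    rw [Finset.mem_range, not_lt] at hk
    rw [hczero k hk, hczero (k + 1) (le_trans hk (Nat.le_succ k))]
    simp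
  have h1 : (1 : ℝ) ≤ ∑ k ∈ Finset.range n, ‖c (k + 1) - c k‖ := by
    have ht : ∑ k ∈ Finset.range n, (c (k + 1) - c k) = c n - c 0 := Finset.sum_range_sub c n
    have : (1 : ℝ) = ‖∑ k ∈ Finset.range n, (c (k + 1) - c k)‖ := by
      rw [ht, hcn, hc0, sub_zero, norm_one]
    rw [this]
    exact norm_sum_le _ _
  have h2 : (1 : ℝ) ≤ (n : ℝ) * ∑ k ∈ Finset.range n, ‖c (k + 1) - c k‖ ^ 2 := by
    calc (1 : ℝ) = 1 ^ 2 := (one_pow 2).symm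
      _ ≤ (∑ k ∈ Finset.range n, ‖c (k + 1) - c k‖) ^ 2 := by
          apply pow_le_pow_left₀ one_pos.le h1
      _ ≤ (Finset.range n).card * ∑ k ∈ Finset.range n, ‖c (k + 1) - c k‖ ^ 2 :=
          sq_sum_le_card_mul_sum_sq
      _ = (n : ℝ) * ∑ k ∈ Finset.range n, ‖c (k + 1) - c k‖ ^ 2 := by
          rw [Finset.card_range]
  have hnpos : (0 : ℝ) < n := by exact_mod_cast hn
  have h3 : (1 : ℝ) / n ≤ ∑ k ∈ Finset.range n, ‖c (k + 1) - c k‖ ^ 2 := by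
    rw [div_le_iff₀ hnpos]
    linarith [h2]
  have h4 : (1 : ℝ) / n ≤ ∑' k : ℕ, ‖c (k + 1) - c k‖ ^ 2 := by
    rw [hsum]
    refine le_trans h3 (Finset.sum_le_sum_of_subset_of_nonneg ?_ ?_)
    · exact Finset.range_subset_range.mpr (le_trans (Nat.le_succ n) (le_max_right _ _))
    · intro k _ _; positivity
  exact Real.sqrt_le_sqrt h4

/-- Upper bound: the distance from `eVec n` to the span of the others is at most `√(2/n)`. -/
lemma upper {n : ℕ} (hn : 1 ≤ n) : distToOthers n ≤ Real.sqrt (2 / n) := by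
  set c : ℕ → ℂ := fun k => if k ≤ n then (k : ℂ) / n else if k ≤ 2 * n then 2 - (k : ℂ) / n
    else 0 with hcdef
  have hnC : (n : ℂ) ≠ 0 := Nat.cast_ne_zero.mpr (by omega)
  have hnR : (0 : ℝ) < n := by exact_mod_cast hn
  have hc0 : c 0 = 0 := by simp [hcdef]
  have hcn : c n = 1 := by simp [hcdef, div_self hnC]
  have hctail : ∀ k, 2 * n ≤ k → c k = 0 := by
    intro k hk
    simp only [hcdef]
    rw [if_neg (by omega)]
    by_cases h : k ≤ 2 * n
    · have hk2 : k = 2 * n := le_antisymm h hk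
      rw [if_pos h, hk2]
      push_cast
      field_simp
      ring
    · rw [if_neg h]
  have hdiff : ∀ k, k < 2 * n → ‖c (k + 1) - c k‖ ^ 2 = 1 / (n : ℝ) ^ 2 := by
    intro k hk
    have hval : c (k + 1) - c k = 1 / (n : ℂ) ∨ c (k + 1) - c k = -(1 / (n : ℂ)) := by
      by_cases h1 : k + 1 ≤ n
      · left
        simp only [hcdef]
        rw [if_pos h1, if_pos (by omega)]
        push_cast
        field_simp
        ring
      · right
        have hkn : n ≤ k := by omega
        by_cases h2 : k ≤ n
        · have hke : k = n := le_antisymm h2 hkn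
          simp only [hcdef]
          rw [if_neg h1, if_pos (by omega), if_pos h2, hke]
          rw [div_self hnC]
          push_cast
          field_simp
          ring
        · simp only [hcdef]
          rw [if_neg h1, if_pos (by omega), if_neg h2, if_pos (by omega)]
          push_cast
          field_simp
          ring
    have hnorm : ‖(1 / (n : ℂ))‖ = 1 / (n : ℝ) := by
      rw [norm_div, norm_one, Complex.norm_natCast]
    rcases hval with h | h
    · rw [h, hnorm]; ring
    · rw [h, norm_neg, hnorm]; ring
  have hdN : dN (eVec n - (eVec n - c)) = Real.sqrt (2 / n) := by
    have hrw : eVec n - (eVec n - c) = c := sub_sub_cancel _ _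
    rw [hrw]
    unfold dN
    have hsum : (∑' k : ℕ, ‖c (k + 1) - c k‖ ^ 2)
        = ∑ k ∈ Finset.range (2 * n), ‖c (k + 1) - c k‖ ^ 2 := by
      apply tsum_eq_sum
      intro k hk
      rw [Finset.mem_range, not_lt] at hk
      rw [hctail k hk, hctail (k + 1) (le_trans hk (Nat.le_succ k))]
      simp
    rw [hsum, Finset.sum_congr rfl (fun k hk => hdiff k (Finset.mem_range.mp hk)),
      Finset.sum_const, Finset.card_range, nsmul_eq_mul]
    congr 1
    push_cast
    field_simp
  apply csInf_le
  · refine ⟨0, ?_⟩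
    rintro r ⟨y, hy, rfl⟩
    exact Real.sqrt_nonneg _
  refine ⟨eVec n - c, ?_, hdN.symm⟩
  apply mem_span n (2 * n)
  · simp only [Pi.sub_apply, hc0, eVec, sub_zero]
    rw [if_neg]; omega
  · simp [hcn, eVec]
  · intro k hk
    simp only [Pi.sub_apply, hctail k hk, eVec, sub_zero]
    rw [if_neg]; omega

end Stmt7Aux

/-- In `ℓ₂(Δ)` the unit vectors `(e_n)_{n≥1}` are minimal (each distance to the closed
span of the others is positive) but not uniformly minimal (the infimum of these
distances is zero). -/
theorem stmt7 :
    (∀ n : ℕ, 1 ≤ n → 0 < distToOthers n) ∧ (⨅ n : ℕ, distToOthers (n + 1)) = 0 := by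
  constructor
  · intro n hn
    have h1 : (0 : ℝ) < Real.sqrt (1 / n) := by
      apply Real.sqrt_pos.mpr
      have : (0 : ℝ) < n := by exact_mod_cast hn
      positivity
    exact lt_of_lt_of_le h1 (Stmt7Aux.lower hn)
  · have hnn : ∀ n : ℕ, (0 : ℝ) ≤ distToOthers (n + 1) := fun n =>
      le_trans (Real.sqrt_nonneg _) (Stmt7Aux.lower (Nat.le_add_left 1 n))
    have hbdd : BddBelow (Set.range fun n : ℕ => distToOthers (n + 1)) := by
      refine ⟨0, ?_⟩
      rintro r ⟨n, rfl⟩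
      exact hnn n
    apply le_antisymm
    · apply le_of_forall_pos_le_add
      intro ε hε
      obtain ⟨n, hnn2⟩ := exists_nat_gt (2 / ε ^ 2)
      have hup : distToOthers (n + 1) ≤ Real.sqrt (2 / (n + 1)) := by
        have := Stmt7Aux.upper (n := n + 1) (Nat.le_add_left 1 n)
        simpa using this
      have hstep : Real.sqrt (2 / ((n : ℝ) + 1)) ≤ ε := by
        rw [show ε = Real.sqrt (ε ^ 2) from (Real.sqrt_sq hε.le).symm]
        apply Real.sqrt_le_sqrt
        rw [div_le_iff₀ (by positivity)]
        have h2 : 2 / ε ^ 2 < (n : ℝ) + 1 := lt_of_lt_of_le hnn2 (by linarith)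
        rw [div_lt_iff₀ (by positivity)] at h2
        nlinarith [h2]
      calc (⨅ n : ℕ, distToOthers (n + 1)) ≤ distToOthers (n + 1) := ciInf_le hbdd n
        _ ≤ Real.sqrt (2 / ((n : ℝ) + 1)) := by
            refine le_trans hup (le_of_eq ?_)
            norm_num
        _ ≤ ε := hstep
        _ = 0 + ε := (zero_add ε).symm
    · exact le_ciInf hnn
end

section
/- In ℓ₂(Δ), the norm of the n-th unit vector satisfies ‖e_n‖ = √2 for all n ≥ 1 (with the convention c_0 = 0, so ‖e_1‖ accounts for differences at positions 1 and 2), while the distance from e_n to the span of {e_j : j ≠ n} tends to 0; in particular the coordinate functionals are unbounded uniformly in n. -/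
open Filter Topology

lemma dN_eq_sum (c : ℕ → ℂ) (s : Finset ℕ) (h : ∀ k ∉ s, c (k + 1) = c k) :
    dN c = Real.sqrt (∑ k ∈ s, ‖c (k + 1) - c k‖ ^ 2) := by
  unfold dN
  congr 1
  exact tsum_eq_sum (fun k hk => by rw [h k hk]; simp)

lemma dN_eVec (n : ℕ) (hn : 1 ≤ n) : dN (eVec n) = Real.sqrt 2 := by
  rw [dN_eq_sum (eVec n) {n - 1, n} (by
    intro k hk
    simp only [Finset.mem_insert, Finset.mem_singleton, not_or] at hk
    unfold eVec
    have h1 : k + 1 ≠ n := by omega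
    have h2 : k ≠ n := hk.2
    simp [h1, h2])]
  have hne : n - 1 ≠ n := by omega
  rw [Finset.sum_pair hne]
  have e1 : n - 1 + 1 = n := by omega
  unfold eVec
  rw [e1]
  simp [hne, (by omega : n + 1 ≠ n)]
  norm_num

lemma mem_span_of (n N : ℕ) (y : ℕ → ℂ) (h0 : y 0 = 0) (hn : y n = 0)
    (hN : ∀ k, N < k → y k = 0) :
    y ∈ Submodule.span ℂ {c : ℕ → ℂ | ∃ j : ℕ, 1 ≤ j ∧ j ≠ n ∧ c = eVec j} := by
  have hy : y = ∑ j ∈ (Finset.range (N + 1)).filter (fun j => 1 ≤ j ∧ j ≠ n),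
      y j • eVec j := by
    funext k
    rw [Finset.sum_apply]
    have : ∀ j ∈ (Finset.range (N + 1)).filter (fun j => 1 ≤ j ∧ j ≠ n),
        (y j • eVec j) k = if k = j then y j else 0 := by
      intro j _
      simp only [Pi.smul_apply, eVec, smul_eq_mul]
      split_ifs <;> simp
    rw [Finset.sum_congr rfl this, Finset.sum_ite_eq]
    by_cases hk : k ∈ (Finset.range (N + 1)).filter (fun j => 1 ≤ j ∧ j ≠ n)
    · simp [hk]
    · simp only [hk, if_false]
      simp only [Finset.mem_filter, Finset.mem_range, not_and, not_lt] at hk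
      by_cases h1 : k = 0
      · rw [h1, h0]
      · by_cases h2 : k = n
        · rw [h2, hn]
        · exact hN k (by omega)
  rw [hy]
  exact Submodule.sum_mem _ (fun j hj => by
    simp only [Finset.mem_filter, Finset.mem_range] at hj
    exact Submodule.smul_mem _ _ (Submodule.subset_span ⟨j, hj.2.1, hj.2.2, rfl⟩))

/-- Tent function: up to 1 at n over n steps, back to 0 at 2n. -/
noncomputable def ramp (n : ℕ) : ℕ → ℂ := fun k => ((min k (2 * n - k) : ℕ) : ℂ) / n

lemma dN_ramp (n : ℕ) (hn : 1 ≤ n) : dN (ramp n) = Real.sqrt (2 / n) := by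
  have hn' : (n : ℝ) ≠ 0 := Nat.cast_ne_zero.mpr (by omega)
  have hnc : (n : ℂ) ≠ 0 := Nat.cast_ne_zero.mpr (by omega)
  rw [dN_eq_sum (ramp n) (Finset.range (2 * n)) (by
    intro k hk
    simp only [Finset.mem_range, not_lt] at hk
    unfold ramp
    have h1 : min (k + 1) (2 * n - (k + 1)) = 0 := by omega
    have h2 : min k (2 * n - k) = 0 := by omega
    rw [h1, h2])]
  have hterm : ∀ k ∈ Finset.range (2 * n),
      ‖ramp n (k + 1) - ramp n k‖ ^ 2 = (1 / n) ^ 2 := by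
    intro k hk
    simp only [Finset.mem_range] at hk
    unfold ramp
    rcases lt_or_ge k n with h | h
    · have h1 : min (k + 1) (2 * n - (k + 1)) = k + 1 := by omega
      have h2 : min k (2 * n - k) = k := by omega
      rw [h1, h2]
      have : ((k : ℂ) + 1) / n - k / n = 1 / n := by field_simp; ring
      push_cast
      rw [this]
      simp [norm_div]
    · have h1 : min (k + 1) (2 * n - (k + 1)) = 2 * n - k - 1 := by omega
      have h2 : min k (2 * n - k) = 2 * n - k := by omega
      rw [h1, h2]
      have e1 : ((2 * n - k - 1 : ℕ) : ℂ) = 2 * n - k - 1 := by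
        rw [Nat.cast_sub (by omega), Nat.cast_sub (by omega)]; push_cast; ring
      have e2 : ((2 * n - k : ℕ) : ℂ) = 2 * n - k := by
        rw [Nat.cast_sub (by omega)]; push_cast; ring
      rw [e1, e2]
      have : ((2 * n - k - 1 : ℂ)) / n - (2 * n - k) / n = -(1 / n) := by field_simp; ring
      rw [this]
      simp [norm_div]
  rw [Finset.sum_congr rfl hterm, Finset.sum_const, Finset.card_range]
  congr 1
  field_simp
  ring
  field_simp

lemma ramp_zero (n : ℕ) : ramp n 0 = 0 := by simp [ramp]
lemma ramp_n (n : ℕ) (hn : 1 ≤ n) : ramp n n = 1 := by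
  unfold ramp
  have : min n (2 * n - n) = n := by omega
  rw [this]
  exact div_self (Nat.cast_ne_zero.mpr (by omega))
lemma ramp_large (n k : ℕ) (h : 2 * n < k) : ramp n k = 0 := by
  unfold ramp
  have : min k (2 * n - k) = 0 := by omega
  rw [this]; simp

/-- Staircase for part 3. -/
noncomputable def stair (n : ℕ) : ℕ → ℂ := fun k => ((min k n : ℕ) : ℂ)

lemma dN_stair (n : ℕ) : dN (stair n) = Real.sqrt n := by
  rw [dN_eq_sum (stair n) (Finset.range n) (by
    intro k hk
    simp only [Finset.mem_range, not_lt] at hk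
    unfold stair
    have h1 : min (k + 1) n = n := by omega
    have h2 : min k n = n := by omega
    rw [h1, h2])]
  have hterm : ∀ k ∈ Finset.range n, ‖stair n (k + 1) - stair n k‖ ^ 2 = 1 := by
    intro k hk
    simp only [Finset.mem_range] at hk
    unfold stair
    have h1 : min (k + 1) n = k + 1 := by omega
    have h2 : min k n = k := by omega
    rw [h1, h2]
    push_cast
    simp
  rw [Finset.sum_congr rfl hterm, Finset.sum_const, Finset.card_range]
  simp

lemma distToOthers_nonneg (n : ℕ) : 0 ≤ distToOthers n := by
  apply Real.sInf_nonneg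
  rintro r ⟨y, _, rfl⟩
  exact Real.sqrt_nonneg _

lemma distToOthers_le (n : ℕ) (hn : 1 ≤ n) : distToOthers n ≤ Real.sqrt (2 / n) := by
  apply csInf_le
  · exact ⟨0, by rintro r ⟨y, _, rfl⟩; exact Real.sqrt_nonneg _⟩
  · refine ⟨eVec n - ramp n, ?_, ?_⟩
    · apply mem_span_of n (2 * n)
      · have h0 : ¬ (0 : ℕ) = n := by omega
        simp [eVec, ramp_zero, h0]
      · simp [eVec, ramp_n n hn]
      · intro k hk
        have h1 : k ≠ n := by omega
        simp [eVec, ramp_large n k hk, h1]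
    · rw [sub_sub_cancel, dN_ramp n hn]

/-- In `ℓ₂(Δ)`: `‖e_n‖ = √2` for every `n ≥ 1`, the distance from `e_n` to the span
of the other unit vectors tends to `0`, and consequently the coordinate functionals
are not uniformly bounded in `n`. -/
theorem stmt8 :
    (∀ n : ℕ, 1 ≤ n → dN (eVec n) = Real.sqrt 2) ∧
    Tendsto (fun n : ℕ => distToOthers (n + 1)) atTop (nhds 0) ∧
    ¬ ∃ M : ℝ, ∀ n : ℕ, 1 ≤ n → ∀ c : ℕ → ℂ, c 0 = 0 →
      (Summable fun k => ‖c (k + 1) - c k‖ ^ 2) → ‖c n‖ ≤ M * dN c := by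
  refine ⟨dN_eVec, ?_, ?_⟩
  · -- squeeze between 0 and √(2/(n+1))
    apply squeeze_zero (fun n => distToOthers_nonneg (n + 1))
      (g := fun n : ℕ => Real.sqrt (2 / (n + 1)))
    · intro n
      have := distToOthers_le (n + 1) (by omega)
      convert this using 3
      push_cast
      ring
    · have h1 : Tendsto (fun n : ℕ => 2 / ((n : ℝ) + 1)) atTop (𝓝 0) := by
        have := (tendsto_one_div_add_atTop_nhds_zero_nat (𝕜 := ℝ)).const_mul 2
        simpa [div_eq_mul_inv] using this
      have h2 := (Real.continuous_sqrt.tendsto 0).comp h1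
      rw [Real.sqrt_zero] at h2
      exact h2
  · rintro ⟨M, hM⟩
    set n : ℕ := ⌈M ^ 2⌉₊ + 1 with hn
    have hc0 : stair n 0 = 0 := by simp [stair]
    have hsum : Summable fun k => ‖stair n (k + 1) - stair n k‖ ^ 2 := by
      apply summable_of_ne_finset_zero (s := Finset.range n)
      intro k hk
      simp only [Finset.mem_range, not_lt] at hk
      unfold stair
      have h1 : min (k + 1) n = n := by omega
      have h2 : min k n = n := by omega
      rw [h1, h2]
      simp
    have hineq := hM n (by omega) (stair n) hc0 hsum
    rw [dN_stair] at hineq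
    have hcn : ‖stair n n‖ = (n : ℝ) := by
      unfold stair
      rw [min_self]
      simp
    rw [hcn] at hineq
    have hn0 : (0 : ℝ) ≤ (n : ℝ) := Nat.cast_nonneg n
    have hs : Real.sqrt n ^ 2 = (n : ℝ) := Real.sq_sqrt hn0
    have hMn : M ^ 2 < (n : ℝ) := by
      calc M ^ 2 ≤ (⌈M ^ 2⌉₊ : ℝ) := Nat.le_ceil _
        _ < (n : ℝ) := by rw [hn]; push_cast; linarith
    have hMs : M < Real.sqrt n := by
      nlinarith [Real.sqrt_nonneg ((n : ℕ) : ℝ)]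
    have h1n : (1 : ℝ) ≤ (n : ℝ) := by
      have : 1 ≤ n := by omega
      exact_mod_cast this
    have hs1 : (1 : ℝ) ≤ Real.sqrt n := by
      rw [show (1 : ℝ) = Real.sqrt 1 by simp]
      exact Real.sqrt_le_sqrt h1n
    nlinarith
end

section
/- Let f ∈ S_1 with C = sup_n n|Δf(n)| < ∞ and let a > 0. For any λ ∈ ℂ with inf_n |i f(n) − λ| ≥ a, the diagonal operator A(λ) on ℓ₂(Δ) defined by (A(λ)c)_n = c_n/(i f(n) − λ) is bounded with ‖A(λ)‖² ≤ 2/a² + 8C²/a⁴. -/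
open Filter Topology Finset

lemma hardy_aux (g : ℕ → ℝ) (N : ℕ) :
    ∑ n ∈ range N, ((∑ k ∈ range (n+1), g k) / (n+1 : ℝ))^2
      ≤ 4 * ∑ n ∈ range N, g n ^ 2 := by
  set A : ℕ → ℝ := fun n => (∑ k ∈ range (n+1), g k) / (n+1 : ℝ) with hA
  have hid : ∀ n : ℕ, g n = ((n:ℝ)+1) * A n - (n:ℝ) * A (n-1) := by
    intro n
    cases n with
    | zero => simp [hA]
    | succ m =>
      have h1 : ((m:ℝ)+1+1) ≠ 0 := by positivity
      have h2 : ((m:ℝ)+1) ≠ 0 := by positivity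
      simp only [hA, Nat.add_sub_cancel]
      push_cast
      field_simp
      rw [Finset.sum_range_succ]
      ring
  have ht : ∀ M : ℕ, ∑ n ∈ range M, (A n ^ 2 - 2 * A n * g n)
      ≤ -(M:ℝ) * A (M-1) ^ 2 := by
    intro M
    induction M with
    | zero => simp
    | succ M ih =>
      rw [Finset.sum_range_succ]
      have key : A M ^ 2 - 2 * A M * g M ≤ -((M:ℝ)+1) * A M ^ 2 + (M:ℝ) * A (M-1) ^ 2 := by
        rw [hid M]
        nlinarith [mul_nonneg (Nat.cast_nonneg (α := ℝ) M) (sq_nonneg (A M - A (M-1))),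
          sq_nonneg (A M)]
      have : ((M+1 : ℕ) : ℝ) = (M:ℝ) + 1 := by push_cast; ring
      rw [Nat.add_sub_cancel, this]
      linarith
  have hsum : ∑ n ∈ range N, A n ^ 2 ≤ 2 * ∑ n ∈ range N, A n * g n := by
    have := ht N
    have h1 : ∑ n ∈ range N, (A n ^ 2 - 2 * A n * g n)
        = ∑ n ∈ range N, A n ^ 2 - 2 * ∑ n ∈ range N, A n * g n := by
      rw [Finset.sum_sub_distrib, Finset.mul_sum]
      simp_rw [mul_assoc]
    nlinarith [sq_nonneg (A (N-1)), Nat.cast_nonneg (α := ℝ) N,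
      mul_nonneg (Nat.cast_nonneg (α := ℝ) N) (sq_nonneg (A (N-1)))]
  have hcs := Finset.sum_mul_sq_le_sq_mul_sq (range N) A g
  have hX0 : (0:ℝ) ≤ ∑ n ∈ range N, A n ^ 2 :=
    Finset.sum_nonneg fun _ _ => sq_nonneg _
  have hY0 : (0:ℝ) ≤ ∑ n ∈ range N, g n ^ 2 :=
    Finset.sum_nonneg fun _ _ => sq_nonneg _
  set X := ∑ n ∈ range N, A n ^ 2
  set Y := ∑ n ∈ range N, g n ^ 2
  set Z := ∑ n ∈ range N, A n * g n
  have hZ0 : 0 ≤ Z := by linarith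
  rcases eq_or_lt_of_le hX0 with h | h
  · linarith
  · nlinarith [mul_le_mul_of_nonneg_right hsum hZ0]

lemma hardy_aux' (g : ℕ → ℝ) (hg : ∀ n, 0 ≤ g n) (N : ℕ) :
    ∑ n ∈ range N, ((∑ k ∈ range n, g k) / (n+1 : ℝ))^2
      ≤ 4 * ∑ n ∈ range N, g n ^ 2 := by
  cases N with
  | zero => simp
  | succ M =>
    rw [Finset.sum_range_succ' (fun n => ((∑ k ∈ range n, g k) / (n+1 : ℝ))^2) M]
    simp only [Finset.range_zero, Finset.sum_empty, zero_div, ne_eq, OfNat.ofNat_ne_zero,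
      not_false_eq_true, zero_pow, add_zero]
    have step : ∀ i : ℕ, ((∑ k ∈ range (i+1), g k) / ((i+1 : ℕ)+1 : ℝ))^2
        ≤ ((∑ k ∈ range (i+1), g k) / (i+1 : ℝ))^2 := by
      intro i
      have hnum : (0:ℝ) ≤ ∑ k ∈ range (i+1), g k :=
        Finset.sum_nonneg fun k _ => hg k
      have h1 : (0:ℝ) < (i:ℝ)+1 := by positivity
      have h2 : ((i:ℝ)+1) ≤ ((i+1:ℕ):ℝ)+1 := by push_cast; linarith
      have := div_le_div_of_nonneg_left hnum h1 h2
      have hd : (0:ℝ) ≤ (∑ k ∈ range (i+1), g k) / (((i+1:ℕ):ℝ)+1) := by positivity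
      exact pow_le_pow_left₀ hd this 2
    calc ∑ i ∈ range M, ((∑ k ∈ range (i+1), g k) / ((i+1 : ℕ)+1 : ℝ))^2
        ≤ ∑ i ∈ range M, ((∑ k ∈ range (i+1), g k) / (i+1 : ℝ))^2 :=
          Finset.sum_le_sum fun i _ => step i
      _ ≤ 4 * ∑ n ∈ range M, g n ^ 2 := hardy_aux g M
      _ ≤ 4 * ∑ n ∈ range (M+1), g n ^ 2 := by
          rw [Finset.sum_range_succ]
          nlinarith [sq_nonneg (g M)]

/-- Let `f ∈ S₁` (i.e. `f(n) → +∞` and `n|f(n) - f(n-1)| ≤ C`), `a > 0` and `λ ∈ ℂ`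
with `|i f(n) - λ| ≥ a` for all `n ≥ 1`. Then the diagonal operator
`(A(λ)c)_n = c_n / (i f(n) - λ)` is bounded on `ℓ₂(Δ)` with
`‖A(λ)c‖² ≤ (2/a² + 8C²/a⁴) ‖c‖²`, where `‖c‖² = Σ_{n≥1}|c_n - c_{n-1}|²`
(convention `c 0 = 0`). -/
theorem stmt9 (f : ℕ → ℝ) (C a : ℝ) (ha : 0 < a) (lam : ℂ)
    (hf : Tendsto f atTop atTop)
    (hC : ∀ n : ℕ, 2 ≤ n → (n : ℝ) * |f n - f (n - 1)| ≤ C)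
    (hlam : ∀ n : ℕ, 1 ≤ n → a ≤ ‖Complex.I * (f n : ℂ) - lam‖)
    (c : ℕ → ℂ) (h0 : c 0 = 0) (hc : Summable fun n => ‖c (n + 1) - c n‖ ^ 2) :
    (Summable fun n : ℕ =>
      ‖c (n + 1) / (Complex.I * (f (n + 1) : ℂ) - lam)
        - c n / (Complex.I * (f n : ℂ) - lam)‖ ^ 2) ∧
    ∑' n : ℕ, ‖c (n + 1) / (Complex.I * (f (n + 1) : ℂ) - lam)
        - c n / (Complex.I * (f n : ℂ) - lam)‖ ^ 2
      ≤ (2 / a ^ 2 + 8 * C ^ 2 / a ^ 4) * ∑' n : ℕ, ‖c (n + 1) - c n‖ ^ 2 := by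
  set d : ℕ → ℂ := fun n => Complex.I * (f n : ℂ) - lam with hd
  set g : ℕ → ℝ := fun n => ‖c (n + 1) - c n‖ with hgdef
  have hg0 : ∀ n, 0 ≤ g n := fun n => norm_nonneg _
  set S : ℕ → ℝ := fun n => ∑ k ∈ range n, g k with hS
  have hS0 : ∀ n, 0 ≤ S n := fun n => Finset.sum_nonneg fun k _ => hg0 k
  have hC0 : 0 ≤ C := le_trans (by positivity) (hC 2 le_rfl)
  have hdnorm : ∀ n : ℕ, 1 ≤ n → a ≤ ‖d n‖ := hlam
  have hdne : ∀ n : ℕ, 1 ≤ n → d n ≠ 0 := by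
    intro n hn h
    have := hdnorm n hn
    rw [h, norm_zero] at this
    linarith
  have hcS : ∀ n, ‖c n‖ ≤ S n := by
    intro n
    induction n with
    | zero => simp [hS, h0]
    | succ m ih =>
      have h1 : ‖c (m+1)‖ ≤ ‖c m‖ + ‖c (m+1) - c m‖ := by
        calc ‖c (m+1)‖ = ‖c m + (c (m+1) - c m)‖ := by ring_nf
          _ ≤ ‖c m‖ + ‖c (m+1) - c m‖ := norm_add_le _ _
      have h2 : S (m+1) = S m + g m := Finset.sum_range_succ g m
      have h3 : g m = ‖c (m+1) - c m‖ := rfl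
      rw [h2]
      linarith [ih, h1, h3 ▸ le_refl (g m)]
  set u : ℕ → ℝ := fun n => g n / a + C * (S n / ((n:ℝ)+1)) / a^2 with hu
  have hbound : ∀ n : ℕ, ‖c (n+1) / d (n+1) - c n / d n‖ ≤ u n := by
    intro n
    have hsecond_nonneg : 0 ≤ C * (S n / ((n:ℝ)+1)) / a^2 := by
      have := hS0 n
      positivity
    cases n with
    | zero =>
      have he : c 1 / d 1 - c 0 / d 0 = c 1 / d 1 := by rw [h0]; simp
      rw [he, norm_div]
      have hg00 : g 0 = ‖c 1‖ := by simp [hgdef, h0]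
      have hle : ‖c 1‖ / ‖d 1‖ ≤ ‖c 1‖ / a :=
        div_le_div_of_nonneg_left (norm_nonneg _) ha (hdnorm 1 le_rfl)
      have : u 0 = g 0 / a + C * (S 0 / (((0:ℕ):ℝ)+1)) / a^2 := rfl
      rw [this, hg00]
      linarith [hsecond_nonneg]
    | succ m =>
      have hdm : d (m+1) ≠ 0 := hdne (m+1) (by omega)
      have hd2 : d (m+2) ≠ 0 := hdne (m+2) (by omega)
      have hdmn : a ≤ ‖d (m+1)‖ := hdnorm (m+1) (by omega)
      have hd2n : a ≤ ‖d (m+2)‖ := hdnorm (m+2) (by omega)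
      have hiden : c (m+2) / d (m+2) - c (m+1) / d (m+1)
          = (c (m+2) - c (m+1)) / d (m+2)
            - c (m+1) * (d (m+2) - d (m+1)) / (d (m+1) * d (m+2)) := by
        field_simp
        ring
      have hdiff : ‖d (m+2) - d (m+1)‖ = |f (m+2) - f (m+1)| := by
        have he : d (m+2) - d (m+1) = Complex.I * (((f (m+2) - f (m+1) : ℝ)) : ℂ) := by
          simp only [hd]; push_cast; ring
        rw [he, norm_mul, Complex.norm_I, one_mul, Complex.norm_real, Real.norm_eq_abs]
      have hfd : |f (m+2) - f (m+1)| ≤ C / (((m+1:ℕ):ℝ)+1) := by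
        have h1 := hC (m+2) (by omega)
        have h2 : ((m+2:ℕ):ℝ) * |f (m+2) - f (m+1)| ≤ C := by
          simpa using h1
        rw [le_div_iff₀ (by positivity)]
        push_cast at h2 ⊢
        nlinarith [abs_nonneg (f (m+2) - f (m+1))]
      rw [hiden]
      have step1 : ‖(c (m+2) - c (m+1)) / d (m+2)
            - c (m+1) * (d (m+2) - d (m+1)) / (d (m+1) * d (m+2))‖
          ≤ ‖c (m+2) - c (m+1)‖ / ‖d (m+2)‖
            + ‖c (m+1)‖ * ‖d (m+2) - d (m+1)‖ / (‖d (m+1)‖ * ‖d (m+2)‖) := by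
        calc _ ≤ ‖(c (m+2) - c (m+1)) / d (m+2)‖
              + ‖c (m+1) * (d (m+2) - d (m+1)) / (d (m+1) * d (m+2))‖ := norm_sub_le _ _
          _ = _ := by rw [norm_div, norm_div, norm_mul, norm_mul]
      have step2 : ‖c (m+2) - c (m+1)‖ / ‖d (m+2)‖ ≤ g (m+1) / a :=
        div_le_div_of_nonneg_left (norm_nonneg _) ha hd2n
      have step3 : ‖c (m+1)‖ * ‖d (m+2) - d (m+1)‖ / (‖d (m+1)‖ * ‖d (m+2)‖)
          ≤ S (m+1) * (C / (((m+1:ℕ):ℝ)+1)) / (a * a) := by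
        rw [hdiff]
        have hnum : ‖c (m+1)‖ * |f (m+2) - f (m+1)|
            ≤ S (m+1) * (C / (((m+1:ℕ):ℝ)+1)) :=
          mul_le_mul (hcS (m+1)) hfd (abs_nonneg _) (hS0 (m+1))
        have hden : a * a ≤ ‖d (m+1)‖ * ‖d (m+2)‖ :=
          mul_le_mul hdmn hd2n (le_of_lt ha) (norm_nonneg _)
        exact div_le_div₀ (mul_nonneg (hS0 (m+1)) (div_nonneg hC0 (by positivity)))
          hnum (by positivity) hden
      have heq : S (m+1) * (C / (((m+1:ℕ):ℝ)+1)) / (a * a)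
          = C * (S (m+1) / (((m+1:ℕ):ℝ)+1)) / a^2 := by ring
      have : u (m+1) = g (m+1) / a + C * (S (m+1) / (((m+1:ℕ):ℝ)+1)) / a^2 := rfl
      rw [this]
      linarith [step1, step2, heq ▸ step3]
  set v : ℕ → ℝ := fun n => (S n / ((n:ℝ)+1))^2 with hv
  have hc' : Summable (fun n => g n ^ 2) := hc
  have hsq : ∀ n, ‖c (n+1) / d (n+1) - c n / d n‖^2
      ≤ 2/a^2 * g n^2 + 2*C^2/a^4 * v n := by
    intro n
    have h1 : ‖c (n+1) / d (n+1) - c n / d n‖^2 ≤ u n ^2 :=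
      pow_le_pow_left₀ (norm_nonneg _) (hbound n) 2
    have h2 : u n ^ 2 ≤ 2/a^2 * g n^2 + 2*C^2/a^4 * v n := by
      have expand : (g n / a + C * (S n / ((n:ℝ)+1)) / a^2)^2
          ≤ 2*(g n / a)^2 + 2*(C * (S n / ((n:ℝ)+1)) / a^2)^2 := by
        nlinarith [sq_nonneg (g n / a - C * (S n / ((n:ℝ)+1)) / a^2)]
      have heq : 2*(g n / a)^2 + 2*(C * (S n / ((n:ℝ)+1)) / a^2)^2
          = 2/a^2 * g n^2 + 2*C^2/a^4 * (S n / ((n:ℝ)+1))^2 := by ring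
      calc u n ^ 2 = (g n / a + C * (S n / ((n:ℝ)+1)) / a^2)^2 := rfl
        _ ≤ 2*(g n / a)^2 + 2*(C * (S n / ((n:ℝ)+1)) / a^2)^2 := expand
        _ = 2/a^2 * g n^2 + 2*C^2/a^4 * v n := heq
    linarith
  have hv0 : ∀ n, 0 ≤ v n := fun n => sq_nonneg _
  have hvbound : ∀ N, ∑ n ∈ range N, v n ≤ 4 * ∑' n, g n ^ 2 := by
    intro N
    calc ∑ n ∈ range N, v n ≤ 4 * ∑ n ∈ range N, g n ^ 2 := hardy_aux' g hg0 N
      _ ≤ 4 * ∑' n, g n ^ 2 := by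
          have := Summable.sum_le_tsum (range N) (fun i _ => sq_nonneg (g i)) hc'
          linarith
  have hvsummable : Summable v := summable_of_sum_range_le hv0 hvbound
  have hvt : ∑' n, v n ≤ 4 * ∑' n, g n ^ 2 :=
    Summable.tsum_le_of_sum_range_le hvsummable hvbound
  have hwsummable : Summable (fun n => 2/a^2 * g n^2 + 2*C^2/a^4 * v n) :=
    (hc'.mul_left _).add (hvsummable.mul_left _)
  have hsummable : Summable (fun n => ‖c (n+1) / d (n+1) - c n / d n‖^2) :=
    Summable.of_nonneg_of_le (fun n => sq_nonneg _) hsq hwsummable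
  refine ⟨hsummable, ?_⟩
  have hg2nonneg : 0 ≤ ∑' n, g n ^ 2 := tsum_nonneg fun n => sq_nonneg _
  calc ∑' n, ‖c (n+1) / d (n+1) - c n / d n‖^2
      ≤ ∑' n, (2/a^2 * g n^2 + 2*C^2/a^4 * v n) :=
        Summable.tsum_le_tsum hsq hsummable hwsummable
    _ = 2/a^2 * ∑' n, g n^2 + 2*C^2/a^4 * ∑' n, v n := by
        rw [Summable.tsum_add (hc'.mul_left _) (hvsummable.mul_left _), tsum_mul_left, tsum_mul_left]
    _ ≤ 2/a^2 * ∑' n, g n^2 + 2*C^2/a^4 * (4 * ∑' n, g n ^ 2) := by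
        have h1 : (0:ℝ) ≤ 2*C^2/a^4 := by positivity
        nlinarith [mul_le_mul_of_nonneg_left hvt h1]
    _ = (2 / a ^ 2 + 8 * C ^ 2 / a ^ 4) * ∑' n, g n ^ 2 := by ring
end

section
/- Let f ∈ S_1 with C = sup_n n|Δf(n)| < ∞. Define the operator A₁ on ℓ₂(Δ) by (A₁c)_n = i f(n) c_n with domain D(A₁) = {c ∈ ℓ₂(Δ) : (f(n)c_n) ∈ ℓ₂(Δ)}. Then the spectrum of A₁ equals its point spectrum and equals {i f(n) : n ∈ ℕ}, and for λ ∉ {i f(n)} the resolvent is the diagonal operator ((A₁ − λ)^{-1}c)_n = c_n/(i f(n) − λ). -/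
set_option maxHeartbeats 1000000

open Filter Topology Finset

lemma hardy_shift (a : ℕ → ℝ) (ha : ∀ n, 0 ≤ a n) (N : ℕ) :
    ∑ n ∈ range N, ((∑ k ∈ range (n+1), a k) / ((n:ℝ)+1)) ^ 2
      ≤ 4 * ∑ n ∈ range N, a n ^ 2 := by
  set t : ℕ → ℝ := fun n => (∑ k ∈ range n, a k) / (n:ℝ) with ht
  have htnn : ∀ n : ℕ, 0 ≤ t n := by
    intro n; exact div_nonneg (Finset.sum_nonneg fun k _ => ha k) (by positivity)
  have hnt : ∀ n : ℕ, (n : ℝ) * t n = ∑ k ∈ range n, a k := by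
    intro n
    match n with
    | 0 => simp [ht]
    | Nat.succ m =>
      have h : ((m:ℝ)+1) ≠ 0 := by positivity
      simp only [ht, Nat.cast_succ]
      field_simp
  have key : ∀ n : ℕ, t (n+1) ^ 2 - 2 * t (n+1) * a n ≤
      (n : ℝ) * t n ^ 2 - ((n : ℝ) + 1) * t (n+1) ^ 2 := by
    intro n
    have h1 : ((n : ℝ) + 1) * t (n+1) = (n : ℝ) * t n + a n := by
      have h3 := hnt (n+1); have h2 := hnt n
      push_cast at h3
      rw [Finset.sum_range_succ] at h3
      linarith
    have ha' : a n = ((n:ℝ)+1) * t (n+1) - (n:ℝ) * t n := by linarith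
    have hm : (0:ℝ) ≤ (n : ℝ) := Nat.cast_nonneg n
    rw [ha']
    nlinarith [mul_nonneg hm (sq_nonneg (t (n+1) - t n))]
  have tel : ∑ n ∈ range N, t (n+1) ^ 2 ≤
      2 * ∑ n ∈ range N, t (n+1) * a n := by
    have h1 : ∑ n ∈ range N, (t (n+1) ^ 2 - 2 * (t (n+1) * a n)) ≤
        ∑ n ∈ range N, ((n : ℝ) * t n ^ 2 - ((n:ℝ)+1) * t (n+1) ^ 2) := by
      apply Finset.sum_le_sum; intro n _
      have := key n; linarith
    have h2 : ∑ n ∈ range N, ((n : ℝ) * t n ^ 2 - ((n:ℝ)+1) * t (n+1) ^ 2) =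
        (0:ℝ) * t 0 ^ 2 - (N : ℝ) * t N ^ 2 := by
      have := Finset.sum_range_sub' (fun n => (n:ℝ) * t n ^ 2) N
      simp only [Nat.cast_succ] at this ⊢
      convert this using 2 with n
      push_cast; ring
    have h3 : (0:ℝ) * t 0 ^ 2 - (N : ℝ) * t N ^ 2 ≤ 0 := by
      have : (0:ℝ) ≤ (N:ℝ) * t N ^ 2 := by positivity
      linarith
    rw [Finset.sum_sub_distrib] at h1
    rw [← Finset.mul_sum] at h1
    linarith
  -- Cauchy-Schwarz
  set S := ∑ n ∈ range N, t (n+1) ^ 2 with hS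
  set Q := ∑ n ∈ range N, a n ^ 2 with hQ
  have hSnn : 0 ≤ S := Finset.sum_nonneg fun n _ => sq_nonneg _
  have hQnn : 0 ≤ Q := Finset.sum_nonneg fun n _ => sq_nonneg _
  have hCS : (∑ n ∈ range N, t (n+1) * a n) ^ 2 ≤ S * Q :=
    Finset.sum_mul_sq_le_sq_mul_sq _ _ _
  have hP : 0 ≤ ∑ n ∈ range N, t (n+1) * a n :=
    Finset.sum_nonneg fun n _ => mul_nonneg (htnn _) (ha _)
  have hsq : S ≤ 4 * Q := by
    rcases le_or_gt S 0 with h | h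
    · linarith
    · nlinarith [hCS, tel, hP, h]
  calc ∑ n ∈ range N, ((∑ k ∈ range (n+1), a k) / ((n:ℝ)+1)) ^ 2
      = S := by
        rw [hS]; apply Finset.sum_congr rfl; intro n _
        congr 1
        rw [ht]; push_cast; ring_nf
    _ ≤ 4 * Q := hsq

lemma hardy_fin (a : ℕ → ℝ) (ha : ∀ n, 0 ≤ a n) (N : ℕ) :
    ∑ n ∈ range N, ((∑ k ∈ range n, a k) / (n:ℝ)) ^ 2 ≤ 4 * ∑ n ∈ range N, a n ^ 2 := by
  match N with
  | 0 => simp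
  | Nat.succ M =>
    rw [Finset.sum_range_succ' (fun n => ((∑ k ∈ range n, a k) / (n:ℝ)) ^ 2) M]
    simp only [Nat.cast_zero, Finset.range_zero, Finset.sum_empty]
    have h1 := hardy_shift a ha M
    have h2 : ∑ n ∈ range M, a n ^ 2 ≤ ∑ n ∈ range (M+1), a n ^ 2 := by
      rw [Finset.sum_range_succ]; nlinarith [sq_nonneg (a M)]
    have : ((0:ℝ)/0)^2 = 0 := by norm_num
    push_cast
    rw [this]
    linarith

noncomputable def ev (n : ℕ) : ℕ → ℂ := fun m => if m = n then 1 else 0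

lemma finSupp (u : ℕ → ℂ) (N : ℕ) (hu : ∀ m, N ≤ m → u m = 0) :
    Summable (fun m => ‖u (m+1) - u m‖ ^ 2) := by
  apply summable_of_ne_finset_zero (s := Finset.range N)
  intro m hm
  rw [Finset.mem_range, not_lt] at hm
  rw [hu (m+1) (by omega), hu m hm]
  simp

/-- Membership in `ℓ₂(Δ)`: `c 0 = 0` (the sequence is `(c_n)_{n≥1}`) and the
difference sequence is square-summable. -/
def InSp (c : ℕ → ℂ) : Prop := c 0 = 0 ∧ Summable fun n => ‖c (n + 1) - c n‖ ^ 2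

/-- The domain of `A₁`: `c ∈ ℓ₂(Δ)` with `(f(n)c_n) ∈ ℓ₂(Δ)`. -/
def InDom (f : ℕ → ℝ) (c : ℕ → ℂ) : Prop :=
  InSp c ∧ InSp fun n => (f n : ℂ) * c n

/-- For `f ∈ S₁`, the operator `(A₁c)_n = i f(n) c_n` on `ℓ₂(Δ)` with its natural
domain has `σ(A₁) = σ_p(A₁) = {i f(n) : n ≥ 1}`: every `i f(n)` is an eigenvalue,
every eigenvalue is some `i f(n)`, and for `λ ∉ {i f(n)}` the resolvent exists, is
bounded and is the diagonal operator `c ↦ (c_n/(i f(n) - λ))`. -/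
theorem stmt10 (f : ℕ → ℝ) (hf : Tendsto f atTop atTop) (C : ℝ)
    (hC : ∀ n : ℕ, 2 ≤ n → (n : ℝ) * |f n - f (n - 1)| ≤ C) :
    (∀ n : ℕ, 1 ≤ n → ∃ c : ℕ → ℂ, InDom f c ∧ c ≠ 0 ∧
        (fun m => Complex.I * (f m : ℂ) * c m) = fun m => Complex.I * (f n : ℂ) * c m) ∧
    (∀ (lam : ℂ) (c : ℕ → ℂ), InDom f c → c ≠ 0 →
        (fun m => Complex.I * (f m : ℂ) * c m) = (fun m => lam * c m) →
        ∃ n : ℕ, 1 ≤ n ∧ lam = Complex.I * (f n : ℂ)) ∧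
    (∀ lam : ℂ, (∀ n : ℕ, 1 ≤ n → lam ≠ Complex.I * (f n : ℂ)) →
      (∀ c : ℕ → ℂ, InSp c →
        InDom f (fun n => c n / (Complex.I * (f n : ℂ) - lam)) ∧
        (fun n => (Complex.I * (f n : ℂ) - lam) * (c n / (Complex.I * (f n : ℂ) - lam))) = c ∧
        (∀ d : ℕ → ℂ, InDom f d →
          (fun n => (Complex.I * (f n : ℂ) - lam) * d n) = c →
          d = fun n => c n / (Complex.I * (f n : ℂ) - lam))) ∧
      ∃ M : ℝ, ∀ c : ℕ → ℂ, InSp c →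
        dN (fun n => c n / (Complex.I * (f n : ℂ) - lam)) ≤ M * dN c) := by
  have hC0 : (0:ℝ) ≤ C := le_trans (by positivity) (hC 2 le_rfl)
  refine ⟨?_, ?_, ?_⟩
  · -- eigenvectors
    intro n hn
    have hev0 : ∀ m, n + 1 ≤ m → ev n m = 0 := by
      intro m hm; simp only [ev, if_neg (by omega : ¬ (m = n))]
    refine ⟨ev n, ⟨⟨?_, ?_⟩, ?_, ?_⟩, ?_, ?_⟩
    · simp only [ev, if_neg (by omega : ¬ (0 = n))]
    · exact finSupp (ev n) (n+1) hev0
    · simp only [ev, if_neg (by omega : ¬ (0 = n)), mul_zero]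
    · exact finSupp (fun m => (f m : ℂ) * ev n m) (n+1)
        (fun m hm => by rw [hev0 m hm, mul_zero])
    · intro h
      have h2 := congrFun h n
      simp [ev] at h2
    · funext m
      by_cases hm : m = n
      · subst hm; rfl
      · simp only [ev, if_neg hm, mul_zero]
  · -- point spectrum ⊆ {i f n}
    intro lam c hc hne heq
    obtain ⟨n, hn⟩ := Function.ne_iff.mp hne
    have h0 : c 0 = 0 := hc.1.1
    simp only [Pi.zero_apply] at hn
    have hn1 : 1 ≤ n := by
      rcases Nat.eq_zero_or_pos n with h | h
      · exact absurd (h ▸ h0) hn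
      · exact h
    refine ⟨n, hn1, ?_⟩
    have h2 := congrFun heq n
    have := mul_right_cancel₀ hn h2
    exact this.symm
  · -- resolvent
    intro lam hlam
    set X : ℕ → ℂ := fun n => Complex.I * (f n : ℂ) - lam with hXdef
    have hXne : ∀ n : ℕ, 1 ≤ n → X n ≠ 0 := by
      intro n hn
      exact sub_ne_zero.mpr (Ne.symm (hlam n hn))
    have hnormX : ∀ n : ℕ, ‖X n‖ ≥ |f n| - ‖lam‖ := by
      intro n
      have h1 : ‖Complex.I * (f n : ℂ)‖ = |f n| := by
        rw [norm_mul, Complex.norm_I, one_mul, Complex.norm_real, Real.norm_eq_abs]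
      calc |f n| - ‖lam‖ = ‖Complex.I * (f n : ℂ)‖ - ‖lam‖ := by rw [h1]
        _ ≤ ‖Complex.I * (f n : ℂ) - lam‖ := norm_sub_norm_le _ _
        _ = ‖X n‖ := rfl
    obtain ⟨N, hN⟩ := Filter.eventually_atTop.mp (hf.eventually_ge_atTop (‖lam‖ + 1))
    -- lower bound δ
    have hdelta : ∃ δ : ℝ, 0 < δ ∧ δ ≤ 1 ∧ ∀ n : ℕ, 1 ≤ n → δ ≤ ‖X n‖ := by
      classical
      have hsne : ((Finset.range (N+1)).image
          (fun n => if 1 ≤ n then ‖X n‖ else 1)).Nonempty :=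
        (Finset.nonempty_range_iff.mpr (Nat.succ_ne_zero N)).image _
      refine ⟨((Finset.range (N+1)).image
        (fun n => if 1 ≤ n then ‖X n‖ else 1)).min' hsne, ?_, ?_, ?_⟩
      · obtain ⟨k, _, hk⟩ := Finset.mem_image.mp (Finset.min'_mem _ hsne)
        rw [← hk]
        by_cases h1 : 1 ≤ k
        · simp only [if_pos h1]
          exact norm_pos_iff.mpr (hXne k h1)
        · simp only [if_neg h1]; norm_num
      · have hmem : (fun n => if 1 ≤ n then ‖X n‖ else 1) 0 ∈
            (Finset.range (N+1)).image (fun n => if 1 ≤ n then ‖X n‖ else 1) :=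
          Finset.mem_image_of_mem _ (Finset.mem_range.mpr (by omega))
        have h2 := Finset.min'_le _ _ hmem
        simpa using h2
      · intro n hn
        by_cases hnN : n ≤ N
        · have hmem : (fun n => if 1 ≤ n then ‖X n‖ else 1) n ∈
              (Finset.range (N+1)).image (fun n => if 1 ≤ n then ‖X n‖ else 1) :=
            Finset.mem_image_of_mem _ (Finset.mem_range.mpr (by omega))
          have h2 := Finset.min'_le _ _ hmem
          simpa [if_pos hn] using h2
        · have hNn : N ≤ n := by omega
          have h3 := hN n hNn
          have h4 := hnormX n
          have h5 : f n ≤ |f n| := le_abs_self _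
          have h6 : (1:ℝ) ≤ ‖X n‖ := by linarith
          have hmem : (fun n => if 1 ≤ n then ‖X n‖ else 1) 0 ∈
              (Finset.range (N+1)).image (fun n => if 1 ≤ n then ‖X n‖ else 1) :=
            Finset.mem_image_of_mem _ (Finset.mem_range.mpr (by omega))
          have h2 := Finset.min'_le _ _ hmem
          simp only [if_neg (by omega : ¬ (1 ≤ 0))] at h2
          linarith
    obtain ⟨δ, hδpos, hδ1, hδ⟩ := hdelta
    -- constants
    set K1 : ℝ := δ⁻¹ with hK1def
    set K2 : ℝ := C * δ⁻¹ * δ⁻¹ with hK2def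
    have hK1nn : 0 ≤ K1 := by positivity
    have hK2nn : 0 ≤ K2 := by positivity
    set B : ℝ := 2 * K1 ^ 2 + 8 * K2 ^ 2 with hBdef
    have hBnn : 0 ≤ B := by positivity
    -- the core estimate
    have core : ∀ c : ℕ → ℂ, InSp c →
        Summable (fun n => ‖c (n+1) / X (n+1) - c n / X n‖ ^ 2) ∧
        (∑' n : ℕ, ‖c (n+1) / X (n+1) - c n / X n‖ ^ 2) ≤
          B * ∑' n : ℕ, ‖c (n+1) - c n‖ ^ 2 := by
      intro c hc
      obtain ⟨hc0, hcsum⟩ := hc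
      set a : ℕ → ℂ := fun n => c (n+1) - c n with hadef
      have hca : ∀ n, c n = ∑ k ∈ range n, a k := by
        intro n
        have := Finset.sum_range_sub (fun k => c k) n
        simp only [hadef]
        rw [this, hc0, sub_zero]
      have hcnorm : ∀ n, ‖c n‖ ≤ ∑ k ∈ range n, ‖a k‖ := by
        intro n; rw [hca n]; exact norm_sum_le _ _
      -- pointwise bound
      have hbound : ∀ n : ℕ, ‖c (n+1) / X (n+1) - c n / X n‖ ≤
          K1 * ‖a n‖ + K2 * ((∑ k ∈ range n, ‖a k‖) / (n:ℝ)) := by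
        intro n
        have hid : c (n+1) / X (n+1) - c n / X n =
            a n * (X (n+1))⁻¹ + c n * ((X (n+1))⁻¹ - (X n)⁻¹) := by
          simp only [hadef, div_eq_mul_inv]; ring
        rw [hid]
        have hX1 : δ ≤ ‖X (n+1)‖ := hδ (n+1) (by omega)
        have hXpos1 : (0:ℝ) < ‖X (n+1)‖ := lt_of_lt_of_le hδpos hX1
        have hterm1 : ‖a n * (X (n+1))⁻¹‖ ≤ K1 * ‖a n‖ := by
          rw [norm_mul, norm_inv, mul_comm]
          apply mul_le_mul_of_nonneg_right _ (norm_nonneg _)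
          rw [hK1def]
          exact inv_anti₀ hδpos hX1
        rcases Nat.eq_zero_or_pos n with hn0 | hn1
        · subst hn0
          have : c 0 * ((X 1)⁻¹ - (X 0)⁻¹) = 0 := by rw [hc0]; ring
          rw [this, add_zero]
          simp only [Finset.range_zero, Finset.sum_empty, Nat.cast_zero, zero_div, mul_zero]
          simpa using hterm1
        · have hXn : δ ≤ ‖X n‖ := hδ n hn1
          have hXposn : (0:ℝ) < ‖X n‖ := lt_of_lt_of_le hδpos hXn
          have hfd : |f (n+1) - f n| ≤ C / ((n:ℝ)+1) := by
            have h2 := hC (n+1) (by omega)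
            have h3 : (n+1) - 1 = n := by omega
            rw [h3] at h2
            rw [le_div_iff₀ (by positivity)]
            push_cast at h2 ⊢
            linarith
          have hnum : ‖X n - X (n+1)‖ ≤ C / ((n:ℝ)+1) := by
            have : X n - X (n+1) = Complex.I * ((f n : ℂ) - (f (n+1) : ℂ)) := by
              rw [hXdef]; ring
            rw [this, norm_mul, Complex.norm_I, one_mul]
            rw [← Complex.ofReal_sub, Complex.norm_real, Real.norm_eq_abs, abs_sub_comm]
            exact hfd
          have hinv : ‖(X (n+1))⁻¹ - (X n)⁻¹‖ ≤ (C / ((n:ℝ)+1)) * (δ⁻¹ * δ⁻¹) := by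
            rw [inv_sub_inv (hXne (n+1) (by omega)) (hXne n hn1)]
            rw [norm_div, norm_mul, div_eq_mul_inv, mul_inv]
            apply mul_le_mul hnum _ (by positivity) (by positivity)
            exact mul_le_mul (inv_anti₀ hδpos hX1)
              (inv_anti₀ hδpos hXn) (by positivity) (by positivity)
          have hterm2 : ‖c n * ((X (n+1))⁻¹ - (X n)⁻¹)‖ ≤
              K2 * ((∑ k ∈ range n, ‖a k‖) / (n:ℝ)) := by
            rw [norm_mul]
            have hAnn : (0:ℝ) ≤ ∑ k ∈ range n, ‖a k‖ :=
              Finset.sum_nonneg fun k _ => norm_nonneg _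
            have hh1 : ‖c n‖ * ‖(X (n+1))⁻¹ - (X n)⁻¹‖
                ≤ (∑ k ∈ range n, ‖a k‖) * ((C / ((n:ℝ)+1)) * (δ⁻¹ * δ⁻¹)) :=
              mul_le_mul (hcnorm n) hinv (norm_nonneg _) hAnn
            have hh2 : (∑ k ∈ range n, ‖a k‖) * ((C / ((n:ℝ)+1)) * (δ⁻¹ * δ⁻¹))
                = (C * δ⁻¹ * δ⁻¹) * ((∑ k ∈ range n, ‖a k‖) / ((n:ℝ)+1)) := by ring
            have hh3 : (C * δ⁻¹ * δ⁻¹) * ((∑ k ∈ range n, ‖a k‖) / ((n:ℝ)+1))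
                ≤ K2 * ((∑ k ∈ range n, ‖a k‖) / (n:ℝ)) := by
              rw [hK2def]
              apply mul_le_mul_of_nonneg_left _ (by positivity)
              apply div_le_div_of_nonneg_left hAnn (by positivity)
              push_cast
              linarith
            linarith
          have hh4 := norm_add_le (a n * (X (n+1))⁻¹) (c n * ((X (n+1))⁻¹ - (X n)⁻¹))
          linarith
      -- squared bound
      have hsq : ∀ n : ℕ, ‖c (n+1) / X (n+1) - c n / X n‖ ^ 2 ≤
          2 * K1 ^ 2 * ‖a n‖ ^ 2 + 2 * K2 ^ 2 * ((∑ k ∈ range n, ‖a k‖) / (n:ℝ)) ^ 2 := by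
        intro n
        have h1 := hbound n
        have h2 : (0:ℝ) ≤ ‖c (n+1) / X (n+1) - c n / X n‖ := norm_nonneg _
        have h3 : (0:ℝ) ≤ K1 * ‖a n‖ := by positivity
        have h4 : (0:ℝ) ≤ (∑ k ∈ range n, ‖a k‖) / (n:ℝ) := by
          apply div_nonneg (Finset.sum_nonneg fun k _ => norm_nonneg _) (by positivity)
        nlinarith [sq_nonneg (K1 * ‖a n‖ - K2 * ((∑ k ∈ range n, ‖a k‖) / (n:ℝ))),
          mul_nonneg hK2nn h4]
      set T : ℝ := ∑' n : ℕ, ‖c (n+1) - c n‖ ^ 2 with hTdef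
      have hTnn : 0 ≤ T := tsum_nonneg fun n => sq_nonneg _
      have hpartial : ∀ M : ℕ, ∑ n ∈ range M, ‖c (n+1) / X (n+1) - c n / X n‖ ^ 2 ≤ B * T := by
        intro M
        have h1 : ∑ n ∈ range M, ‖c (n+1) / X (n+1) - c n / X n‖ ^ 2 ≤
            ∑ n ∈ range M, (2 * K1 ^ 2 * ‖a n‖ ^ 2 +
              2 * K2 ^ 2 * ((∑ k ∈ range n, ‖a k‖) / (n:ℝ)) ^ 2) :=
          Finset.sum_le_sum fun n _ => hsq n
        have h2 : ∑ n ∈ range M, ((∑ k ∈ range n, ‖a k‖) / (n:ℝ)) ^ 2 ≤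
            4 * ∑ n ∈ range M, ‖a n‖ ^ 2 :=
          hardy_fin (fun k => ‖a k‖) (fun k => norm_nonneg _) M
        have h3 : ∑ n ∈ range M, ‖a n‖ ^ 2 ≤ T := by
          apply Summable.sum_le_tsum (range M) (fun n _ => sq_nonneg _)
          exact hcsum
        rw [Finset.sum_add_distrib, ← Finset.mul_sum, ← Finset.mul_sum] at h1
        rw [hBdef]
        nlinarith [h1, h2, h3, hK2nn, sq_nonneg K2,
          Finset.sum_nonneg (fun n (_ : n ∈ range M) => sq_nonneg ((∑ k ∈ range n, ‖a k‖) / (n:ℝ)))]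
      have hsummable : Summable (fun n => ‖c (n+1) / X (n+1) - c n / X n‖ ^ 2) :=
        summable_of_sum_range_le (fun n => sq_nonneg _) hpartial
      exact ⟨hsummable, Summable.tsum_le_of_sum_range_le hsummable hpartial⟩
    -- conclusions
    constructor
    · intro c hc
      have hc0 : c 0 = 0 := hc.1
      have hcore := core c hc
      have hd0 : c 0 / X 0 = 0 := by rw [hc0, zero_div]
      have hdInSp : InSp (fun n => c n / X n) := ⟨hd0, hcore.1⟩
      -- f * d identity
      have hfd : ∀ n : ℕ, (f n : ℂ) * (c n / X n) =
          (-Complex.I) * c n + (-(Complex.I * lam)) * (c n / X n) := by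
        intro n
        rcases Nat.eq_zero_or_pos n with hn0 | hn1
        · subst hn0; rw [hc0]; simp
        · have hXn := hXne n hn1
          have hd : (Complex.I * (f n : ℂ) - lam) * (c n / X n) = c n := by
            have := mul_div_cancel₀ (c n) hXn
            rw [hXdef] at this
            exact this
          linear_combination (-Complex.I) * hd + ((f n : ℂ) * (c n / X n)) * Complex.I_sq
      have hfdInSp : InSp (fun n => (f n : ℂ) * (c n / X n)) := by
        constructor
        · simp only
          rw [hd0, mul_zero]
        · simp only [hfd]
          have hsum2 : Summable (fun n =>
              2 * ‖c (n+1) - c n‖ ^ 2 + 2 * ‖lam‖ ^ 2 * ‖c (n+1) / X (n+1) - c n / X n‖ ^ 2) :=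
            Summable.add (hc.2.mul_left 2) (hcore.1.mul_left (2 * ‖lam‖ ^ 2))
          apply Summable.of_nonneg_of_le (fun n => sq_nonneg _) _ hsum2
          intro n
          have hle : ‖(-Complex.I) * c (n+1) + (-(Complex.I * lam)) * (c (n+1) / X (n+1)) -
              ((-Complex.I) * c n + (-(Complex.I * lam)) * (c n / X n))‖ ≤
              ‖c (n+1) - c n‖ + ‖lam‖ * ‖c (n+1) / X (n+1) - c n / X n‖ := by
            have heq2 : (-Complex.I) * c (n+1) + (-(Complex.I * lam)) * (c (n+1) / X (n+1)) -
                ((-Complex.I) * c n + (-(Complex.I * lam)) * (c n / X n)) =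
                (-Complex.I) * (c (n+1) - c n) +
                (-(Complex.I * lam)) * (c (n+1) / X (n+1) - c n / X n) := by ring
            rw [heq2]
            have hh5 := norm_add_le ((-Complex.I) * (c (n+1) - c n))
              ((-(Complex.I * lam)) * (c (n+1) / X (n+1) - c n / X n))
            rw [norm_mul, norm_mul, norm_neg, norm_neg, Complex.norm_I, one_mul,
              norm_mul, Complex.norm_I, one_mul] at hh5
            exact hh5
          have h2 : (0:ℝ) ≤ ‖c (n+1) - c n‖ := norm_nonneg _
          have h3 : (0:ℝ) ≤ ‖lam‖ * ‖c (n+1) / X (n+1) - c n / X n‖ := by positivity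
          nlinarith [norm_nonneg ((-Complex.I) * c (n+1) + (-(Complex.I * lam)) * (c (n+1) / X (n+1)) -
              ((-Complex.I) * c n + (-(Complex.I * lam)) * (c n / X n))),
            sq_nonneg (‖c (n+1) - c n‖ - ‖lam‖ * ‖c (n+1) / X (n+1) - c n / X n‖)]
      refine ⟨⟨hdInSp, hfdInSp⟩, ?_, ?_⟩
      · funext n
        rcases Nat.eq_zero_or_pos n with hn0 | hn1
        · subst hn0; rw [hc0]; simp
        · exact mul_div_cancel₀ (c n) (hXne n hn1)
      · intro d hd heq
        funext n
        rcases Nat.eq_zero_or_pos n with hn0 | hn1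
        · subst hn0
          rw [hd.1.1, hc0, zero_div]
        · have h2 := congrFun heq n
          rw [eq_div_iff (hXne n hn1), mul_comm]
          exact h2
    · refine ⟨Real.sqrt B, ?_⟩
      intro c hc
      have hcore := core c hc
      rw [dN, dN]
      have hh6 : Real.sqrt (∑' n : ℕ, ‖c (n+1) / X (n+1) - c n / X n‖ ^ 2)
          ≤ Real.sqrt (B * ∑' n : ℕ, ‖c (n+1) - c n‖ ^ 2) :=
        Real.sqrt_le_sqrt hcore.2
      have hh7 : Real.sqrt (B * ∑' n : ℕ, ‖c (n+1) - c n‖ ^ 2)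
          = Real.sqrt B * Real.sqrt (∑' n : ℕ, ‖c (n+1) - c n‖ ^ 2) := Real.sqrt_mul hBnn _
      rw [hh7] at hh6
      exact hh6
end

section
/- With f ∈ S_1 as above, for every t ∈ ℝ the diagonal operator T(t) on ℓ₂(Δ) given by (T(t)c)_n = e^{i t f(n)} c_n is a bounded operator, T(t+s) = T(t)T(s), T(0) = I, and t ↦ T(t)c is continuous for each c; moreover there is a degree-1 polynomial p with positive coefficients such that ‖T(t)‖ ≤ p(|t|) for all t ∈ ℝ. -/
open Filter Topology

/-- The multiplication operators `(T(t)c)_n = e^{itf(n)} c_n`. -/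
noncomputable def Tmap (f : ℕ → ℝ) (t : ℝ) (c : ℕ → ℂ) : ℕ → ℂ :=
  fun n => Complex.exp (Complex.I * (t : ℂ) * (f n : ℂ)) * c n

namespace Stmt11Aux

open Finset

lemma norm_exp_I_mulx (θ : ℝ) : ‖Complex.exp (Complex.I * θ)‖ = 1 := by
  rw [mul_comm, Complex.norm_exp_ofReal_mul_I]

lemma norm_exp_I_mul_sub_onex (θ : ℝ) : ‖Complex.exp (Complex.I * θ) - 1‖ ≤ |θ| := by
  have h1 : Complex.exp (Complex.I * θ) - 1
      = ((Real.cos θ - 1 : ℝ) : ℂ) + (Real.sin θ : ℝ) * Complex.I := by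
    rw [mul_comm, Complex.exp_mul_I, ← Complex.ofReal_cos, ← Complex.ofReal_sin]
    push_cast; ring
  have h2 : ‖((Real.cos θ - 1 : ℝ) : ℂ) + (Real.sin θ : ℝ) * Complex.I‖ ^ 2
      = (Real.cos θ - 1) ^ 2 + Real.sin θ ^ 2 := by
    rw [Complex.sq_norm, Complex.normSq_add_mul_I]
  have key : (Real.cos θ - 1) ^ 2 + Real.sin θ ^ 2 ≤ |θ| ^ 2 := by
    have h3 := Real.abs_sin_half θ
    have h4 : Real.sin (θ / 2) ^ 2 = (1 - Real.cos θ) / 2 := by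
      rw [← sq_abs, h3, Real.sq_sqrt]; nlinarith [Real.cos_le_one θ]
    have h5 : |Real.sin (θ / 2)| ≤ |θ / 2| := Real.abs_sin_le_abs
    have h6 : Real.sin (θ / 2) ^ 2 ≤ (θ / 2) ^ 2 := by
      rw [← sq_abs (Real.sin _), ← sq_abs (θ / 2)]
      exact pow_le_pow_left₀ (abs_nonneg _) h5 2
    have h7 := Real.sin_sq_add_cos_sq θ
    rw [sq_abs]; nlinarith
  rw [h1]
  calc ‖_ + _‖ = Real.sqrt (‖((Real.cos θ - 1 : ℝ) : ℂ) + (Real.sin θ : ℝ) * Complex.I‖ ^ 2) :=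
        (Real.sqrt_sq (norm_nonneg _)).symm
    _ ≤ Real.sqrt (|θ| ^ 2) := Real.sqrt_le_sqrt (by rw [h2]; exact key)
    _ = |θ| := Real.sqrt_sq (abs_nonneg _)

lemma norm_exp_I_subx (a b : ℝ) :
    ‖Complex.exp (Complex.I * a) - Complex.exp (Complex.I * b)‖ ≤ |a - b| := by
  have key : Complex.exp (Complex.I * a) - Complex.exp (Complex.I * b)
      = Complex.exp (Complex.I * b) * (Complex.exp (Complex.I * ((a - b : ℝ) : ℂ)) - 1) := by
    rw [mul_sub, ← Complex.exp_add, mul_one]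
    congr 2
    push_cast; ring
  rw [key, norm_mul, norm_exp_I_mulx, one_mul]
  exact norm_exp_I_mul_sub_onex (a - b)

lemma sqrt_add_lex (a b : ℝ) (ha : 0 ≤ a) (hb : 0 ≤ b) :
    Real.sqrt (a + b) ≤ Real.sqrt a + Real.sqrt b := by
  have h : a + b ≤ (Real.sqrt a + Real.sqrt b) ^ 2 := by
    nlinarith [Real.sq_sqrt ha, Real.sq_sqrt hb, Real.sqrt_nonneg a, Real.sqrt_nonneg b,
      mul_nonneg (Real.sqrt_nonneg a) (Real.sqrt_nonneg b)]
  calc Real.sqrt (a + b) ≤ Real.sqrt ((Real.sqrt a + Real.sqrt b) ^ 2) := Real.sqrt_le_sqrt h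
    _ = _ := Real.sqrt_sq (by positivity)

lemma telescopex (c : ℕ → ℂ) (h0 : c 0 = 0) (n : ℕ) :
    ‖c n‖ ≤ ∑ k ∈ range n, ‖c (k + 1) - c k‖ := by
  induction n with
  | zero => simp [h0]
  | succ n ih =>
    rw [sum_range_succ]
    calc ‖c (n + 1)‖ = ‖c n + (c (n + 1) - c n)‖ := by ring_nf
      _ ≤ ‖c n‖ + ‖c (n + 1) - c n‖ := norm_add_le _ _
      _ ≤ _ := by linarith

lemma sum_inv_sqrtx (n : ℕ) :
    ∑ k ∈ range n, 1 / Real.sqrt (k + 1) ≤ 2 * Real.sqrt n := by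
  induction n with
  | zero => simp
  | succ n ih =>
    rw [sum_range_succ]
    have hu : Real.sqrt n ^ 2 = n := Real.sq_sqrt (by positivity)
    have hv : Real.sqrt (n + 1 : ℕ) ^ 2 = (n + 1 : ℕ) := Real.sq_sqrt (by positivity)
    have hv' : (0:ℝ) < Real.sqrt ((n:ℕ) + 1) := Real.sqrt_pos.mpr (by positivity)
    have hstep : 1 / Real.sqrt ((n:ℝ) + 1) ≤ 2 * Real.sqrt ((n:ℕ) + 1) - 2 * Real.sqrt n := by
      rw [div_le_iff₀ (by push_cast at hv' ⊢; exact hv')]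
      push_cast at hv ⊢
      nlinarith [Real.sqrt_nonneg (n:ℝ), sq_nonneg (Real.sqrt ((n:ℝ) + 1) - Real.sqrt n)]
    push_cast at ih ⊢
    linarith

lemma tail_sumx (k N : ℕ) :
    ∑ n ∈ Ico (k + 1) N, Real.sqrt n / ((n : ℝ) + 1) ^ 2 ≤ 2 / Real.sqrt ((k : ℝ) + 1) := by
  rcases le_or_gt (k + 1) N with hN | hN
  · have hterm : ∀ n ∈ Ico (k + 1) N,
        Real.sqrt n / ((n : ℝ) + 1) ^ 2 ≤ 2 / Real.sqrt n - 2 / Real.sqrt ((n : ℝ) + 1) := by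
      intro n hn
      have hn1 : 1 ≤ n := le_trans (Nat.succ_le_succ (Nat.zero_le k)) (mem_Ico.mp hn).1
      set u := Real.sqrt n with hu_def
      set v := Real.sqrt ((n : ℝ) + 1) with hv_def
      have hu : (0:ℝ) < u :=
        Real.sqrt_pos.mpr (by exact_mod_cast Nat.lt_of_lt_of_le Nat.zero_lt_one hn1)
      have hv : (0:ℝ) < v := Real.sqrt_pos.mpr (by positivity)
      have hu2 : u ^ 2 = (n : ℝ) := Real.sq_sqrt (by positivity)
      have hv2 : v ^ 2 = (n : ℝ) + 1 := Real.sq_sqrt (by positivity)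
      have huv : u ≤ v := Real.sqrt_le_sqrt (by linarith)
      have hvsq : ((n : ℝ) + 1) ^ 2 = (v ^ 2) ^ 2 := by rw [hv2]
      rw [hvsq, div_sub_div _ _ (ne_of_gt hu) (ne_of_gt hv),
        div_le_div_iff₀ (by positivity) (by positivity)]
      have h1 : (v - u) * (v + u) = 1 := by nlinarith
      nlinarith [mul_pos hu hv, mul_pos (mul_pos hu hv) hv, sq_nonneg (v - u),
        mul_nonneg (mul_nonneg hu.le hu.le) hv.le, pow_pos hv 4, pow_pos hv 3]
    have htel : ∑ n ∈ Ico (k + 1) N, (2 / Real.sqrt n - 2 / Real.sqrt ((n : ℝ) + 1))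
        = 2 / Real.sqrt ((k : ℝ) + 1) - 2 / Real.sqrt (N : ℝ) := by
      have hcast : ∀ m : ℕ, (2 / Real.sqrt m - 2 / Real.sqrt ((m : ℝ) + 1))
          = (fun i : ℕ => 2 / Real.sqrt (i : ℝ)) m
            - (fun i : ℕ => 2 / Real.sqrt (i : ℝ)) (m + 1) := by
        intro m; push_cast; ring_nf
      calc ∑ n ∈ Ico (k + 1) N, (2 / Real.sqrt n - 2 / Real.sqrt ((n : ℝ) + 1))
          = ∑ n ∈ Ico (k + 1) N, ((fun i : ℕ => 2 / Real.sqrt (i : ℝ)) n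
              - (fun i : ℕ => 2 / Real.sqrt (i : ℝ)) (n + 1)) :=
            sum_congr rfl fun n _ => hcast n
        _ = _ := by
            rw [sum_Ico_eq_sub _ hN, sum_range_sub', sum_range_sub']
            push_cast; ring
    calc ∑ n ∈ Ico (k + 1) N, Real.sqrt n / ((n : ℝ) + 1) ^ 2
        ≤ ∑ n ∈ Ico (k + 1) N, (2 / Real.sqrt n - 2 / Real.sqrt ((n : ℝ) + 1)) :=
          sum_le_sum hterm
      _ = 2 / Real.sqrt ((k : ℝ) + 1) - 2 / Real.sqrt (N : ℝ) := htel
      _ ≤ 2 / Real.sqrt ((k : ℝ) + 1) := by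
          have : 0 ≤ 2 / Real.sqrt (N : ℝ) := by positivity
          linarith
  · rw [Finset.Ico_eq_empty (by omega)]
    simp only [Finset.sum_empty]
    positivity

lemma sum_swapx (N : ℕ) (F : ℕ → ℕ → ℝ) :
    ∑ n ∈ range N, ∑ k ∈ range n, F n k = ∑ k ∈ range N, ∑ n ∈ Ico (k + 1) N, F n k := by
  induction N with
  | zero => simp
  | succ N ih =>
    rw [sum_range_succ, ih, sum_range_succ, Finset.Ico_self, Finset.sum_empty, add_zero]
    have h : ∀ k ∈ range N, ∑ n ∈ Ico (k + 1) (N + 1), F n k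
        = ∑ n ∈ Ico (k + 1) N, F n k + F N k := fun k hk =>
      Finset.sum_Ico_succ_top (Nat.succ_le_of_lt (mem_range.mp hk)) _
    rw [sum_congr rfl h, sum_add_distrib]

lemma hardyx (c : ℕ → ℂ) (h0 : c 0 = 0) (hd : Summable fun n => ‖c (n + 1) - c n‖ ^ 2) :
    Summable (fun n => (‖c n‖ / ((n : ℝ) + 1)) ^ 2) ∧
      ∑' n : ℕ, (‖c n‖ / ((n : ℝ) + 1)) ^ 2 ≤ 4 * ∑' n : ℕ, ‖c (n + 1) - c n‖ ^ 2 := by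
  set d : ℕ → ℝ := fun n => ‖c (n + 1) - c n‖ with hd_def
  set S : ℝ := ∑' n : ℕ, d n ^ 2 with hS_def
  have hSnn : 0 ≤ S := tsum_nonneg fun n => sq_nonneg _
  have key : ∀ N : ℕ, ∑ n ∈ range N, (‖c n‖ / ((n : ℝ) + 1)) ^ 2 ≤ 4 * S := by
    intro N
    have step1 : ∀ n : ℕ, (‖c n‖ / ((n : ℝ) + 1)) ^ 2
        ≤ 2 * Real.sqrt n / ((n : ℝ) + 1) ^ 2
          * ∑ k ∈ range n, Real.sqrt ((k : ℝ) + 1) * d k ^ 2 := by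
      intro n
      have hA : ‖c n‖ ≤ ∑ k ∈ range n, d k := telescopex c h0 n
      have hCS : (∑ k ∈ range n, d k) ^ 2
          ≤ (∑ k ∈ range n, 1 / Real.sqrt ((k : ℝ) + 1))
            * ∑ k ∈ range n, Real.sqrt ((k : ℝ) + 1) * d k ^ 2 := by
        have heq : ∀ k : ℕ, d k = Real.sqrt (1 / Real.sqrt ((k : ℝ) + 1))
            * (Real.sqrt (Real.sqrt ((k : ℝ) + 1)) * d k) := by
          intro k
          have hpos : (0:ℝ) < Real.sqrt ((k : ℝ) + 1) := Real.sqrt_pos.mpr (by positivity)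
          rw [← mul_assoc, ← Real.sqrt_mul (by positivity), one_div,
            inv_mul_cancel₀ (ne_of_gt hpos), Real.sqrt_one, one_mul]
        calc (∑ k ∈ range n, d k) ^ 2
            = (∑ k ∈ range n, Real.sqrt (1 / Real.sqrt ((k : ℝ) + 1))
                * (Real.sqrt (Real.sqrt ((k : ℝ) + 1)) * d k)) ^ 2 := by
              rw [sum_congr rfl fun k _ => heq k]
          _ ≤ (∑ k ∈ range n, Real.sqrt (1 / Real.sqrt ((k : ℝ) + 1)) ^ 2)
                * ∑ k ∈ range n, (Real.sqrt (Real.sqrt ((k : ℝ) + 1)) * d k) ^ 2 :=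
              sum_mul_sq_le_sq_mul_sq _ _ _
          _ = _ := by
              congr 1
              · exact sum_congr rfl fun k _ => Real.sq_sqrt (by positivity)
              · refine sum_congr rfl fun k _ => ?_
                rw [mul_pow, Real.sq_sqrt (Real.sqrt_nonneg _)]
      have hw : ∑ k ∈ range n, Real.sqrt ((k : ℝ) + 1) * d k ^ 2 ≥ 0 :=
        sum_nonneg fun k _ => mul_nonneg (Real.sqrt_nonneg _) (sq_nonneg _)
      have hB : (∑ k ∈ range n, d k) ^ 2
          ≤ 2 * Real.sqrt n * ∑ k ∈ range n, Real.sqrt ((k : ℝ) + 1) * d k ^ 2 := by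
        calc (∑ k ∈ range n, d k) ^ 2 ≤ _ := hCS
          _ ≤ 2 * Real.sqrt n * ∑ k ∈ range n, Real.sqrt ((k : ℝ) + 1) * d k ^ 2 := by
              apply mul_le_mul_of_nonneg_right _ hw
              exact_mod_cast sum_inv_sqrtx n
      have hcn : (‖c n‖ / ((n : ℝ) + 1)) ^ 2
          ≤ (∑ k ∈ range n, d k) ^ 2 / ((n : ℝ) + 1) ^ 2 := by
        rw [div_pow]
        apply div_le_div_of_nonneg_right _ (by positivity)
        · exact pow_le_pow_left₀ (norm_nonneg _) hA 2
      calc (‖c n‖ / ((n : ℝ) + 1)) ^ 2 ≤ (∑ k ∈ range n, d k) ^ 2 / ((n : ℝ) + 1) ^ 2 := hcn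
        _ ≤ 2 * Real.sqrt n * (∑ k ∈ range n, Real.sqrt ((k : ℝ) + 1) * d k ^ 2)
              / ((n : ℝ) + 1) ^ 2 := div_le_div_of_nonneg_right hB (by positivity)
        _ = 2 * Real.sqrt n / ((n : ℝ) + 1) ^ 2
              * ∑ k ∈ range n, Real.sqrt ((k : ℝ) + 1) * d k ^ 2 := by ring
    calc ∑ n ∈ range N, (‖c n‖ / ((n : ℝ) + 1)) ^ 2
        ≤ ∑ n ∈ range N, 2 * Real.sqrt n / ((n : ℝ) + 1) ^ 2
            * ∑ k ∈ range n, Real.sqrt ((k : ℝ) + 1) * d k ^ 2 :=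
          sum_le_sum fun n _ => step1 n
      _ = ∑ n ∈ range N, ∑ k ∈ range n,
            2 * Real.sqrt n / ((n : ℝ) + 1) ^ 2 * (Real.sqrt ((k : ℝ) + 1) * d k ^ 2) :=
          sum_congr rfl fun n _ => mul_sum _ _ _
      _ = ∑ k ∈ range N, ∑ n ∈ Ico (k + 1) N,
            2 * Real.sqrt n / ((n : ℝ) + 1) ^ 2 * (Real.sqrt ((k : ℝ) + 1) * d k ^ 2) :=
          sum_swapx N _
      _ = ∑ k ∈ range N, Real.sqrt ((k : ℝ) + 1) * d k ^ 2
            * ∑ n ∈ Ico (k + 1) N, 2 * (Real.sqrt n / ((n : ℝ) + 1) ^ 2) := by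
          refine sum_congr rfl fun k _ => ?_
          rw [mul_sum]
          exact sum_congr rfl fun n _ => by ring
      _ ≤ ∑ k ∈ range N, Real.sqrt ((k : ℝ) + 1) * d k ^ 2 * (4 / Real.sqrt ((k : ℝ) + 1)) := by
          refine sum_le_sum fun k _ => ?_
          refine mul_le_mul_of_nonneg_left ?_
            (mul_nonneg (Real.sqrt_nonneg _) (sq_nonneg _))
          rw [← mul_sum]
          have := tail_sumx k N
          rw [show (4:ℝ) / Real.sqrt ((k:ℝ) + 1) = 2 * (2 / Real.sqrt ((k:ℝ) + 1)) by ring]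
          linarith
      _ = ∑ k ∈ range N, 4 * d k ^ 2 := by
          refine sum_congr rfl fun k _ => ?_
          have hpos : (0:ℝ) < Real.sqrt ((k : ℝ) + 1) := Real.sqrt_pos.mpr (by positivity)
          field_simp
      _ = 4 * ∑ k ∈ range N, d k ^ 2 := (mul_sum _ _ _).symm
      _ ≤ 4 * S :=
          mul_le_mul_of_nonneg_left
            (hd.sum_le_tsum (range N) (fun i _ => sq_nonneg _)) (by norm_num)
  have hsumm : Summable (fun n => (‖c n‖ / ((n : ℝ) + 1)) ^ 2) :=
    summable_of_sum_range_le (fun n => sq_nonneg _) key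
  exact ⟨hsumm, hsumm.tsum_le_of_sum_range_le key⟩

lemma norm_exp_diffx (t x y : ℝ) :
    ‖Complex.exp (Complex.I * (t : ℂ) * (x : ℂ)) - Complex.exp (Complex.I * (t : ℂ) * (y : ℂ))‖
      ≤ |t| * |x - y| := by
  rw [show Complex.I * (t : ℂ) * (x : ℂ) = Complex.I * ((t * x : ℝ) : ℂ) by push_cast; ring,
    show Complex.I * (t : ℂ) * (y : ℂ) = Complex.I * ((t * y : ℝ) : ℂ) by push_cast; ring]
  calc _ ≤ |t * x - t * y| := norm_exp_I_subx (t * x) (t * y)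
    _ = |t| * |x - y| := by rw [← mul_sub, abs_mul]

lemma norm_exp_Itfx (t x : ℝ) : ‖Complex.exp (Complex.I * (t : ℂ) * (x : ℂ))‖ = 1 := by
  rw [show Complex.I * (t : ℂ) * (x : ℂ) = Complex.I * ((t * x : ℝ) : ℂ) by push_cast; ring]
  exact norm_exp_I_mulx _

lemma exp_pair_boundx (f : ℕ → ℝ) (C : ℝ)
    (hC : ∀ n : ℕ, 2 ≤ n → (n : ℝ) * |f n - f (n - 1)| ≤ C)
    (t : ℝ) (c : ℕ → ℂ) (h0 : c 0 = 0) (n : ℕ) :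
    ‖(Complex.exp (Complex.I * (t : ℂ) * (f (n + 1) : ℂ))
        - Complex.exp (Complex.I * (t : ℂ) * (f n : ℂ))) * c n‖
      ≤ |t| * C * (‖c n‖ / ((n : ℝ) + 1)) := by
  rcases Nat.eq_zero_or_pos n with rfl | hn
  · simp [h0]
  · have hf : |f (n + 1) - f n| ≤ C / ((n : ℝ) + 1) := by
      have h := hC (n + 1) (by omega)
      rw [Nat.add_sub_cancel] at h
      rw [le_div_iff₀ (by positivity)]
      push_cast at h
      linarith
    calc ‖(Complex.exp (Complex.I * (t : ℂ) * (f (n + 1) : ℂ))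
          - Complex.exp (Complex.I * (t : ℂ) * (f n : ℂ))) * c n‖
        = ‖Complex.exp (Complex.I * (t : ℂ) * (f (n + 1) : ℂ))
            - Complex.exp (Complex.I * (t : ℂ) * (f n : ℂ))‖ * ‖c n‖ := norm_mul _ _
      _ ≤ |t| * |f (n + 1) - f n| * ‖c n‖ :=
          mul_le_mul_of_nonneg_right (norm_exp_diffx t _ _) (norm_nonneg _)
      _ ≤ |t| * (C / ((n : ℝ) + 1)) * ‖c n‖ :=
          mul_le_mul_of_nonneg_right
            (mul_le_mul_of_nonneg_left hf (abs_nonneg t)) (norm_nonneg _)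
      _ = |t| * C * (‖c n‖ / ((n : ℝ) + 1)) := by ring

lemma delta_decompx (f : ℕ → ℝ) (t : ℝ) (c : ℕ → ℂ) (n : ℕ) :
    Tmap f t c (n + 1) - Tmap f t c n
      = Complex.exp (Complex.I * (t : ℂ) * (f (n + 1) : ℂ)) * (c (n + 1) - c n)
        + (Complex.exp (Complex.I * (t : ℂ) * (f (n + 1) : ℂ))
            - Complex.exp (Complex.I * (t : ℂ) * (f n : ℂ))) * c n := by
  simp only [Tmap]
  ring

lemma delta_boundx (f : ℕ → ℝ) (C : ℝ)
    (hC : ∀ n : ℕ, 2 ≤ n → (n : ℝ) * |f n - f (n - 1)| ≤ C)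
    (t : ℝ) (c : ℕ → ℂ) (h0 : c 0 = 0) (n : ℕ) :
    ‖Tmap f t c (n + 1) - Tmap f t c n‖
      ≤ ‖c (n + 1) - c n‖ + |t| * C * (‖c n‖ / ((n : ℝ) + 1)) := by
  rw [delta_decompx]
  calc _ ≤ ‖Complex.exp (Complex.I * (t : ℂ) * (f (n + 1) : ℂ)) * (c (n + 1) - c n)‖
        + ‖(Complex.exp (Complex.I * (t : ℂ) * (f (n + 1) : ℂ))
            - Complex.exp (Complex.I * (t : ℂ) * (f n : ℂ))) * c n‖ := norm_add_le _ _
    _ ≤ ‖c (n + 1) - c n‖ + |t| * C * (‖c n‖ / ((n : ℝ) + 1)) := by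
        gcongr
        · rw [norm_mul, norm_exp_Itfx, one_mul]
        · exact exp_pair_boundx f C hC t c h0 n

end Stmt11Aux

open Stmt11Aux

/-- For `f ∈ S₁`, the operators `T(t)` form a `C₀`-group on `ℓ₂(Δ)`: each `T(t)` maps
the space into itself and is bounded by a degree-1 polynomial `a + b|t|` with positive
coefficients, `T(t+s) = T(t)T(s)`, `T(0) = I`, and `t ↦ T(t)c` is continuous. -/
theorem stmt11 (f : ℕ → ℝ) (C : ℝ) (hf : Tendsto f atTop atTop)
    (hC : ∀ n : ℕ, 2 ≤ n → (n : ℝ) * |f n - f (n - 1)| ≤ C) :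
    (∀ (t : ℝ) (c : ℕ → ℂ), InSp c → InSp (Tmap f t c)) ∧
    (∃ a b : ℝ, 0 < a ∧ 0 < b ∧ ∀ (t : ℝ) (c : ℕ → ℂ), InSp c →
      dN (Tmap f t c) ≤ (a + b * |t|) * dN c) ∧
    (∀ (t s : ℝ) (c : ℕ → ℂ), Tmap f (t + s) c = Tmap f t (Tmap f s c)) ∧
    (∀ c : ℕ → ℂ, Tmap f 0 c = c) ∧
    (∀ c : ℕ → ℂ, InSp c → ∀ t₀ : ℝ,
      Tendsto (fun t : ℝ => dN (Tmap f t c - Tmap f t₀ c)) (nhds t₀) (nhds 0)) := by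
  have hC0 : 0 ≤ C := le_trans (by positivity) (hC 2 le_rfl)
  -- main quantitative estimate
  have main : ∀ (t : ℝ) (c : ℕ → ℂ), InSp c →
      Summable (fun n => ‖Tmap f t c (n + 1) - Tmap f t c n‖ ^ 2) ∧
      ∑' n : ℕ, ‖Tmap f t c (n + 1) - Tmap f t c n‖ ^ 2
        ≤ 2 * (∑' n : ℕ, ‖c (n + 1) - c n‖ ^ 2)
          + 8 * C ^ 2 * t ^ 2 * (∑' n : ℕ, ‖c (n + 1) - c n‖ ^ 2) := by
    rintro t c ⟨h0, hd⟩
    obtain ⟨hq, hQ⟩ := hardyx c h0 hd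
    have hbnd : ∀ n : ℕ, ‖Tmap f t c (n + 1) - Tmap f t c n‖ ^ 2
        ≤ 2 * ‖c (n + 1) - c n‖ ^ 2 + 2 * (|t| * C) ^ 2 * (‖c n‖ / ((n : ℝ) + 1)) ^ 2 := by
      intro n
      have h1 := delta_boundx f C hC t c h0 n
      have h2 : (0:ℝ) ≤ ‖c (n + 1) - c n‖ := norm_nonneg _
      have h3 : (0:ℝ) ≤ |t| * C * (‖c n‖ / ((n : ℝ) + 1)) := by positivity
      have h4 : (0:ℝ) ≤ ‖Tmap f t c (n + 1) - Tmap f t c n‖ := norm_nonneg _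
      nlinarith [sq_nonneg (‖c (n + 1) - c n‖ - |t| * C * (‖c n‖ / ((n : ℝ) + 1)))]
    have hgsum : Summable (fun n : ℕ => 2 * ‖c (n + 1) - c n‖ ^ 2
        + 2 * (|t| * C) ^ 2 * (‖c n‖ / ((n : ℝ) + 1)) ^ 2) :=
      (hd.mul_left 2).add (hq.mul_left _)
    have hsum : Summable (fun n : ℕ => ‖Tmap f t c (n + 1) - Tmap f t c n‖ ^ 2) :=
      Summable.of_nonneg_of_le (fun n => sq_nonneg _) hbnd hgsum
    refine ⟨hsum, ?_⟩
    have habs : 2 * (|t| * C) ^ 2 = 2 * C ^ 2 * t ^ 2 := by rw [mul_pow, sq_abs]; ring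
    calc ∑' n : ℕ, ‖Tmap f t c (n + 1) - Tmap f t c n‖ ^ 2
        ≤ ∑' n : ℕ, (2 * ‖c (n + 1) - c n‖ ^ 2
            + 2 * (|t| * C) ^ 2 * (‖c n‖ / ((n : ℝ) + 1)) ^ 2) :=
          hsum.tsum_le_tsum hbnd hgsum
      _ = 2 * (∑' n : ℕ, ‖c (n + 1) - c n‖ ^ 2)
            + 2 * (|t| * C) ^ 2 * ∑' n : ℕ, (‖c n‖ / ((n : ℝ) + 1)) ^ 2 := by
          rw [(hd.mul_left 2).tsum_add (hq.mul_left _), tsum_mul_left, tsum_mul_left]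
      _ ≤ _ := by
          rw [habs]
          have h5 : 2 * C ^ 2 * t ^ 2 * ∑' n : ℕ, (‖c n‖ / ((n : ℝ) + 1)) ^ 2
              ≤ 2 * C ^ 2 * t ^ 2 * (4 * ∑' n : ℕ, ‖c (n + 1) - c n‖ ^ 2) :=
            mul_le_mul_of_nonneg_left hQ (by positivity)
          linarith
  refine ⟨?_, ?_, ?_, ?_, ?_⟩
  · -- invariance
    rintro t c hc
    exact ⟨by simp [Tmap, hc.1], (main t c hc).1⟩
  · -- polynomial bound
    refine ⟨2, 3 * C + 3, by norm_num, by linarith, ?_⟩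
    rintro t c hc
    obtain ⟨hsum, hle⟩ := main t c hc
    set S : ℝ := ∑' n : ℕ, ‖c (n + 1) - c n‖ ^ 2 with hS
    have hSnn : 0 ≤ S := tsum_nonneg fun n => sq_nonneg _
    have hsS : (0:ℝ) ≤ Real.sqrt S := Real.sqrt_nonneg S
    have e1 : Real.sqrt (2 * S) = Real.sqrt 2 * Real.sqrt S := Real.sqrt_mul (by norm_num) S
    have e2 : Real.sqrt (8 * C ^ 2 * t ^ 2 * S)
        = Real.sqrt (8 * C ^ 2 * t ^ 2) * Real.sqrt S := Real.sqrt_mul (by positivity) S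
    have l1 : Real.sqrt 2 ≤ 2 := by
      nlinarith [Real.sq_sqrt (by norm_num : (0:ℝ) ≤ 2), Real.sqrt_nonneg 2]
    have l2 : Real.sqrt (8 * C ^ 2 * t ^ 2) ≤ 3 * C * |t| := by
      have h8 : (8:ℝ) * C ^ 2 * t ^ 2 ≤ (3 * C * |t|) ^ 2 := by
        have := sq_abs t
        nlinarith [sq_nonneg (C * t)]
      calc Real.sqrt (8 * C ^ 2 * t ^ 2) ≤ Real.sqrt ((3 * C * |t|) ^ 2) :=
            Real.sqrt_le_sqrt h8
        _ = 3 * C * |t| := Real.sqrt_sq (by positivity)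
    have hdNc : dN c = Real.sqrt S := rfl
    calc dN (Tmap f t c) = Real.sqrt (∑' n : ℕ, ‖Tmap f t c (n + 1) - Tmap f t c n‖ ^ 2) := rfl
      _ ≤ Real.sqrt (2 * S + 8 * C ^ 2 * t ^ 2 * S) := Real.sqrt_le_sqrt hle
      _ ≤ Real.sqrt (2 * S) + Real.sqrt (8 * C ^ 2 * t ^ 2 * S) :=
          sqrt_add_lex _ _ (by positivity) (by positivity)
      _ ≤ 2 * Real.sqrt S + 3 * C * |t| * Real.sqrt S := by
          rw [e1, e2]
          have := mul_le_mul_of_nonneg_right l1 hsS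
          have := mul_le_mul_of_nonneg_right l2 hsS
          linarith
      _ ≤ (2 + (3 * C + 3) * |t|) * dN c := by
          rw [hdNc]
          nlinarith [abs_nonneg t, hsS]
  · -- group law
    intro t s c
    funext n
    simp only [Tmap, ← mul_assoc, ← Complex.exp_add]
    congr 2
    push_cast
    ring
  · -- identity
    intro c
    funext n
    simp [Tmap]
  · -- continuity
    rintro c ⟨h0, hd⟩ t₀
    obtain ⟨hq, hQ⟩ := hardyx c h0 hd
    set F : ℝ → ℕ → ℝ := fun t n =>
      ‖(Tmap f t c - Tmap f t₀ c) (n + 1) - (Tmap f t c - Tmap f t₀ c) n‖ ^ 2 with hF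
    set bound : ℕ → ℝ := fun n => 8 * ‖c (n + 1) - c n‖ ^ 2
      + 2 * ((2 * |t₀| + 1) * C) ^ 2 * (‖c n‖ / ((n : ℝ) + 1)) ^ 2 with hbound
    have hbsum : Summable bound := (hd.mul_left 8).add (hq.mul_left _)
    have hab : ∀ n : ℕ, Tendsto (fun t => F t n) (𝓝 t₀) (𝓝 0) := by
      intro n
      have hcont : Continuous fun t : ℝ => F t n := by
        simp only [hF, Pi.sub_apply, Tmap]
        fun_prop
      have h00 : F t₀ n = 0 := by simp [hF]
      exact hcont.tendsto' t₀ 0 h00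
    have hbd : ∀ᶠ t in 𝓝 t₀, ∀ n : ℕ, ‖F t n‖ ≤ bound n := by
      have hball : ∀ᶠ t : ℝ in 𝓝 t₀, |t - t₀| < 1 := by
        filter_upwards [Metric.ball_mem_nhds t₀ one_pos] with t ht
        simpa [Real.dist_eq] using ht
      filter_upwards [hball] with t ht n
      have habs : |t| ≤ |t₀| + 1 := by
        have h := abs_sub_abs_le_abs_sub t t₀
        linarith
      have hdec : (Tmap f t c - Tmap f t₀ c) (n + 1) - (Tmap f t c - Tmap f t₀ c) n
          = (Tmap f t c (n + 1) - Tmap f t c n) - (Tmap f t₀ c (n + 1) - Tmap f t₀ c n) := by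
        simp only [Pi.sub_apply]
        ring
      have hX : ‖(Tmap f t c - Tmap f t₀ c) (n + 1) - (Tmap f t c - Tmap f t₀ c) n‖
          ≤ 2 * ‖c (n + 1) - c n‖ + (2 * |t₀| + 1) * C * (‖c n‖ / ((n : ℝ) + 1)) := by
        rw [hdec, delta_decompx f t c n, delta_decompx f t₀ c n]
        have e1t := norm_exp_Itfx t (f (n + 1))
        have e1t0 := norm_exp_Itfx t₀ (f (n + 1))
        have p1 := exp_pair_boundx f C hC t c h0 n
        have p2 := exp_pair_boundx f C hC t₀ c h0 n
        have qnn : (0:ℝ) ≤ ‖c n‖ / ((n : ℝ) + 1) := by positivity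
        calc ‖_‖ ≤ ‖Complex.exp (Complex.I * (t : ℂ) * (f (n + 1) : ℂ)) * (c (n + 1) - c n)‖
              + ‖(Complex.exp (Complex.I * (t : ℂ) * (f (n + 1) : ℂ))
                  - Complex.exp (Complex.I * (t : ℂ) * (f n : ℂ))) * c n‖
              + (‖Complex.exp (Complex.I * (t₀ : ℂ) * (f (n + 1) : ℂ)) * (c (n + 1) - c n)‖
              + ‖(Complex.exp (Complex.I * (t₀ : ℂ) * (f (n + 1) : ℂ))
                  - Complex.exp (Complex.I * (t₀ : ℂ) * (f n : ℂ))) * c n‖) :=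
            le_trans (norm_sub_le _ _) (by gcongr <;> exact norm_add_le _ _)
          _ ≤ ‖c (n + 1) - c n‖ + |t| * C * (‖c n‖ / ((n : ℝ) + 1))
              + (‖c (n + 1) - c n‖ + |t₀| * C * (‖c n‖ / ((n : ℝ) + 1))) := by
            gcongr
            · rw [norm_mul, e1t, one_mul]
            · rw [norm_mul, e1t0, one_mul]
          _ ≤ _ := by
            have ht' : |t| * C * (‖c n‖ / ((n : ℝ) + 1)) + |t₀| * C * (‖c n‖ / ((n : ℝ) + 1))
                ≤ (2 * |t₀| + 1) * C * (‖c n‖ / ((n : ℝ) + 1)) := by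
              have : (|t| + |t₀|) * (C * (‖c n‖ / ((n : ℝ) + 1)))
                  ≤ (2 * |t₀| + 1) * (C * (‖c n‖ / ((n : ℝ) + 1))) := by
                apply mul_le_mul_of_nonneg_right _ (by positivity)
                linarith
              linarith [this]
            linarith
      rw [Real.norm_eq_abs, abs_of_nonneg (sq_nonneg _)]
      have hXnn : (0:ℝ) ≤ ‖(Tmap f t c - Tmap f t₀ c) (n + 1) - (Tmap f t c - Tmap f t₀ c) n‖ :=
        norm_nonneg _
      have dnn : (0:ℝ) ≤ ‖c (n + 1) - c n‖ := norm_nonneg _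
      have mnn : (0:ℝ) ≤ (2 * |t₀| + 1) * C * (‖c n‖ / ((n : ℝ) + 1)) := by positivity
      simp only [hF, hbound]
      nlinarith [sq_nonneg (2 * ‖c (n + 1) - c n‖
        - (2 * |t₀| + 1) * C * (‖c n‖ / ((n : ℝ) + 1)))]
    have htsum : Tendsto (fun t => ∑' n : ℕ, F t n) (𝓝 t₀) (𝓝 0) := by
      have h := tendsto_tsum_of_dominated_convergence (f := F) (g := fun _ : ℕ => (0:ℝ))
        (bound := bound) hbsum hab hbd
      simpa using h
    have hdN : (fun t : ℝ => dN (Tmap f t c - Tmap f t₀ c))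
        = fun t => Real.sqrt (∑' n : ℕ, F t n) := rfl
    rw [hdN]
    have hsq : Tendsto Real.sqrt (𝓝 0) (𝓝 0) := by
      simpa using Real.continuous_sqrt.tendsto 0
    exact hsq.comp htsum
end

section
/- Let x* ∈ ℓ₂(Δ) be the constant sequence x*_n = 1 for all n (which lies in ℓ₂(Δ) since Δx* = e_1 ∈ ℓ₂). For any decomposition of ℕ into disjoint nonempty sets (A_m)_{m≥1} and any m, the element Σ_{j∈A_m} e_j (interpreted as the indicator sequence of A_m) has ℓ₂(Δ)-norm at least 1. Consequently P_m x* does not tend to 0 in norm, where P_m x* is the indicator sequence of A_m. -/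
open Filter Topology ENNReal NNReal

/-- The indicator sequence of a set `A ⊆ ℕ`. -/
noncomputable def ind (A : Set ℕ) : ℕ → ℂ := A.indicator fun _ => 1

/-- The squared `ℓ₂(Δ)` norm (in `ℝ≥0∞`, so that it equals `∞` when the difference
sequence is not square-summable). -/
noncomputable def sqNorm (c : ℕ → ℂ) : ℝ≥0∞ :=
  ∑' n : ℕ, (‖c (n + 1) - c n‖₊ : ℝ≥0∞) ^ 2

lemma aux2 : ∀ A : Set ℕ, A.Nonempty → 0 ∉ A → 1 ≤ sqNorm (ind A) := by
  intro A hne h0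
  have hex : ∃ n, n ∈ A := hne
  classical
  have haA : Nat.find hex ∈ A := Nat.find_spec hex
  have hapos : Nat.find hex ≠ 0 := fun h => h0 (h ▸ haA)
  obtain ⟨n, hn⟩ := Nat.exists_eq_succ_of_ne_zero hapos
  rw [hn] at haA
  have hnA : n ∉ A := Nat.find_min hex (by omega)
  have hterm : (‖ind A (n + 1) - ind A n‖₊ : ℝ≥0∞) ^ 2 = 1 := by
    have h1 : ind A (n + 1) = 1 := Set.indicator_of_mem haA _
    have h2 : ind A n = 0 := Set.indicator_of_notMem hnA _
    simp [h1, h2]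
  calc (1 : ℝ≥0∞) = (‖ind A (n + 1) - ind A n‖₊ : ℝ≥0∞) ^ 2 := hterm.symm
    _ ≤ sqNorm (ind A) := ENNReal.le_tsum n

/-- The constant sequence `x* = (1,1,1,…)` lies in `ℓ₂(Δ)`; the indicator sequence of
any nonempty `A ⊆ {n ≥ 1}` has `ℓ₂(Δ)`-norm at least `1`; consequently, for any
decomposition of `{n ≥ 1}` into disjoint nonempty sets `(A_m)`, the projections
`P_m x*` (the indicator sequences of `A_m`) do not tend to `0` in norm. -/
theorem stmt13 :
    (Summable fun n : ℕ => ‖ind {m : ℕ | 1 ≤ m} (n + 1) - ind {m : ℕ | 1 ≤ m} n‖ ^ 2) ∧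
    (∀ A : Set ℕ, A.Nonempty → 0 ∉ A → 1 ≤ sqNorm (ind A)) ∧
    (∀ A : ℕ → Set ℕ, (∀ m, (A m).Nonempty) → Pairwise (Function.onFun Disjoint A) →
      (⋃ m, A m) = {n : ℕ | 1 ≤ n} →
      ¬ Tendsto (fun m => sqNorm (ind (A m))) atTop (nhds 0)) := by
  refine ⟨?_, aux2, ?_⟩
  · apply summable_of_ne_finset_zero (s := {0})
    intro n hn
    simp only [Finset.mem_singleton] at hn
    have h1 : ind {m : ℕ | 1 ≤ m} (n + 1) = 1 := Set.indicator_of_mem (by simp) _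
    have h2 : ind {m : ℕ | 1 ≤ m} n = 1 := Set.indicator_of_mem (by simpa using Nat.one_le_iff_ne_zero.mpr hn) _
    simp [h1, h2]
  · intro A hne _ hU h
    have h0 : ∀ m, 0 ∉ A m := by
      intro m hm
      have : (0 : ℕ) ∈ ⋃ m, A m := Set.mem_iUnion.mpr ⟨m, hm⟩
      rw [hU] at this
      simp at this
    have hev : ∀ᶠ m in atTop, sqNorm (ind (A m)) < 1 :=
      h.eventually_lt_const (by norm_num)
    obtain ⟨m, hm⟩ := hev.exists
    exact absurd (aux2 (A m) (hne m) (h0 m)) (not_le.mpr hm)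
end

section
/- If A generates a C₀-group (T(t))_{t∈ℝ} on a Banach space with ‖T(t)‖ ≤ p(|t|) for a polynomial p of degree k with positive coefficients, then for every a > 0 there is C > 0 such that ‖(A − λI)^{-1}‖ ≤ C/|Re λ|^{k+1} for 0 < |Re λ| < a, and ‖(A − λI)^{-1}‖ ≤ C for |Re λ| ≥ a. -/
open Filter Topology

section Aux
open Filter Topology MeasureTheory Set

lemma int_monomial {r : ℝ} (hr : 0 < r) (j : ℕ) :
    ∫ t in Set.Ioi (0:ℝ), t ^ j * Real.exp (-(r * t)) = j.factorial / r ^ (j + 1) := by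
  have h := Real.integral_rpow_mul_exp_neg_mul_Ioi (a := (j:ℝ)+1) (by positivity) hr
  rw [show ((j:ℝ)+1) - 1 = (j:ℝ) by ring] at h
  simp_rw [Real.rpow_natCast] at h
  rw [show ((j:ℝ)+1) = ((j+1 : ℕ) : ℝ) by push_cast; ring, Real.rpow_natCast,
    show ((j+1:ℕ):ℝ) = (j:ℝ)+1 by push_cast; ring, Real.Gamma_nat_eq_factorial] at h
  rw [h, one_div, inv_pow, inv_mul_eq_div]

lemma integ_monomial {r : ℝ} (hr : 0 < r) (j : ℕ) :
    MeasureTheory.IntegrableOn (fun t : ℝ => t ^ j * Real.exp (-(r * t))) (Set.Ioi 0) := by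
  have h := integrableOn_rpow_mul_exp_neg_mul_rpow (s := (j:ℝ)) (p := 1)
    (by exact_mod_cast neg_one_lt_zero.trans_le (Nat.cast_nonneg (α:=ℝ) j)) one_pos hr
  simpa [Real.rpow_one, Real.rpow_natCast, neg_mul] using h

lemma key {X : Type*} [NormedAddCommGroup X] [NormedSpace ℂ X] [CompleteSpace X]
    (T : ℝ → X →L[ℂ] X) (hT0 : T 0 = 1)
    (hTadd : ∀ t s : ℝ, T (t + s) = (T t).comp (T s))
    (hcont : ∀ x : X, Continuous fun t : ℝ => T t x)
    (k : ℕ) (coef : ℕ → ℝ) (hcoef : ∀ j, j ≤ k → 0 ≤ coef j)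
    (hbound : ∀ t : ℝ, ‖T t‖ ≤ ∑ j ∈ Finset.range (k + 1), coef j * |t| ^ j)
    (lam : ℂ) (hr : 0 < lam.re) (R : X →L[ℂ] X)
    (hres : ∀ y : X, Tendsto (fun t : ℝ => t⁻¹ • (T t (R y) - R y))
      (nhdsWithin 0 {0}ᶜ) (nhds (y + lam • R y))) :
    ‖R‖ ≤ ∑ j ∈ Finset.range (k + 1), coef j * (j.factorial / lam.re ^ (j + 1)) := by
  set r := lam.re with hrdef
  set B : ℝ := ∑ j ∈ Finset.range (k + 1), coef j * (j.factorial / r ^ (j + 1)) with hBdef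
  have hcoef' : ∀ j ∈ Finset.range (k+1), 0 ≤ coef j := fun j hj =>
    hcoef j (Nat.lt_succ_iff.mp (Finset.mem_range.mp hj))
  have hBnonneg : 0 ≤ B := Finset.sum_nonneg fun j hj => by
    have := hcoef' j hj
    positivity
  refine R.opNorm_le_bound hBnonneg fun y => ?_
  set z := R y with hzdef
  -- derivative of the orbit
  have hTz : ∀ t : ℝ, HasDerivAt (fun s => T s z) (T t (y + lam • z)) t := by
    intro t
    rw [hasDerivAt_iff_tendsto_slope_zero]
    have heq : ∀ h : ℝ, h⁻¹ • (T (t + h) z - T t z) = T t (h⁻¹ • (T h z - z)) := by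
      intro h
      rw [hTadd t h, ContinuousLinearMap.comp_apply, ← map_sub,
        ← ContinuousLinearMap.map_smul_of_tower]
    simp only [heq]
    exact (((T t).continuous.tendsto _)).comp (hres y)
  -- the exponential factor
  have hc : ∀ t : ℝ, HasDerivAt (fun s : ℝ => Complex.exp (-(lam * s)))
      (-lam * Complex.exp (-(lam * t))) t := by
    intro t
    have h1 : HasDerivAt (fun s : ℝ => (s : ℂ)) 1 t := by
      simpa using (hasDerivAt_id t).ofReal_comp
    have h2 := ((h1.const_mul lam).neg).cexp
    convert h2 using 1
    show -lam * Complex.exp (-(lam * t)) = Complex.exp (-(lam * t)) * -(lam * 1)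
    ring
    rfl
  -- the function g and its derivative
  set g : ℝ → X := fun s => Complex.exp (-(lam * s)) • T s z with hgdef
  have hg : ∀ t : ℝ, HasDerivAt g (Complex.exp (-(lam * t)) • T t y) t := by
    intro t
    have h := (hc t).smul (hTz t)
    convert h using 1
    · rfl
    rw [map_add, (T t).map_smul]
    module
  have hg'cont : Continuous fun t : ℝ => Complex.exp (-(lam * t)) • T t y :=
    (Complex.continuous_exp.comp ((continuous_const.mul Complex.continuous_ofReal).neg)).smul
      (hcont y)
  have hg0 : g 0 = z := by
    simp [hgdef, hT0]
  -- norm of the exponential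
  have hnexp : ∀ t : ℝ, ‖Complex.exp (-(lam * t))‖ = Real.exp (-(r * t)) := by
    intro t
    rw [Complex.norm_exp]
    congr 1
    simp [hrdef]
  -- the dominating function
  set hfun : ℝ → ℝ :=
    fun t => (∑ j ∈ Finset.range (k + 1), coef j * (t ^ j * Real.exp (-(r * t)))) * ‖y‖
    with hfundef
  have hfun_int : MeasureTheory.IntegrableOn hfun (Set.Ioi 0) := by
    apply MeasureTheory.Integrable.mul_const
    exact MeasureTheory.integrable_finset_sum _ fun j _ => (integ_monomial hr j).const_mul _
  have hfun_nonneg : ∀ t : ℝ, 0 < t → 0 ≤ hfun t := by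
    intro t ht
    apply mul_nonneg _ (norm_nonneg y)
    exact Finset.sum_nonneg fun j hj => by
      have := hcoef' j hj
      positivity
  have hfun_val : ∫ t in Set.Ioi (0:ℝ), hfun t = B * ‖y‖ := by
    rw [hfundef]
    rw [MeasureTheory.integral_mul_const]
    congr 1
    rw [MeasureTheory.integral_finset_sum _ fun j _ => (integ_monomial hr j).const_mul _]
    refine Finset.sum_congr rfl fun j _ => ?_
    rw [MeasureTheory.integral_const_mul, int_monomial hr j]
  -- pointwise bound of the derivative norm
  have hg'bound : ∀ t : ℝ, 0 < t → ‖Complex.exp (-(lam * t)) • T t y‖ ≤ hfun t := by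
    intro t ht
    rw [norm_smul, hnexp]
    have h1 : ‖T t y‖ ≤ (∑ j ∈ Finset.range (k + 1), coef j * |t| ^ j) * ‖y‖ :=
      ((T t).le_opNorm y).trans (mul_le_mul_of_nonneg_right (hbound t) (norm_nonneg y))
    calc Real.exp (-(r * t)) * ‖T t y‖
        ≤ Real.exp (-(r * t)) * ((∑ j ∈ Finset.range (k + 1), coef j * |t| ^ j) * ‖y‖) := by
          exact mul_le_mul_of_nonneg_left h1 (Real.exp_nonneg _)
      _ = hfun t := by
          simp only [hfundef, abs_of_pos ht, Finset.mul_sum, Finset.sum_mul]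
          exact Finset.sum_congr rfl fun j _ => by ring
  -- the fundamental theorem of calculus
  have hftc : ∀ s : ℝ, (∫ t in (0:ℝ)..s, Complex.exp (-(lam * t)) • T t y) = g s - g 0 :=
    fun s => intervalIntegral.integral_eq_sub_of_hasDerivAt (fun t _ => hg t)
      (hg'cont.intervalIntegrable 0 s)
  -- the key inequality for each s ≥ 0
  have key_ineq : ∀ s : ℝ, 0 ≤ s → ‖z‖ ≤ ‖g s‖ + B * ‖y‖ := by
    intro s hs
    have hint_bound : ‖∫ t in (0:ℝ)..s, Complex.exp (-(lam * t)) • T t y‖ ≤ B * ‖y‖ := by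
      calc ‖∫ t in (0:ℝ)..s, Complex.exp (-(lam * t)) • T t y‖
          ≤ ∫ t in (0:ℝ)..s, ‖Complex.exp (-(lam * t)) • T t y‖ :=
            intervalIntegral.norm_integral_le_integral_norm hs
        _ = ∫ t in Set.Ioc (0:ℝ) s, ‖Complex.exp (-(lam * t)) • T t y‖ :=
            intervalIntegral.integral_of_le hs
        _ ≤ ∫ t in Set.Ioc (0:ℝ) s, hfun t := by
            apply MeasureTheory.setIntegral_mono_on
            · exact (hg'cont.norm).integrableOn_Ioc
            · exact hfun_int.mono_set Set.Ioc_subset_Ioi_self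
            · exact measurableSet_Ioc
            · exact fun t ht => hg'bound t ht.1
        _ ≤ ∫ t in Set.Ioi (0:ℝ), hfun t := by
            apply MeasureTheory.setIntegral_mono_set hfun_int
            · filter_upwards [MeasureTheory.ae_restrict_mem measurableSet_Ioi] with t ht
              exact hfun_nonneg t ht
            · exact Filter.Eventually.of_forall fun t ht => Set.Ioc_subset_Ioi_self ht
        _ = B * ‖y‖ := hfun_val
    calc ‖z‖ = ‖g s - (g s - g 0)‖ := by rw [sub_sub_cancel, hg0]
      _ ≤ ‖g s‖ + ‖g s - g 0‖ := norm_sub_le _ _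
      _ = ‖g s‖ + ‖∫ t in (0:ℝ)..s, Complex.exp (-(lam * t)) • T t y‖ := by rw [hftc s]
      _ ≤ ‖g s‖ + B * ‖y‖ := by linarith [hint_bound]
  -- ‖g s‖ → 0
  have hgs : Tendsto (fun s => ‖g s‖) atTop (𝓝 0) := by
    have hupper : Tendsto
        (fun s : ℝ => ∑ j ∈ Finset.range (k + 1),
          (coef j * ‖z‖) * (s ^ j * Real.exp (-(r * s)))) atTop (𝓝 0) := by
      have : ∀ j : ℕ, Tendsto (fun s : ℝ => s ^ j * Real.exp (-(r * s))) atTop (𝓝 0) := by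
        intro j
        have := tendsto_rpow_mul_exp_neg_mul_atTop_nhds_zero (j : ℝ) r hr
        simpa [Real.rpow_natCast, neg_mul] using this
      have h := tendsto_finset_sum (Finset.range (k + 1))
        (fun j _ => ((this j).const_mul (coef j * ‖z‖)))
      simpa using h
    apply squeeze_zero' (Filter.Eventually.of_forall fun s => norm_nonneg _) _ hupper
    filter_upwards [eventually_ge_atTop (0:ℝ)] with s hs
    rw [hgdef]
    simp only
    rw [norm_smul, hnexp]
    have h1 : ‖T s z‖ ≤ (∑ j ∈ Finset.range (k + 1), coef j * |s| ^ j) * ‖z‖ :=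
      ((T s).le_opNorm z).trans (mul_le_mul_of_nonneg_right (hbound s) (norm_nonneg z))
    calc Real.exp (-(r * s)) * ‖T s z‖
        ≤ Real.exp (-(r * s)) * ((∑ j ∈ Finset.range (k + 1), coef j * |s| ^ j) * ‖z‖) :=
          mul_le_mul_of_nonneg_left h1 (Real.exp_nonneg _)
      _ = ∑ j ∈ Finset.range (k + 1), (coef j * ‖z‖) * (s ^ j * Real.exp (-(r * s))) := by
          simp only [abs_of_nonneg hs, Finset.mul_sum, Finset.sum_mul]
          exact Finset.sum_congr rfl fun j _ => by ring
  -- conclude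
  have hlim : Tendsto (fun s => ‖g s‖ + B * ‖y‖) atTop (𝓝 (0 + B * ‖y‖)) :=
    hgs.add tendsto_const_nhds
  have := ge_of_tendsto hlim ((eventually_ge_atTop (0:ℝ)).mono fun s hs => key_ineq s hs)
  simpa using this

end Aux

/-- If `A` generates a `C₀`-group `(T(t))_{t∈ℝ}` on a Banach space with
`‖T(t)‖ ≤ p(|t|)` for a polynomial `p` of degree `k` with positive coefficients, then
for every `a > 0` there is `C > 0` such that any resolvent operator
`R = (A - λ)⁻¹` satisfies `‖R‖ ≤ C/|Re λ|^{k+1}` for `0 < |Re λ| < a` and `‖R‖ ≤ C`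
for `|Re λ| ≥ a`. The generator is described by its domain and the strong derivative
of the group at `0`. -/
theorem stmt16 {X : Type*} [NormedAddCommGroup X] [NormedSpace ℂ X] [CompleteSpace X]
    (T : ℝ → X →L[ℂ] X) (hT0 : T 0 = 1)
    (hTadd : ∀ t s : ℝ, T (t + s) = (T t).comp (T s))
    (hcont : ∀ x : X, Continuous fun t : ℝ => T t x)
    (k : ℕ) (coef : ℕ → ℝ) (hcoef : ∀ j ≤ k, 0 < coef j)
    (hbound : ∀ t : ℝ, ‖T t‖ ≤ ∑ j ∈ Finset.range (k + 1), coef j * |t| ^ j)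
    (dom : Set X) (A : X → X)
    (hdom : ∀ x : X, x ∈ dom ↔
      ∃ y : X, Tendsto (fun t : ℝ => t⁻¹ • (T t x - x)) (nhdsWithin 0 {0}ᶜ) (nhds y))
    (hA : ∀ x ∈ dom,
      Tendsto (fun t : ℝ => t⁻¹ • (T t x - x)) (nhdsWithin 0 {0}ᶜ) (nhds (A x))) :
    ∀ a : ℝ, 0 < a → ∃ C : ℝ, 0 < C ∧ ∀ (lam : ℂ) (R : X →L[ℂ] X),
      ((∀ y : X, R y ∈ dom) ∧ (∀ y : X, A (R y) - lam • R y = y) ∧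
        (∀ x ∈ dom, R (A x - lam • x) = x)) →
      (0 < |lam.re| ∧ |lam.re| < a → ‖R‖ ≤ C / |lam.re| ^ (k + 1)) ∧
      (a ≤ |lam.re| → ‖R‖ ≤ C) := by

  intro a ha
  set C1 : ℝ := ∑ j ∈ Finset.range (k + 1), coef j * j.factorial * a ^ (k - j) with hC1
  set C2 : ℝ := ∑ j ∈ Finset.range (k + 1), coef j * (j.factorial / a ^ (j + 1)) with hC2
  have hC1pos : 0 < C1 := Finset.sum_pos (fun j hj => by
    have h := hcoef j (Nat.lt_succ_iff.mp (Finset.mem_range.mp hj))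
    have h2 : (0:ℝ) < j.factorial := by exact_mod_cast j.factorial_pos
    positivity) ⟨0, Finset.mem_range.mpr (Nat.succ_pos k)⟩
  have hC2nonneg : 0 ≤ C2 := Finset.sum_nonneg fun j hj => by
    have h := (hcoef j (Nat.lt_succ_iff.mp (Finset.mem_range.mp hj))).le
    positivity
  refine ⟨C1 + C2, by linarith, ?_⟩
  rintro lam R ⟨h1, h2, _⟩
  -- the main estimate when Re lam ≠ 0
  have hkey : lam.re ≠ 0 →
      ‖R‖ ≤ ∑ j ∈ Finset.range (k + 1), coef j * (j.factorial / |lam.re| ^ (j + 1)) := by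
    intro hne
    rcases hne.lt_or_gt with hlt | hgt
    · -- Re lam < 0 : use the reversed group
      have hneg : Tendsto (fun t : ℝ => -t) (𝓝[≠] (0:ℝ)) (𝓝[≠] (0:ℝ)) := by
        refine tendsto_nhdsWithin_of_tendsto_nhds_of_eventually_within _ ?_ ?_
        · exact (continuous_neg.tendsto' 0 0 (by simp)).mono_left nhdsWithin_le_nhds
        · exact eventually_mem_nhdsWithin.mono fun t ht => by
            simpa [Set.mem_compl_singleton_iff] using
              neg_ne_zero.mpr (Set.mem_compl_singleton_iff.mp ht)
      have hres : ∀ y : X, Tendsto (fun t : ℝ => t⁻¹ • (T (-t) ((-R) y) - (-R) y))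
          (𝓝[≠] (0:ℝ)) (𝓝 (y + (-lam) • ((-R) y))) := by
        intro y
        have horig : Tendsto (fun t : ℝ => t⁻¹ • (T t (R y) - R y)) (𝓝[≠] (0:ℝ))
            (𝓝 (y + lam • R y)) := by
          have hAy := hA (R y) (h1 y)
          rwa [sub_eq_iff_eq_add.mp (h2 y)] at hAy
        have hcomp := horig.comp hneg
        have hfe : (fun t : ℝ => t⁻¹ • (T (-t) ((-R) y) - (-R) y)) =
            (fun u : ℝ => u⁻¹ • (T u (R y) - R y)) ∘ (fun t => -t) := by
          funext t
          show t⁻¹ • (T (-t) (-(R y)) - -(R y)) = (-t)⁻¹ • (T (-t) (R y) - R y)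
          rw [map_neg, inv_neg, neg_smul, ← smul_neg]
          congr 1
          abel
        have hpt : y + (-lam) • ((-R) y) = y + lam • R y := by
          simp
        rw [hfe, hpt]
        exact hcomp
      have hk := key (fun t => T (-t)) (by simpa using hT0)
        (fun t s => by
          show T (-(t + s)) = (T (-t)).comp (T (-s))
          rw [show -(t+s) = -t + -s by ring, hTadd])
        (fun x => (hcont x).comp continuous_neg) k coef
        (fun j hj => (hcoef j hj).le)
        (fun t => by simpa [abs_neg] using hbound (-t))
        (-lam) (by simpa using hlt) (-R) hres
      rw [norm_neg] at hk
      have : (-lam).re = |lam.re| := by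
        rw [Complex.neg_re, abs_of_neg hlt]
      rwa [this] at hk
    · -- Re lam > 0
      have hres : ∀ y : X, Tendsto (fun t : ℝ => t⁻¹ • (T t (R y) - R y)) (𝓝[≠] (0:ℝ))
          (𝓝 (y + lam • R y)) := by
        intro y
        have hAy := hA (R y) (h1 y)
        rwa [sub_eq_iff_eq_add.mp (h2 y)] at hAy
      have hk := key T hT0 hTadd hcont k coef (fun j hj => (hcoef j hj).le) hbound lam hgt R hres
      rwa [abs_of_pos hgt]
  constructor
  · rintro ⟨hpos, hlta⟩
    have hne : lam.re ≠ 0 := by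
      intro h0
      rw [h0] at hpos
      simp at hpos
    set rr := |lam.re| with hrr
    have hrrpos : 0 < rr := hpos
    refine (hkey hne).trans ?_
    have step1 : ∑ j ∈ Finset.range (k + 1), coef j * (j.factorial / rr ^ (j + 1))
        ≤ C1 / rr ^ (k + 1) := by
      rw [hC1, Finset.sum_div]
      refine Finset.sum_le_sum fun j hj => ?_
      have hjk : j ≤ k := Nat.lt_succ_iff.mp (Finset.mem_range.mp hj)
      have hcj := hcoef j hjk
      have hpow : rr ^ (j + 1) * rr ^ (k - j) = rr ^ (k + 1) := by
        rw [← pow_add]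
        congr 1
        omega
      have hfac : (0:ℝ) < j.factorial := by exact_mod_cast j.factorial_pos
      rw [le_div_iff₀ (by positivity)]
      have hle : rr ^ (k - j) ≤ a ^ (k - j) := pow_le_pow_left₀ hrrpos.le hlta.le _
      have e : coef j * (↑j.factorial / rr ^ (j + 1)) * rr ^ (k + 1)
          = coef j * ↑j.factorial * rr ^ (k - j) := by
        rw [← hpow]
        field_simp
      rw [e]
      exact mul_le_mul_of_nonneg_left hle (mul_nonneg hcj.le hfac.le)
    have step2 : C1 / rr ^ (k + 1) ≤ (C1 + C2) / rr ^ (k + 1) := by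
      gcongr
      linarith
    exact step1.trans step2
  · intro haler
    have hne : lam.re ≠ 0 := by
      intro h0
      rw [h0] at haler
      simp at haler
      linarith
    refine (hkey hne).trans ?_
    have : ∑ j ∈ Finset.range (k + 1), coef j * (j.factorial / |lam.re| ^ (j + 1)) ≤ C2 := by
      rw [hC2]
      refine Finset.sum_le_sum fun j hj => ?_
      have hjk : j ≤ k := Nat.lt_succ_iff.mp (Finset.mem_range.mp hj)
      have hcj := hcoef j hjk
      have hfac : (0:ℝ) ≤ j.factorial := by positivity
      have hle : a ^ (j + 1) ≤ |lam.re| ^ (j + 1) := pow_le_pow_left₀ ha.le haler (j + 1)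
      exact mul_le_mul_of_nonneg_left
        (div_le_div_of_nonneg_left hfac (pow_pos ha (j + 1)) hle) hcj.le
    linarith
end

section
/- Let H be a Hilbert space with a Schauder basis (φ_n) that is bounded (0 < inf‖φ_n‖ ≤ sup‖φ_n‖ < ∞) but is not a Riesz basis. Define A(Σ c_n φ_n) = −Σ n c_n φ_n on its natural domain. Then A generates a C₀-semigroup (given by e^{At}x = Σ e^{−nt} c_n φ_n for t ≥ 0), the spectrum of A is the set {−n : n ∈ ℕ} of simple eigenvalues with eigenvectors φ_n, and A does not generate a C₀-group. -/
open Filter Topology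

open Filter Topology BoundedContinuousFunction

set_option linter.unusedSectionVars false
namespace Stmt17Aux

variable {H : Type*} [NormedAddCommGroup H] [NormedSpace ℂ H] [CompleteSpace H]

def psum (φ : ℕ → H) (c : ℕ → ℂ) (N : ℕ) : H := ∑ n ∈ Finset.range N, c n • φ (n + 1)

def Expand (φ : ℕ → H) (c : ℕ → ℂ) (x : H) : Prop :=
  Tendsto (psum φ c) atTop (𝓝 x)

variable {φ : ℕ → H}

section Basic
variable (hb : ∀ x : H, ∃! c : ℕ → ℂ, Expand φ c x)

noncomputable def coeff (x : H) : ℕ → ℂ := (hb x).exists.choose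

lemma coeff_spec (x : H) : Expand φ (coeff hb x) x := (hb x).exists.choose_spec

lemma coeff_unique {c : ℕ → ℂ} {x : H} (h : Expand φ c x) : c = coeff hb x :=
  (hb x).unique h (coeff_spec hb x)

lemma expand_unique {c : ℕ → ℂ} {x y : H} (hx : Expand φ c x) (hy : Expand φ c y) : x = y :=
  tendsto_nhds_unique hx hy

lemma Expand.add {c d : ℕ → ℂ} {x y : H} (hx : Expand φ c x) (hy : Expand φ d y) :
    Expand φ (c + d) (x + y) := by
  have := Filter.Tendsto.add hx hy
  refine Tendsto.congr (fun N => ?_) this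
  simp [psum, Finset.sum_add_distrib, add_smul]

lemma Expand.smul (a : ℂ) {c : ℕ → ℂ} {x : H} (hx : Expand φ c x) :
    Expand φ (a • c) (a • x) := by
  have := hx.const_smul a
  refine Tendsto.congr (fun N => ?_) this
  simp [psum, Finset.smul_sum, smul_smul]

lemma coeff_add (x y : H) : coeff hb (x + y) = coeff hb x + coeff hb y :=
  (coeff_unique hb ((coeff_spec hb x).add (coeff_spec hb y))).symm

lemma coeff_smul (a : ℂ) (x : H) : coeff hb (a • x) = a • coeff hb x :=
  (coeff_unique hb ((coeff_spec hb x).smul a)).symm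

noncomputable def P (N : ℕ) : H →ₗ[ℂ] H where
  toFun x := psum φ (coeff hb x) N
  map_add' x y := by simp [psum, coeff_add hb, Finset.sum_add_distrib, add_smul]
  map_smul' a x := by simp [psum, coeff_smul hb, Finset.smul_sum, smul_smul]

lemma P_apply (N : ℕ) (x : H) : P hb N x = psum φ (coeff hb x) N := rfl

lemma P_zero (x : H) : P hb 0 x = 0 := by simp [P_apply, psum]

lemma tendsto_P (x : H) : Tendsto (fun N => P hb N x) atTop (𝓝 x) := coeff_spec hb x

lemma expand_of_eventually {c : ℕ → ℂ} {y : H} {N0 : ℕ}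
    (h : ∀ M, N0 ≤ M → psum φ c M = y) : Expand φ c y := by
  refine Filter.Tendsto.congr' ?_ (tendsto_const_nhds (x := y) (f := atTop))
  filter_upwards [Filter.eventually_atTop.mpr ⟨N0, fun M hM => h M hM⟩] with M hM
  exact hM.symm

lemma expand_trunc (d : ℕ → ℂ) (N : ℕ) :
    Expand φ (fun n => if n < N then d n else 0) (psum φ d N) := by
  refine expand_of_eventually (N0 := N) (fun M hM => ?_)
  rw [psum, psum]
  rw [← Finset.sum_subset (Finset.range_subset_range.mpr hM) (fun n _ hn => ?_)]
  · refine Finset.sum_congr rfl (fun n hn => ?_)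
    rw [if_pos (Finset.mem_range.mp hn)]
  · rw [if_neg (by simpa using hn), zero_smul]

lemma expand_single (a : ℂ) (n : ℕ) :
    Expand φ (fun k => if k = n then a else 0) (a • φ (n + 1)) := by
  refine expand_of_eventually (N0 := n + 1) (fun M hM => ?_)
  rw [psum]
  rw [Finset.sum_eq_single n (fun k _ hk => by rw [if_neg hk, zero_smul])
    (fun hn => absurd (Finset.mem_range.mpr (by omega)) hn)]
  rw [if_pos rfl]

lemma Expand.sub {c d : ℕ → ℂ} {x y : H} (hx : Expand φ c x) (hy : Expand φ d y) :
    Expand φ (c - d) (x - y) := by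
  have := hx.add ((hy.smul (-1)))
  have e1 : c + (-1 : ℂ) • d = c - d := by funext n; simp; ring
  have e2 : x + (-1 : ℂ) • x = 0 := by simp
  rw [e1] at this
  convert this using 1
  simp
  abel

lemma P_succ_sub (N : ℕ) (x : H) :
    P hb (N + 1) x - P hb N x = coeff hb x N • φ (N + 1) := by
  simp [P_apply, psum, Finset.sum_range_succ]

end Basic

section UB
variable (hb : ∀ x : H, ∃! c : ℕ → ℂ, Expand φ c x) {m : ℝ} (hm : 0 < m)
  (hφ : ∀ n : ℕ, m ≤ ‖φ (n + 1)‖)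

lemma P_bddAbove (x : H) : ∃ C, ∀ N, ‖P hb N x‖ ≤ C := by
  obtain ⟨C, hC⟩ := (Filter.Tendsto.norm (tendsto_P hb x)).bddAbove_range
  exact ⟨C, fun N => hC (Set.mem_range_self N)⟩

noncomputable def PsiL : H →ₗ[ℂ] (ℕ →ᵇ H) where
  toFun x := BoundedContinuousFunction.ofNormedAddCommGroup (fun N => P hb N x)
    continuous_of_discreteTopology (P_bddAbove hb x).choose (P_bddAbove hb x).choose_spec
  map_add' x y := by ext N; simp
  map_smul' a x := by ext N; simp

lemma PsiL_apply (x : H) (N : ℕ) : PsiL hb x N = P hb N x := rfl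

lemma norm_le_psi (x : H) : ‖x‖ ≤ ‖PsiL hb x‖ := by
  refine le_of_tendsto (Filter.Tendsto.norm (tendsto_P hb x)) ?_
  filter_upwards with N
  exact (PsiL hb x).norm_coe_le_norm N

lemma psi_injective : Function.Injective (PsiL hb) := by
  intro x y hxy
  have hx := norm_le_psi hb (x - y)
  rw [map_sub, hxy, sub_self, norm_zero] at hx
  have := norm_le_zero_iff.mp (le_trans hx le_rfl)
  exact sub_eq_zero.mp this

include hm hφ in
lemma isClosed_range_psi : IsClosed (LinearMap.range (PsiL hb) : Set (ℕ →ᵇ H)) := by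
  refine IsSeqClosed.isClosed ?_
  intro u u₀ hu hlim
  choose x hx using hu
  -- x k has Psi x k = u k
  have hptw : ∀ n, Tendsto (fun k => u k n) atTop (𝓝 (u₀ n)) := fun n =>
    ((continuous_eval_const n).tendsto u₀).comp hlim
  -- x is Cauchy
  have hxc : CauchySeq x := by
    rw [Metric.cauchySeq_iff]
    intro ε hε
    obtain ⟨K0, hK0⟩ := Metric.cauchySeq_iff.mp hlim.cauchySeq ε hε
    refine ⟨K0, fun k hk j hj => ?_⟩
    have h1 : ‖x k - x j‖ ≤ ‖PsiL hb (x k) - PsiL hb (x j)‖ := by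
      have := norm_le_psi hb (x k - x j); rwa [map_sub] at this
    rw [dist_eq_norm]
    calc ‖x k - x j‖ ≤ ‖PsiL hb (x k) - PsiL hb (x j)‖ := h1
      _ = dist (u k) (u j) := by rw [hx k, hx j, dist_eq_norm]
      _ < ε := hK0 k hk j hj
  obtain ⟨xl, hxl⟩ := cauchySeq_tendsto_of_complete hxc
  -- coefficients converge
  have hcoef : ∀ n, ∃ a : ℂ, Tendsto (fun k => coeff hb (x k) n) atTop (𝓝 a) := by
    intro n
    have hc : CauchySeq (fun k => coeff hb (x k) n) := by
      rw [Metric.cauchySeq_iff]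
      intro ε hε
      have hε' : 0 < ε * m / 2 := by positivity
      obtain ⟨K0, hK0⟩ := Metric.cauchySeq_iff.mp hlim.cauchySeq (ε * m / 2) hε'
      refine ⟨K0, fun k hk j hj => ?_⟩
      have key : ‖coeff hb (x k) n - coeff hb (x j) n‖ * m ≤
          ‖(coeff hb (x k) n - coeff hb (x j) n) • φ (n + 1)‖ := by
        rw [norm_smul]
        exact mul_le_mul_of_nonneg_left (hφ n) (norm_nonneg _)
      have e1 : (coeff hb (x k) n - coeff hb (x j) n) • φ (n + 1) =
          (u k (n + 1) - u k n) - (u j (n + 1) - u j n) := by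
        rw [sub_smul, ← hx k, ← hx j]
        show coeff hb (x k) n • φ (n+1) - coeff hb (x j) n • φ (n+1) =
          (P hb (n+1) (x k) - P hb n (x k)) - (P hb (n+1) (x j) - P hb n (x j))
        rw [P_succ_sub, P_succ_sub]
      have e2 : ‖(u k (n + 1) - u k n) - (u j (n + 1) - u j n)‖ ≤
          ‖u k - u j‖ + ‖u k - u j‖ := by
        have b1 : ‖u k (n+1) - u j (n+1)‖ ≤ ‖u k - u j‖ := by
          have := (u k - u j).norm_coe_le_norm (n+1); simpa using this
        have b2 : ‖u k n - u j n‖ ≤ ‖u k - u j‖ := by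
          have := (u k - u j).norm_coe_le_norm n; simpa using this
        calc ‖(u k (n + 1) - u k n) - (u j (n + 1) - u j n)‖
            = ‖(u k (n+1) - u j (n+1)) - (u k n - u j n)‖ := by congr 1; abel
          _ ≤ ‖u k (n+1) - u j (n+1)‖ + ‖u k n - u j n‖ := norm_sub_le _ _
          _ ≤ ‖u k - u j‖ + ‖u k - u j‖ := add_le_add b1 b2
      have hd : ‖u k - u j‖ < ε * m / 2 := by
        rw [← dist_eq_norm]; exact hK0 k hk j hj
      rw [dist_eq_norm]
      have : ‖coeff hb (x k) n - coeff hb (x j) n‖ * m < ε * m := by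
        calc ‖coeff hb (x k) n - coeff hb (x j) n‖ * m
            ≤ ‖u k - u j‖ + ‖u k - u j‖ := by rw [e1] at key; exact key.trans e2
          _ < ε * m / 2 + ε * m / 2 := add_lt_add hd hd
          _ = ε * m := by ring
      exact lt_of_mul_lt_mul_right (by linarith) hm.le
    exact cauchySeq_tendsto_of_complete hc
  choose a ha using hcoef
  -- u₀ (n+1) - u₀ n = a n • φ (n+1)
  have hstep : ∀ n, u₀ (n + 1) - u₀ n = a n • φ (n + 1) := by
    intro n
    have t1 : Tendsto (fun k => coeff hb (x k) n • φ (n + 1)) atTop (𝓝 (a n • φ (n + 1))) :=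
      (ha n).smul tendsto_const_nhds
    have t2 : Tendsto (fun k => coeff hb (x k) n • φ (n + 1)) atTop (𝓝 (u₀ (n + 1) - u₀ n)) := by
      have : ∀ k, coeff hb (x k) n • φ (n + 1) = u k (n + 1) - u k n := by
        intro k
        rw [← hx k]
        show coeff hb (x k) n • φ (n+1) = P hb (n+1) (x k) - P hb n (x k)
        rw [P_succ_sub]
      refine Tendsto.congr (fun k => (this k).symm) (((hptw (n+1)).sub (hptw n)))
    exact (tendsto_nhds_unique t2 t1)
  have hzero : u₀ 0 = 0 := by
    have t2 : Tendsto (fun k => u k 0) atTop (𝓝 (u₀ 0)) := hptw 0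
    have : ∀ k, u k 0 = 0 := by
      intro k; rw [← hx k]; exact P_zero hb (x k)
    rw [Filter.tendsto_congr this] at t2
    exact (tendsto_nhds_unique t2 tendsto_const_nhds)
  have hval : ∀ N, u₀ N = psum φ a N := by
    intro N
    induction N with
    | zero => simpa [psum] using hzero
    | succ N ih =>
      have := hstep N
      have : u₀ (N + 1) = u₀ N + a N • φ (N + 1) := by
        rw [← this]; abel
      rw [this, ih, psum, psum, Finset.sum_range_succ]
  -- Expand φ a xl
  have hexp : Expand φ a xl := by
    rw [Expand, Metric.tendsto_atTop]
    intro ε hε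
    obtain ⟨K1, hK1⟩ := Metric.tendsto_atTop.mp hlim (ε / 3) (by linarith)
    obtain ⟨K2, hK2⟩ := Metric.tendsto_atTop.mp hxl (ε / 3) (by linarith)
    set k := max K1 K2
    obtain ⟨N₀, hN₀⟩ := Metric.tendsto_atTop.mp (tendsto_P hb (x k)) (ε / 3) (by linarith)
    refine ⟨N₀, fun N hN => ?_⟩
    have d1 : dist (psum φ a N) (u k N) ≤ ε / 3 := by
      rw [← hval N]
      calc dist (u₀ N) (u k N) ≤ dist u₀ (u k) := dist_coe_le_dist N
        _ ≤ ε / 3 := by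
          have := hK1 k (le_max_left _ _); rw [dist_comm] at this; exact this.le
    have d2 : dist (u k N) (x k) < ε / 3 := by
      have : u k N = P hb N (x k) := by rw [← hx k]; rfl
      rw [this]; exact hN₀ N hN
    have d3 : dist (x k) xl < ε / 3 := hK2 k (le_max_right _ _)
    have htri := dist_triangle4 (psum φ a N) (u k N) (x k) xl
    linarith
  have ha' : a = coeff hb xl := coeff_unique hb hexp
  refine ⟨xl, ?_⟩
  ext N
  rw [PsiL_apply, P_apply, ← ha', ← hval]

include hm hφ in
lemma exists_uniform_bound : ∃ K : ℝ, 0 < K ∧ ∀ (N : ℕ) (x : H), ‖P hb N x‖ ≤ K * ‖x‖ := by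
  classical
  set E : Submodule ℂ (ℕ →ᵇ H) := LinearMap.range (PsiL hb) with hE
  haveI : CompleteSpace E := (isClosed_range_psi hb hm hφ).completeSpace_coe
  -- the inverse linear equiv E ≃ₗ H
  let eq1 : H ≃ₗ[ℂ] E := LinearEquiv.ofInjective (PsiL hb) (psi_injective hb)
  have heq1 : ∀ x : H, ((eq1 x : E) : ℕ →ᵇ H) = PsiL hb x := fun x => rfl
  let e : E →ₗ[ℂ] H := eq1.symm.toLinearMap
  have he : ∀ u : E, PsiL hb (e u) = (u : ℕ →ᵇ H) := by
    intro u
    have : eq1 (e u) = u := eq1.apply_symm_apply u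
    rw [← heq1 (e u), this]
  have hbound : ∀ u : E, ‖e u‖ ≤ 1 * ‖u‖ := by
    intro u
    rw [one_mul]
    calc ‖e u‖ ≤ ‖PsiL hb (e u)‖ := norm_le_psi hb _
      _ = ‖(u : ℕ →ᵇ H)‖ := by rw [he u]
      _ = ‖u‖ := rfl
  let eC : E →L[ℂ] H := LinearMap.mkContinuous e 1 hbound
  have hinj : Function.Injective eC := by
    intro u v huv
    apply Subtype.ext
    rw [← he u, ← he v]
    congr 1
  have hsurj : Function.Surjective eC := by
    intro x
    refine ⟨eq1 x, ?_⟩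
    show e (eq1 x) = x
    exact eq1.symm_apply_apply x
  have hker : LinearMap.ker eC = ⊥ := eq_bot_iff.mpr fun u hu =>
    (Submodule.mem_bot ℂ).mpr (hinj (by rw [map_zero]; exact hu))
  have hrange : LinearMap.range (eC : E →ₗ[ℂ] H) = ⊤ := LinearMap.range_eq_top.mpr hsurj
  let CLE := ContinuousLinearEquiv.ofBijective eC hker hrange
  obtain ⟨C, hC0, hC⟩ := (CLE.symm : H →L[ℂ] E).bound
  refine ⟨C, hC0, fun N x => ?_⟩
  have hsymm : ((CLE.symm x : E) : ℕ →ᵇ H) = PsiL hb x := by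
    have h1 : CLE (eq1 x) = x := by
      show eC (eq1 x) = x
      show e (eq1 x) = x
      exact eq1.symm_apply_apply x
    have h2 : CLE.symm x = eq1 x := CLE.symm_apply_eq.mpr h1.symm
    rw [h2]; exact heq1 x
  calc ‖P hb N x‖ = ‖PsiL hb x N‖ := rfl
    _ ≤ ‖PsiL hb x‖ := (PsiL hb x).norm_coe_le_norm N
    _ = ‖CLE.symm x‖ := by rw [← hsymm]; rfl
    _ ≤ C * ‖x‖ := hC x

end UB

section Mult
variable (hb : ∀ x : H, ∃! c : ℕ → ℂ, Expand φ c x)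
variable {K : ℝ} (hK1 : 1 ≤ K) (hKP : ∀ (N : ℕ) (x : H), ‖P hb N x‖ ≤ K * ‖x‖)
variable {μ : ℕ → ℂ} (hμ : Summable fun n => ‖μ (n + 1) - μ n‖)

/-- the limit of a multiplier sequence -/
noncomputable def mlim : ℂ := μ 0 + ∑' n, (μ (n + 1) - μ n)

include hμ in
lemma tendsto_mlim : Tendsto μ atTop (𝓝 (mlim (μ := μ))) := by
  have hs : Summable fun n => μ (n + 1) - μ n := Summable.of_norm hμ
  have h1 : Tendsto (fun N => μ 0 + ∑ n ∈ Finset.range N, (μ (n + 1) - μ n)) atTop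
      (𝓝 (μ 0 + ∑' n, (μ (n + 1) - μ n))) :=
    tendsto_const_nhds.add hs.hasSum.tendsto_sum_nat
  refine Tendsto.congr (fun N => ?_) h1
  rw [Finset.sum_range_sub (f := μ)]
  ring

include hμ in
lemma norm_mlim_le : ‖mlim (μ := μ)‖ ≤ ‖μ 0‖ + ∑' n, ‖μ (n + 1) - μ n‖ := by
  refine (norm_add_le _ _).trans ?_
  exact add_le_add_right (norm_tsum_le_tsum_norm hμ) _

lemma by_parts_identity (x : H) (N : ℕ) :
    psum φ (fun n => μ n * coeff hb x n) N =
      μ (N - 1) • P hb N x - ∑ i ∈ Finset.range (N - 1), (μ (i + 1) - μ i) • P hb (i + 1) x := by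
  have h := Finset.sum_range_by_parts μ (fun n => coeff hb x n • φ (n + 1)) N
  have e1 : ∑ i ∈ Finset.range N, μ i • (coeff hb x i • φ (i + 1)) =
      psum φ (fun n => μ n * coeff hb x n) N := by
    simp [psum, smul_smul]
  rw [e1] at h
  rw [h]
  rfl

include hKP hμ in
lemma summable_parts (x : H) :
    Summable fun i => (μ (i + 1) - μ i) • P hb (i + 1) x := by
  refine Summable.of_norm_bounded (g := fun i => ‖μ (i + 1) - μ i‖ * (K * ‖x‖))
    (hμ.mul_right _) (fun i => ?_)
  rw [norm_smul]
  exact mul_le_mul_of_nonneg_left (hKP _ _) (norm_nonneg _)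

include hK1 hKP hμ in
lemma mult_exists (x : H) : ∃ y : H, Expand φ (fun n => μ n * coeff hb x n) y ∧
    ‖y‖ ≤ ((‖μ 0‖ + 2 * ∑' n, ‖μ (n + 1) - μ n‖) * K) * ‖x‖ := by
  have hs := summable_parts hb hKP hμ (x := x)
  have t1 : Tendsto (fun N => μ (N - 1) • P hb N x) atTop (𝓝 (mlim (μ := μ) • x)) := by
    refine Tendsto.smul ?_ (tendsto_P hb x)
    exact (tendsto_mlim hμ).comp (tendsto_sub_atTop_nat 1)
  have t2a := hs.hasSum.tendsto_sum_nat
  have t2 : Tendsto (fun N => ∑ i ∈ Finset.range (N - 1), (μ (i + 1) - μ i) • P hb (i + 1) x)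
      atTop (𝓝 (∑' i, (μ (i + 1) - μ i) • P hb (i + 1) x)) :=
    t2a.comp (tendsto_sub_atTop_nat 1)
  refine ⟨mlim (μ := μ) • x - ∑' i, (μ (i + 1) - μ i) • P hb (i + 1) x, ?_, ?_⟩
  · refine Tendsto.congr (fun N => (by_parts_identity hb x N).symm) (t1.sub t2)
  · have b1 : ‖mlim (μ := μ) • x‖ ≤ (‖μ 0‖ + ∑' n, ‖μ (n + 1) - μ n‖) * ‖x‖ := by
      rw [norm_smul]
      exact mul_le_mul_of_nonneg_right (norm_mlim_le hμ) (norm_nonneg _)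
    have hnorm : Summable fun i => ‖(μ (i + 1) - μ i) • P hb (i + 1) x‖ := by
      refine Summable.of_nonneg_of_le (fun i => norm_nonneg _) (fun i => ?_)
        (hμ.mul_right (K * ‖x‖))
      rw [norm_smul]
      exact mul_le_mul_of_nonneg_left (hKP _ _) (norm_nonneg _)
    have b2 : ‖∑' i, (μ (i + 1) - μ i) • P hb (i + 1) x‖ ≤
        (∑' n, ‖μ (n + 1) - μ n‖) * (K * ‖x‖) := by
      refine (norm_tsum_le_tsum_norm hnorm).trans ?_
      have := Summable.tsum_le_tsum (f := fun i => ‖(μ (i + 1) - μ i) • P hb (i + 1) x‖)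
        (g := fun i => ‖μ (i + 1) - μ i‖ * (K * ‖x‖)) (fun i => by
          show ‖(μ (i + 1) - μ i) • P hb (i + 1) x‖ ≤ ‖μ (i + 1) - μ i‖ * (K * ‖x‖)
          rw [norm_smul]
          exact mul_le_mul_of_nonneg_left (hKP _ _) (norm_nonneg _)) hnorm
        (hμ.mul_right (K * ‖x‖))
      rwa [tsum_mul_right] at this
    have b0 := norm_sub_le (mlim (μ := μ) • x) (∑' i, (μ (i + 1) - μ i) • P hb (i + 1) x)
    set S := ∑' n, ‖μ (n + 1) - μ n‖ with hSdef
    have hS : 0 ≤ S := tsum_nonneg (fun n => norm_nonneg _)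
    have hx0 : (0:ℝ) ≤ ‖x‖ := norm_nonneg x
    have hμ0 : (0:ℝ) ≤ ‖μ 0‖ := norm_nonneg _
    nlinarith [mul_nonneg (mul_nonneg hμ0 hx0) (sub_nonneg.mpr hK1),
      mul_nonneg (mul_nonneg hS hx0) (sub_nonneg.mpr hK1)]

noncomputable def TmulFun (x : H) : H := (mult_exists hb hK1 hKP hμ x).choose

lemma TmulFun_expand (x : H) :
    Expand φ (fun n => μ n * coeff hb x n) (TmulFun hb hK1 hKP hμ x) :=
  (mult_exists hb hK1 hKP hμ x).choose_spec.1

lemma TmulFun_bound (x : H) :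
    ‖TmulFun hb hK1 hKP hμ x‖ ≤ ((‖μ 0‖ + 2 * ∑' n, ‖μ (n + 1) - μ n‖) * K) * ‖x‖ :=
  (mult_exists hb hK1 hKP hμ x).choose_spec.2

noncomputable def Tmul : H →L[ℂ] H := LinearMap.mkContinuous
  { toFun := TmulFun hb hK1 hKP hμ
    map_add' := fun x y => by
      have h1 := (TmulFun_expand hb hK1 hKP hμ x).add (TmulFun_expand hb hK1 hKP hμ y)
      have h2 := TmulFun_expand hb hK1 hKP hμ (x + y)
      have he : (fun n => μ n * coeff hb (x + y) n) =
          (fun n => μ n * coeff hb x n) + fun n => μ n * coeff hb y n := by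
        funext n
        simp [coeff_add hb, mul_add]
      rw [he] at h2
      exact expand_unique h2 h1
    map_smul' := fun a x => by
      have h1 := (TmulFun_expand hb hK1 hKP hμ x).smul a
      have h2 := TmulFun_expand hb hK1 hKP hμ (a • x)
      have he : (fun n => μ n * coeff hb (a • x) n) =
          a • fun n => μ n * coeff hb x n := by
        funext n
        simp [coeff_smul hb]
        ring
      rw [he] at h2
      exact expand_unique h2 h1 }
  ((‖μ 0‖ + 2 * ∑' n, ‖μ (n + 1) - μ n‖) * K) (TmulFun_bound hb hK1 hKP hμ)

lemma Tmul_expand (x : H) :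
    Expand φ (fun n => μ n * coeff hb x n) (Tmul hb hK1 hKP hμ x) :=
  TmulFun_expand hb hK1 hKP hμ x

lemma coeff_Tmul (x : H) :
    coeff hb (Tmul hb hK1 hKP hμ x) = fun n => μ n * coeff hb x n :=
  (coeff_unique hb (Tmul_expand hb hK1 hKP hμ x)).symm

lemma Tmul_bound (x : H) :
    ‖Tmul hb hK1 hKP hμ x‖ ≤ ((‖μ 0‖ + 2 * ∑' n, ‖μ (n + 1) - μ n‖) * K) * ‖x‖ :=
  TmulFun_bound hb hK1 hKP hμ x

end Mult

section Geom

lemma geom_summable {r : ℝ} (h0 : 0 ≤ r) (h1 : r ≤ 1) :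
    Summable fun n : ℕ => r ^ (n + 1) * (1 - r) := by
  rcases eq_or_lt_of_le h1 with he | hl
  · subst he; simpa using summable_zero
  · refine ((summable_geometric_of_lt_one h0 hl).mul_right (r * (1 - r))).congr fun n => ?_
    ring

lemma geom_tsum_le {r : ℝ} (h0 : 0 ≤ r) (h1 : r ≤ 1) :
    ∑' n : ℕ, r ^ (n + 1) * (1 - r) ≤ 1 := by
  refine Summable.tsum_le_of_sum_range_le (geom_summable h0 h1) (fun N => ?_)
  have e : ∀ n : ℕ, r ^ (n + 1) * (1 - r) = r ^ (n + 1) - r ^ (n + 1 + 1) := by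
    intro n; ring
  rw [Finset.sum_congr rfl (fun n _ => e n), Finset.sum_range_sub' (f := fun n => r ^ (n + 1))]
  have hp : 0 ≤ r ^ (N + 1) := pow_nonneg h0 _
  have h01 : r ^ (0 + 1) ≤ 1 := by simpa using h1
  linarith

end Geom

section Exp

noncomputable def expμ (t : ℝ) : ℕ → ℂ := fun n => Complex.exp (-((n : ℂ) + 1) * (t : ℂ))

lemma expμ_eq (t : ℝ) (n : ℕ) : expμ t n = ((Real.exp (-t) ^ (n + 1) : ℝ) : ℂ) := by
  rw [expμ]
  have h1 : -((n : ℂ) + 1) * (t : ℂ) = (((n + 1 : ℕ) * (-t) : ℝ) : ℂ) := by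
    push_cast; ring
  rw [h1, ← Complex.ofReal_exp, Real.exp_nat_mul]

lemma norm_expμ_sub {t : ℝ} (ht : 0 ≤ t) (n : ℕ) :
    ‖expμ t (n + 1) - expμ t n‖ = Real.exp (-t) ^ (n + 1) * (1 - Real.exp (-t)) := by
  have h0 : (0:ℝ) ≤ Real.exp (-t) := (Real.exp_pos _).le
  have h1 : Real.exp (-t) ≤ 1 := Real.exp_le_one_iff.mpr (by linarith)
  rw [expμ_eq, expμ_eq, ← Complex.ofReal_sub, Complex.norm_real, Real.norm_eq_abs]
  have h2 : Real.exp (-t) ^ (n + 1 + 1) - Real.exp (-t) ^ (n + 1) ≤ 0 :=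
    sub_nonpos.mpr (pow_le_pow_of_le_one h0 h1 (by omega))
  rw [abs_of_nonpos h2, neg_sub, pow_succ (n := n + 1)]
  ring

lemma summable_expμ {t : ℝ} (ht : 0 ≤ t) :
    Summable fun n => ‖expμ t (n + 1) - expμ t n‖ := by
  refine Summable.congr (geom_summable (Real.exp_pos _).le
    (Real.exp_le_one_iff.mpr (by linarith))) fun n => (norm_expμ_sub ht n).symm

lemma tsum_expμ_le {t : ℝ} (ht : 0 ≤ t) : ∑' n, ‖expμ t (n + 1) - expμ t n‖ ≤ 1 := by
  rw [tsum_congr (fun n => norm_expμ_sub ht n)]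
  exact geom_tsum_le (Real.exp_pos _).le (Real.exp_le_one_iff.mpr (by linarith))

lemma norm_expμ_zero_le {t : ℝ} (ht : 0 ≤ t) : ‖expμ t 0‖ ≤ 1 := by
  rw [expμ_eq, Complex.norm_real, Real.norm_eq_abs]
  rw [abs_of_nonneg (pow_nonneg (Real.exp_pos _).le _)]
  exact pow_le_one₀ (Real.exp_pos _).le (Real.exp_le_one_iff.mpr (by linarith))

lemma expμ_add (t s : ℝ) (n : ℕ) : expμ (t + s) n = expμ t n * expμ s n := by
  rw [expμ, expμ, expμ, ← Complex.exp_add]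
  congr 1
  push_cast
  ring

lemma expμ_zero (n : ℕ) : expμ 0 n = 1 := by simp [expμ]

lemma continuous_expμ (n : ℕ) : Continuous fun t : ℝ => expμ t n := by
  refine Complex.continuous_exp.comp ?_
  exact continuous_const.mul Complex.continuous_ofReal

end Exp
end Stmt17Aux

open Stmt17Aux


/-- Let `(φ_n)_{n≥1}` (here `φ (n+1)`) be a bounded Schauder basis of a complex
Hilbert space `H` which is not a Riesz basis, and define
`A(Σ c_n φ_n) = -Σ n c_n φ_n` (encoded by its graph `AGraph`). Then: the semigroup
`e^{At}x = Σ e^{-nt} c_n φ_n` exists, consists of bounded operators for `t ≥ 0`, is a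
strongly continuous semigroup; every `-n` is a simple eigenvalue of `A` with
eigenvector `φ_n` and these exhaust the spectrum (for `λ ∉ {-n}` a bounded resolvent
exists); but `A` does not generate a `C₀`-group. -/
theorem stmt17 {H : Type*} [NormedAddCommGroup H] [InnerProductSpace ℂ H]
    [CompleteSpace H] (φ : ℕ → H)
    (hbasis : ∀ x : H, ∃! c : ℕ → ℂ,
      Tendsto (fun N => ∑ n ∈ Finset.range N, c n • φ (n + 1)) atTop (nhds x))
    (m M : ℝ) (hm : 0 < m)
    (hbdd : ∀ n : ℕ, 1 ≤ n → m ≤ ‖φ n‖ ∧ ‖φ n‖ ≤ M)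
    (hnotRiesz : ¬ ∃ r s : ℝ, 0 < r ∧ 0 < s ∧ ∀ (c : ℕ → ℂ) (N : ℕ),
      r * ∑ n ∈ Finset.range N, ‖c n‖ ^ 2 ≤ ‖∑ n ∈ Finset.range N, c n • φ (n + 1)‖ ^ 2 ∧
      ‖∑ n ∈ Finset.range N, c n • φ (n + 1)‖ ^ 2 ≤ s * ∑ n ∈ Finset.range N, ‖c n‖ ^ 2) :
    let AGraph : H → H → Prop := fun x y => ∃ c : ℕ → ℂ,
      Tendsto (fun N => ∑ n ∈ Finset.range N, c n • φ (n + 1)) atTop (nhds x) ∧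
      Tendsto (fun N => ∑ n ∈ Finset.range N, (-((n : ℂ) + 1) * c n) • φ (n + 1))
        atTop (nhds y)
    -- A generates the C₀-semigroup e^{At}x = Σ e^{-nt} c_n φ_n :
    (∃ S : ℝ → H →L[ℂ] H,
      (∀ t : ℝ, 0 ≤ t → ∀ (x : H) (c : ℕ → ℂ),
        Tendsto (fun N => ∑ n ∈ Finset.range N, c n • φ (n + 1)) atTop (nhds x) →
        Tendsto (fun N => ∑ n ∈ Finset.range N,
          (Complex.exp (-((n : ℂ) + 1) * (t : ℂ)) * c n) • φ (n + 1)) atTop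
          (nhds (S t x))) ∧
      S 0 = 1 ∧
      (∀ t s : ℝ, 0 ≤ t → 0 ≤ s → S (t + s) = (S t).comp (S s)) ∧
      (∀ x : H, ContinuousOn (fun t : ℝ => S t x) (Set.Ici 0))) ∧
    -- the spectrum of A consists of the simple eigenvalues -n with eigenvectors φ_n :
    (∀ n : ℕ, AGraph (φ (n + 1)) ((-((n : ℂ) + 1)) • φ (n + 1)) ∧
      (∀ x y : H, AGraph x y → y = (-((n : ℂ) + 1)) • x →
        ∃ a : ℂ, x = a • φ (n + 1))) ∧
    (∀ lam : ℂ, (∀ n : ℕ, lam ≠ -((n : ℂ) + 1)) →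
      ∃ R : H →L[ℂ] H, (∀ z : H, AGraph (R z) (z + lam • R z)) ∧
        ∀ x y : H, AGraph x y → R (y - lam • x) = x) ∧
    -- A does not generate a C₀-group :
    ¬ ∃ G : ℝ → H →L[ℂ] H,
      (∀ t : ℝ, 0 ≤ t → ∀ (x : H) (c : ℕ → ℂ),
        Tendsto (fun N => ∑ n ∈ Finset.range N, c n • φ (n + 1)) atTop (nhds x) →
        Tendsto (fun N => ∑ n ∈ Finset.range N,
          (Complex.exp (-((n : ℂ) + 1) * (t : ℂ)) * c n) • φ (n + 1)) atTop
          (nhds (G t x))) ∧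
      G 0 = 1 ∧ (∀ t s : ℝ, G (t + s) = (G t).comp (G s)) ∧
      (∀ x : H, Continuous fun t : ℝ => G t x) := by
  intro AGraph
  classical
  have hb : ∀ x : H, ∃! c : ℕ → ℂ, Expand φ c x := hbasis
  have hφ : ∀ n : ℕ, m ≤ ‖φ (n + 1)‖ := fun n => (hbdd (n + 1) (by omega)).1
  obtain ⟨C, hC0, hCP⟩ := exists_uniform_bound hb hm hφ
  set K := max C 1 with hKdef
  have hK1 : (1:ℝ) ≤ K := le_max_right _ _
  have hK0 : (0:ℝ) < K := lt_of_lt_of_le one_pos hK1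
  have hKP : ∀ (N : ℕ) (x : H), ‖P hb N x‖ ≤ K * ‖x‖ := fun N x =>
    (hCP N x).trans (mul_le_mul_of_nonneg_right (le_max_left _ _) (norm_nonneg _))
  refine ⟨?_, ?_, ?_, ?_⟩
  · -- semigroup
    set S : ℝ → H →L[ℂ] H := fun t =>
      if ht : 0 ≤ t then Tmul hb hK1 hKP (summable_expμ ht) else 1 with hSdef
    have hSexp : ∀ (t : ℝ) (ht : 0 ≤ t) (x : H),
        Expand φ (fun n => expμ t n * coeff hb x n) (S t x) := by
      intro t ht x
      have : S t = Tmul hb hK1 hKP (summable_expμ ht) := dif_pos ht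
      rw [this]
      exact Tmul_expand hb hK1 hKP (summable_expμ ht) x
    have hSbd : ∀ (t : ℝ) (ht : 0 ≤ t) (x : H), ‖S t x‖ ≤ 3 * K * ‖x‖ := by
      intro t ht x
      have h1 : S t = Tmul hb hK1 hKP (summable_expμ ht) := dif_pos ht
      rw [h1]
      refine (Tmul_bound hb hK1 hKP (summable_expμ ht) x).trans ?_
      have h2 : ‖expμ t 0‖ + 2 * ∑' n, ‖expμ t (n + 1) - expμ t n‖ ≤ 3 := by
        have := norm_expμ_zero_le ht
        have := tsum_expμ_le ht
        linarith
      have h3 : (‖expμ t 0‖ + 2 * ∑' n, ‖expμ t (n + 1) - expμ t n‖) * K ≤ 3 * K :=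
        mul_le_mul_of_nonneg_right h2 hK0.le
      exact mul_le_mul_of_nonneg_right h3 (norm_nonneg _)
    have hfin : ∀ (t : ℝ) (ht : 0 ≤ t) (N : ℕ) (x : H),
        S t (P hb N x) = psum φ (fun n => expμ t n * coeff hb x n) N := by
      intro t ht N x
      have h1 : Expand φ (fun n => if n < N then coeff hb x n else 0) (P hb N x) :=
        expand_trunc (coeff hb x) N
      have h2 : coeff hb (P hb N x) = fun n => if n < N then coeff hb x n else 0 :=
        (coeff_unique hb h1).symm
      have h3 := hSexp t ht (P hb N x)
      rw [h2] at h3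
      have h4 : (fun n => expμ t n * if n < N then coeff hb x n else 0) =
          fun n => if n < N then expμ t n * coeff hb x n else 0 := by
        funext n; split <;> simp
      rw [h4] at h3
      exact expand_unique h3 (expand_trunc _ N)
    refine ⟨S, ?_, ?_, ?_, ?_⟩
    · intro t ht x c hc
      have hc' : Expand φ c x := hc
      have h := hSexp t ht x
      rw [← coeff_unique hb hc'] at h
      exact h
    · ext x
      have h := hSexp 0 le_rfl x
      simp only [expμ_zero, one_mul] at h
      have := expand_unique h (coeff_spec hb x)
      simpa using this
    · intro t s ht hs
      ext x
      have h1 := hSexp (t + s) (add_nonneg ht hs) x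
      have h2 := hSexp t ht (S s x)
      have hcs : coeff hb (S s x) = fun n => expμ s n * coeff hb x n := by
        have : S s = Tmul hb hK1 hKP (summable_expμ hs) := dif_pos hs
        rw [this]
        exact coeff_Tmul hb hK1 hKP (summable_expμ hs) x
      rw [hcs] at h2
      have he : (fun n => expμ t n * (expμ s n * coeff hb x n)) =
          fun n => expμ (t + s) n * coeff hb x n := by
        funext n; rw [expμ_add]; ring
      rw [he] at h2
      simpa using expand_unique h1 h2
    · intro x
      intro t₀ ht₀
      rw [Metric.continuousWithinAt_iff]
      intro ε hε
      have hεK : 0 < ε / (9 * K) := by positivity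
      obtain ⟨N, hN⟩ := Metric.tendsto_atTop.mp (tendsto_P hb x) (ε / (9 * K)) hεK
      have hPN : ‖x - P hb N x‖ < ε / (9 * K) := by
        have := hN N le_rfl
        rw [dist_eq_norm] at this
        rw [← norm_neg]
        simpa [neg_sub] using this
      set g : ℝ → H := fun t => psum φ (fun n => expμ t n * coeff hb x n) N with hgdef
      have hg : Continuous g := by
        refine continuous_finset_sum _ fun n _ => ?_
        exact ((continuous_expμ n).mul continuous_const).smul continuous_const
      obtain ⟨δ, hδ0, hδ⟩ := Metric.continuous_iff.mp hg t₀ (ε / 3) (by linarith)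
      refine ⟨δ, hδ0, fun t ht hdist => ?_⟩
      have ht' : (0:ℝ) ≤ t := ht
      have hdecomp : S t x - S t₀ x =
          (S t (x - P hb N x) - S t₀ (x - P hb N x)) + (g t - g t₀) := by
        rw [map_sub, map_sub, hgdef]
        simp only []
        rw [← hfin t ht' N x, ← hfin t₀ ht₀ N x]
        abel
      have b1 : ‖S t (x - P hb N x)‖ < ε / 3 := by
        refine lt_of_le_of_lt (hSbd t ht' _) ?_
        have : 3 * K * ‖x - P hb N x‖ < 3 * K * (ε / (9 * K)) :=
          mul_lt_mul_of_pos_left hPN (by positivity)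
        have heq : 3 * K * (ε / (9 * K)) = ε / 3 := by field_simp; ring
        rw [heq] at this
        exact this
      have b2 : ‖S t₀ (x - P hb N x)‖ < ε / 3 := by
        refine lt_of_le_of_lt (hSbd t₀ ht₀ _) ?_
        have : 3 * K * ‖x - P hb N x‖ < 3 * K * (ε / (9 * K)) :=
          mul_lt_mul_of_pos_left hPN (by positivity)
        have heq : 3 * K * (ε / (9 * K)) = ε / 3 := by field_simp; ring
        rw [heq] at this
        exact this
      have b3 : ‖g t - g t₀‖ < ε / 3 := by
        have := hδ t hdist
        rwa [dist_eq_norm] at this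
      rw [dist_eq_norm, hdecomp]
      calc ‖(S t (x - P hb N x) - S t₀ (x - P hb N x)) + (g t - g t₀)‖
          ≤ ‖S t (x - P hb N x) - S t₀ (x - P hb N x)‖ + ‖g t - g t₀‖ := norm_add_le _ _
        _ ≤ ‖S t (x - P hb N x)‖ + ‖S t₀ (x - P hb N x)‖ + ‖g t - g t₀‖ := by
            have := norm_sub_le (S t (x - P hb N x)) (S t₀ (x - P hb N x))
            linarith
        _ < ε / 3 + ε / 3 + ε / 3 := by linarith
        _ = ε := by ring
  · -- eigenvalues
    intro n
    constructor
    · refine ⟨fun k => if k = n then 1 else 0, ?_, ?_⟩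
      · have h := expand_single (φ := φ) 1 n
        rw [one_smul] at h
        exact h
      · have h := expand_single (φ := φ) (-((n : ℂ) + 1)) n
        have he : (fun k : ℕ => -((k : ℂ) + 1) * if k = n then (1:ℂ) else 0) =
            fun k : ℕ => if k = n then -((n : ℂ) + 1) else 0 := by
          funext k
          by_cases hk : k = n
          · subst hk; simp
          · simp [hk]
        show Tendsto (psum φ (fun k : ℕ => -((k : ℂ) + 1) * if k = n then (1:ℂ) else 0))
          atTop (𝓝 (-((n : ℂ) + 1) • φ (n + 1)))
        rw [he]
        exact h
    · intro x y hxy heq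
      obtain ⟨c, hcx, hcy⟩ := hxy
      have hcx' : Expand φ c x := hcx
      have hcy' : Expand φ (fun k => -((k : ℂ) + 1) * c k) y := hcy
      have hy2 : Expand φ ((-((n : ℂ) + 1)) • c) y := by
        rw [heq]
        exact hcx'.smul _
      have hcc := (coeff_unique hb hcy').trans (coeff_unique hb hy2).symm
      have hck : ∀ k, k ≠ n → c k = 0 := by
        intro k hk
        have h1 := congrFun hcc k
        simp only [Pi.smul_apply, smul_eq_mul] at h1
        have h2 : ((n : ℂ) - (k : ℂ)) * c k = 0 := by linear_combination h1
        rcases mul_eq_zero.mp h2 with h3 | h3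
        · have h4 : (n : ℂ) = (k : ℂ) := by linear_combination h3
          exact absurd (Nat.cast_injective h4).symm hk
        · exact h3
      refine ⟨c n, ?_⟩
      have he : c = fun k => if k = n then c n else 0 := by
        funext k
        by_cases hk : k = n
        · subst hk; simp
        · simp [hk, hck k hk]
      rw [he] at hcx'
      exact expand_unique hcx' (expand_single (c n) n)
  · -- resolvent
    intro lam hlam
    set a : ℕ → ℂ := fun n => -((n : ℂ) + 1) - lam with hadef
    have ha : ∀ n, a n ≠ 0 := by
      intro n h
      exact hlam n (by rw [hadef] at h; simp only [] at h; linear_combination -h)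
    set μ : ℕ → ℂ := fun n => (a n)⁻¹ with hμdef
    have hμdiff : ∀ n, μ (n + 1) - μ n = (a (n + 1) * a n)⁻¹ := by
      intro n
      rw [show μ (n + 1) - μ n = (a (n + 1))⁻¹ - (a n)⁻¹ from rfl,
        inv_sub_inv (ha (n + 1)) (ha n),
        show a n - a (n + 1) = 1 from by rw [hadef]; push_cast; ring, one_div]
    have hanorm : ∀ n : ℕ, (n : ℝ) + 1 - ‖lam‖ ≤ ‖a n‖ := by
      intro n
      have h1 : ‖a n‖ = ‖((n : ℂ) + 1) + lam‖ := by
        rw [hadef]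
        simp only []
        rw [show -((n : ℂ) + 1) - lam = -(((n : ℂ) + 1) + lam) by ring, norm_neg]
      rw [h1]
      have h2 : ‖(n : ℂ) + 1‖ - ‖lam‖ ≤ ‖((n : ℂ) + 1) + lam‖ := by
        have := norm_add_le (((n : ℂ) + 1) + lam) (-lam)
        simp only [add_neg_cancel_right, norm_neg] at this
        linarith
      have h3 : ‖(n : ℂ) + 1‖ = (n : ℝ) + 1 := by
        rw [show (n : ℂ) + 1 = ((n + 1 : ℕ) : ℂ) by push_cast; ring]
        rw [Complex.norm_natCast]
        push_cast; ring
      linarith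
    have hμsum : Summable fun n => ‖μ (n + 1) - μ n‖ := by
      have hgs : Summable fun n : ℕ => 4 * (((n : ℝ) + 1) ^ 2)⁻¹ := by
        have h1 : Summable fun n : ℕ => ((n : ℝ) ^ 2)⁻¹ := by
          have := Real.summable_one_div_nat_pow.mpr (by norm_num : 1 < 2)
          simpa [one_div] using this
        have h2 : Summable fun n : ℕ => (((n : ℝ) + 1) ^ 2)⁻¹ := by
          have := (summable_nat_add_iff 1).mpr h1
          simpa [Nat.cast_add] using this
        exact h2.mul_left 4
      refine Summable.of_norm_bounded_eventually hgs ?_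
      rw [Nat.cofinite_eq_atTop]
      filter_upwards [Filter.eventually_atTop.mpr ⟨Nat.ceil (2 * ‖lam‖), fun n hn => hn⟩]
        with n hn
      have hn' : 2 * ‖lam‖ ≤ (n : ℝ) := le_trans (Nat.le_ceil _) (by exact_mod_cast hn)
      have hl0 : 0 ≤ ‖lam‖ := norm_nonneg _
      have hb1 : ((n : ℝ) + 1) / 2 ≤ ‖a n‖ := by
        have := hanorm n
        linarith
      have hb2 : ((n : ℝ) + 1) / 2 ≤ ‖a (n + 1)‖ := by
        have := hanorm (n + 1)
        push_cast at this
        linarith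
      have hpos : (0:ℝ) < ((n : ℝ) + 1) / 2 := by positivity
      rw [norm_norm, hμdiff, norm_inv, norm_mul]
      have hprod : ((n : ℝ) + 1) / 2 * (((n : ℝ) + 1) / 2) ≤ ‖a (n + 1)‖ * ‖a n‖ :=
        mul_le_mul hb2 hb1 hpos.le (norm_nonneg _)
      have h5 : (‖a (n + 1)‖ * ‖a n‖)⁻¹ ≤ (((n : ℝ) + 1) / 2 * (((n : ℝ) + 1) / 2))⁻¹ :=
        inv_anti₀ (by positivity) hprod
      refine h5.trans ?_
      rw [show ((n : ℝ) + 1) / 2 * (((n : ℝ) + 1) / 2) = ((n : ℝ) + 1) ^ 2 / 4 by ring]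
      rw [inv_div]
      rw [div_eq_mul_inv]
    refine ⟨Tmul hb hK1 hKP hμsum, ?_, ?_⟩
    · intro z
      refine ⟨fun n => μ n * coeff hb z n, Tmul_expand hb hK1 hKP hμsum z, ?_⟩
      have key : ∀ (N : ℕ), (∑ n ∈ Finset.range N,
          (-((n : ℂ) + 1) * (μ n * coeff hb z n)) • φ (n + 1)) =
          psum φ (coeff hb z) N + lam • psum φ (fun n => μ n * coeff hb z n) N := by
        intro N
        rw [psum, psum, Finset.smul_sum, ← Finset.sum_add_distrib]
        refine Finset.sum_congr rfl (fun n _ => ?_)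
        rw [smul_smul, ← add_smul]
        congr 1
        have h1 : a n * μ n = 1 := mul_inv_cancel₀ (ha n)
        have h2 : -((n : ℂ) + 1) = a n + lam := by rw [hadef]; ring
        calc -((n : ℂ) + 1) * (μ n * coeff hb z n)
            = (a n * μ n) * coeff hb z n + lam * (μ n * coeff hb z n) := by
              rw [h2]; ring
          _ = coeff hb z n + lam * (μ n * coeff hb z n) := by rw [h1, one_mul]
      have ht := Filter.Tendsto.add (coeff_spec hb z)
        ((Tmul_expand hb hK1 hKP hμsum z).const_smul lam)
      exact Tendsto.congr (fun N => (key N).symm) ht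
    · intro x y hxy
      obtain ⟨c, hcx, hcy⟩ := hxy
      have hcx' : Expand φ c x := hcx
      have hcy' : Expand φ (fun k => -((k : ℂ) + 1) * c k) y := hcy
      have hsub : Expand φ (fun n => a n * c n) (y - lam • x) := by
        have := hcy'.sub (hcx'.smul lam)
        have he : (fun k : ℕ => -((k : ℂ) + 1) * c k) - lam • c = (fun n => a n * c n) := by
          funext n
          simp only [Pi.sub_apply, Pi.smul_apply, smul_eq_mul, hadef]
          ring
        rwa [he] at this
      have hc2 : coeff hb (y - lam • x) = fun n => a n * c n := (coeff_unique hb hsub).symm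
      have h3 := Tmul_expand hb hK1 hKP hμsum (y - lam • x)
      rw [hc2] at h3
      have he2 : (fun n => μ n * (a n * c n)) = c := by
        funext n
        rw [hμdef]
        simp only []
        rw [← mul_assoc, inv_mul_cancel₀ (ha n), one_mul]
      rw [he2] at h3
      exact expand_unique h3 hcx'
  · -- no group
    rintro ⟨G, hGf, hG0, hGgrp, hGc⟩
    have hφ1 : ∀ n : ℕ, G 1 (φ (n + 1)) = Complex.exp (-((n : ℂ) + 1)) • φ (n + 1) := by
      intro n
      have hc : Tendsto (fun N => ∑ k ∈ Finset.range N,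
          (if k = n then (1:ℂ) else 0) • φ (k + 1)) atTop (𝓝 (φ (n + 1))) := by
        have h := expand_single (φ := φ) 1 n
        rw [one_smul] at h
        exact h
      have h1 := hGf 1 zero_le_one (φ (n + 1)) _ hc
      have h2 : Tendsto (fun N => ∑ k ∈ Finset.range N,
          (Complex.exp (-((k : ℂ) + 1) * ((1:ℝ):ℂ)) * if k = n then (1:ℂ) else 0) • φ (k + 1))
          atTop (𝓝 (Complex.exp (-((n : ℂ) + 1)) • φ (n + 1))) := by
        have h := expand_single (φ := φ) (Complex.exp (-((n : ℂ) + 1))) n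
        have he : (fun k : ℕ => Complex.exp (-((k : ℂ) + 1) * ((1:ℝ):ℂ)) *
            if k = n then (1:ℂ) else 0) =
            fun k : ℕ => if k = n then Complex.exp (-((n : ℂ) + 1)) else 0 := by
          funext k
          by_cases hk : k = n
          · subst hk; simp
          · simp [hk]
        show Tendsto (psum φ (fun k : ℕ => Complex.exp (-((k : ℂ) + 1) * ((1:ℝ):ℂ)) *
          if k = n then (1:ℂ) else 0)) atTop (𝓝 (Complex.exp (-((n : ℂ) + 1)) • φ (n + 1)))
        rw [he]
        exact h
      exact tendsto_nhds_unique h1 h2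
    have hGinv : ∀ n : ℕ, G (-1) (φ (n + 1)) =
        (Complex.exp (-((n : ℂ) + 1)))⁻¹ • φ (n + 1) := by
      intro n
      have h1 : G (-1 + 1) = (G (-1)).comp (G 1) := hGgrp (-1) 1
      have h2 : G (-1) (G 1 (φ (n + 1))) = φ (n + 1) := by
        have : (G (-1)).comp (G 1) (φ (n + 1)) = G (-1 + 1) (φ (n + 1)) := by rw [h1]
        simp only [ContinuousLinearMap.comp_apply] at this
        rw [this]
        norm_num [hG0]
      rw [hφ1 n, map_smul] at h2
      have hne : Complex.exp (-((n : ℂ) + 1)) ≠ 0 := Complex.exp_ne_zero _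
      calc G (-1) (φ (n + 1))
          = ((Complex.exp (-((n : ℂ) + 1)))⁻¹ * Complex.exp (-((n : ℂ) + 1))) •
            G (-1) (φ (n + 1)) := by rw [inv_mul_cancel₀ hne, one_smul]
        _ = (Complex.exp (-((n : ℂ) + 1)))⁻¹ •
            (Complex.exp (-((n : ℂ) + 1)) • G (-1) (φ (n + 1))) := by rw [mul_smul]
        _ = (Complex.exp (-((n : ℂ) + 1)))⁻¹ • φ (n + 1) := by rw [h2]
    obtain ⟨n, hn⟩ := exists_nat_gt (‖G (-1)‖ * M / m)
    have hφm := (hbdd (n + 1) (by omega)).1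
    have hφM := (hbdd (n + 1) (by omega)).2
    have hnorme : ‖(Complex.exp (-((n : ℂ) + 1)))⁻¹‖ = Real.exp ((n : ℝ) + 1) := by
      rw [norm_inv, Complex.norm_exp]
      have hre : (-((n : ℂ) + 1)).re = -((n : ℝ) + 1) := by simp
      rw [hre, Real.exp_neg, inv_inv]
    have h1 : ‖G (-1) (φ (n + 1))‖ = Real.exp ((n : ℝ) + 1) * ‖φ (n + 1)‖ := by
      rw [hGinv n, norm_smul, hnorme]
    have h2 : ‖G (-1) (φ (n + 1))‖ ≤ ‖G (-1)‖ * ‖φ (n + 1)‖ :=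
      ContinuousLinearMap.le_opNorm _ _
    have hGnn : (0:ℝ) ≤ ‖G (-1)‖ := norm_nonneg _
    have h3 : Real.exp ((n : ℝ) + 1) * m ≤ ‖G (-1)‖ * M := by
      calc Real.exp ((n : ℝ) + 1) * m ≤ Real.exp ((n : ℝ) + 1) * ‖φ (n + 1)‖ :=
            mul_le_mul_of_nonneg_left hφm (Real.exp_pos _).le
        _ = ‖G (-1) (φ (n + 1))‖ := h1.symm
        _ ≤ ‖G (-1)‖ * ‖φ (n + 1)‖ := h2
        _ ≤ ‖G (-1)‖ * M := mul_le_mul_of_nonneg_left hφM hGnn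
    have h4 : (n : ℝ) < Real.exp ((n : ℝ) + 1) := by
      have := Real.add_one_le_exp ((n : ℝ) + 1)
      linarith
    have h5 : ‖G (-1)‖ * M / m < Real.exp ((n : ℝ) + 1) := lt_trans hn h4
    have h6 : ‖G (-1)‖ * M < Real.exp ((n : ℝ) + 1) * m := by
      rw [div_lt_iff₀ hm] at h5
      nlinarith
    linarith
end
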